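/- arXiv:2301.09845 — 9 statements merged into one kernel-verified Lean document; each statement's English description precedes it below -/
import Mathlib

section
/- Let m be an odd positive integer. For every even positive integer n, the number of partitions of n all of whose parts are at least m, in which the number of odd parts and the number of even parts are both even and the number of odd parts exceeds the number of even parts, is at least the number of partitions of n all of whose parts are at least m, in which the number of odd parts and the number of even parts are both even and the number of even parts exceeds the number of odd parts; that is, O_me(n) ≥ E_me(n). -/
/-- The number of partitions of `n` with every part at least `m` in which the
number of even parts and the number of odd parts are both even, and the number
of even parts exceeds the number of odd parts. -/
noncomputable def Eme (m n : ℕ) : ℕ :=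
  Set.ncard {p : n.Partition | (∀ i ∈ p.parts, m ≤ i) ∧
    Even (p.parts.countP (fun i => Even i)) ∧ Even (p.parts.countP (fun i => Odd i)) ∧
    p.parts.countP (fun i => Even i) > p.parts.countP (fun i => Odd i)}

/-- The number of partitions of `n` with every part at least `m` in which the
number of even parts and the number of odd parts are both even, and the number
of odd parts exceeds the number of even parts. -/
noncomputable def Ome (m n : ℕ) : ℕ :=
  Set.ncard {p : n.Partition | (∀ i ∈ p.parts, m ≤ i) ∧
    Even (p.parts.countP (fun i => Even i)) ∧ Even (p.parts.countP (fun i => Odd i)) ∧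
    p.parts.countP (fun i => Odd i) > p.parts.countP (fun i => Even i)}

namespace StmtAux

open Multiset

/-- Flip the parity of a positive natural number. -/
def pflip (x : ℕ) : ℕ := if Even x then x - 1 else x + 1

lemma pflip_pos {x : ℕ} (hx : 0 < x) : 0 < pflip x := by
  unfold pflip
  by_cases h : Even x
  · rw [if_pos h]
    rcases h with ⟨k, hk⟩
    omega
  · rw [if_neg h]; omega

lemma even_pflip {x : ℕ} (hx : 0 < x) : Even (pflip x) ↔ Odd x := by
  unfold pflip
  by_cases h : Even x
  · rw [if_pos h, Nat.even_sub hx]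
    simp [h, ← Nat.not_even_iff_odd]
  · rw [if_neg h]
    simp [Nat.even_add_one, h, ← Nat.not_even_iff_odd]

lemma odd_pflip {x : ℕ} (hx : 0 < x) : Odd (pflip x) ↔ Even x := by
  rw [← Nat.not_even_iff_odd, even_pflip hx, Nat.not_odd_iff_even]

lemma pflip_pflip {x : ℕ} (hx : 0 < x) : pflip (pflip x) = x := by
  by_cases h : Even x
  · have hx2 : 2 ≤ x := by rcases h with ⟨k, hk⟩; omega
    have h1 : pflip x = x - 1 := by simp [pflip, h]
    have h2 : ¬ Even (x - 1) := by
      rw [Nat.even_sub (by omega)]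
      simp [h]
    rw [h1]
    simp only [pflip, if_neg h2]
    omega
  · have h1 : pflip x = x + 1 := by simp [pflip, h]
    have h2 : Even (x + 1) := by
      rw [Nat.even_add_one]; exact h
    rw [h1]
    simp only [pflip, if_pos h2]
    omega

lemma pflip_ge {m x : ℕ} (hm : Odd m) (hx0 : 0 < x) (hx : m ≤ x) : m ≤ pflip x := by
  by_cases h : Even x
  · have h1 : pflip x = x - 1 := by simp [pflip, h]
    have hmx : m ≠ x := by
      intro he; subst he
      exact (Nat.not_even_iff_odd.mpr hm) h
    omega
  · have h1 : pflip x = x + 1 := by simp [pflip, h]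
    omega

lemma countP_map_pflip_even (s : Multiset ℕ) (h : ∀ x ∈ s, 0 < x) :
    (s.map pflip).countP (fun i => Even i) = s.countP (fun i => Odd i) := by
  rw [Multiset.countP_map, Multiset.countP_eq_card_filter]
  congr 1
  apply Multiset.filter_congr
  intro x hx
  exact even_pflip (h x hx)

lemma countP_map_pflip_odd (s : Multiset ℕ) (h : ∀ x ∈ s, 0 < x) :
    (s.map pflip).countP (fun i => Odd i) = s.countP (fun i => Even i) := by
  rw [Multiset.countP_map, Multiset.countP_eq_card_filter]
  congr 1
  apply Multiset.filter_congr
  intro x hx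
  exact odd_pflip (h x hx)

lemma sum_map_pflip (s : Multiset ℕ) (h : ∀ x ∈ s, 0 < x) :
    (s.map pflip).sum + s.countP (fun i => Even i)
      = s.sum + s.countP (fun i => Odd i) := by
  induction s using Multiset.induction with
  | empty => simp
  | cons a s ih =>
    have ha := h a (Multiset.mem_cons_self a s)
    have ih' := ih (fun x hx => h x (Multiset.mem_cons_of_mem hx))
    rw [Multiset.map_cons, Multiset.sum_cons, Multiset.sum_cons,
      Multiset.countP_cons, Multiset.countP_cons]
    by_cases hE : Even a
    · have h1 : pflip a = a - 1 := by simp [pflip, hE]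
      have h2 : ¬ Odd a := by simp [Nat.not_odd_iff_even, hE]
      have ha2 : 2 ≤ a := by rcases hE with ⟨k, hk⟩; omega
      rw [h1, if_pos hE, if_neg h2]
      omega
    · have h1 : pflip a = a + 1 := by simp [pflip, hE]
      have h2 : Odd a := Nat.not_even_iff_odd.mp hE
      rw [h1, if_neg hE, if_pos h2]
      omega

lemma sup_mem {M : Multiset ℕ} (h : M ≠ 0) : M.sup ∈ M := by
  induction M using Multiset.induction with
  | empty => exact absurd rfl h
  | cons a s ih =>
    rw [Multiset.sup_cons]
    by_cases hs : s = 0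
    · subst hs; simp
    · rcases le_total a s.sup with h1 | h1
      · rw [sup_eq_right.mpr h1]
        exact Multiset.mem_cons_of_mem (ih hs)
      · rw [sup_eq_left.mpr h1]
        exact Multiset.mem_cons_self a s

/-- The multiset of parts of the image partition. -/
def newparts {n : ℕ} (p : n.Partition) : Multiset ℕ :=
  ((p.parts.map pflip).sup +
      (p.parts.countP (fun i => Even i) - p.parts.countP (fun i => Odd i))) ::ₘ
    (p.parts.map pflip).erase (p.parts.map pflip).sup

lemma map_pos {n : ℕ} (p : n.Partition) : ∀ x ∈ p.parts.map pflip, 0 < x := by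
  intro x hx
  rcases Multiset.mem_map.mp hx with ⟨y, hy, rfl⟩
  exact pflip_pos (p.parts_pos hy)

lemma newparts_pos {n : ℕ} (p : n.Partition) (h0 : p.parts ≠ 0) :
    ∀ {i : ℕ}, i ∈ newparts p → 0 < i := by
  intro i hi
  have hM0 : p.parts.map pflip ≠ 0 := by
    intro h; apply h0
    simpa using congrArg Multiset.card h
  rcases Multiset.mem_cons.mp hi with h | h
  · subst h
    have := map_pos p _ (sup_mem hM0)
    omega
  · exact map_pos p _ (Multiset.mem_of_mem_erase h)

lemma newparts_sum {n : ℕ} (p : n.Partition) (h0 : p.parts ≠ 0)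
    (h : p.parts.countP (fun i => Odd i) ≤ p.parts.countP (fun i => Even i)) :
    (newparts p).sum = n := by
  set M := p.parts.map pflip with hM
  have hM0 : M ≠ 0 := by
    intro h; apply h0
    simpa [hM] using congrArg Multiset.card h
  have ht : M.sup ∈ M := sup_mem hM0
  have hMsum : M.sum = M.sup + (M.erase M.sup).sum := by
    conv_lhs => rw [← Multiset.cons_erase ht]
    rw [Multiset.sum_cons]
  have hkey := sum_map_pflip p.parts (fun x hx => p.parts_pos hx)
  have hps : p.parts.sum = n := p.parts_sum
  rw [newparts, Multiset.sum_cons]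
  rw [← hM] at hkey ⊢
  omega

/-- The injection from `Eme`-partitions to `Ome`-partitions. -/
noncomputable def phi {n : ℕ} (p : n.Partition) : n.Partition := by
  classical
  exact if h : p.parts ≠ 0 ∧
      p.parts.countP (fun i => Odd i) ≤ p.parts.countP (fun i => Even i) then
    ⟨newparts p, fun hi => newparts_pos p h.1 hi, newparts_sum p h.1 h.2⟩
  else p

lemma phi_parts {n : ℕ} (p : n.Partition) (h0 : p.parts ≠ 0)
    (h : p.parts.countP (fun i => Odd i) ≤ p.parts.countP (fun i => Even i)) :
    (phi p).parts = newparts p := by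
  rw [phi]
  rw [dif_pos ⟨h0, h⟩]

end StmtAux

theorem stmt_2 : ∀ m n : ℕ, 0 < m → Odd m → 0 < n → Even n →
    Eme m n ≤ Ome m n := by
  intro m n hm hmo hn hne
  classical
  rw [Eme, Ome]
  apply Set.ncard_le_ncard_of_injOn StmtAux.phi
  · -- maps to
    rintro p ⟨hge, hEe, hEo, hgt⟩
    have h0 : p.parts ≠ 0 := by
      intro h
      have := p.parts_sum
      rw [h, Multiset.sum_zero] at this
      omega
    have hle : p.parts.countP (fun i => Odd i) ≤ p.parts.countP (fun i => Even i) :=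
      le_of_lt hgt
    have hparts := StmtAux.phi_parts p h0 hle
    set e := p.parts.countP (fun i => Even i) with he
    set o := p.parts.countP (fun i => Odd i) with ho
    set M := p.parts.map StmtAux.pflip with hM
    have hM0 : M ≠ 0 := by
      intro h; apply h0
      simpa [hM] using congrArg Multiset.card h
    have ht : M.sup ∈ M := StmtAux.sup_mem hM0
    have hMpos : ∀ x ∈ M, 0 < x := StmtAux.map_pos p
    have hMge : ∀ x ∈ M, m ≤ x := by
      intro x hx
      rcases Multiset.mem_map.mp hx with ⟨y, hy, rfl⟩
      exact StmtAux.pflip_ge hmo (p.parts_pos hy) (hge y hy)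
    have hMe : M.countP (fun i => Even i) = o :=
      StmtAux.countP_map_pflip_even p.parts (fun x hx => p.parts_pos hx)
    have hMo : M.countP (fun i => Odd i) = e :=
      StmtAux.countP_map_pflip_odd p.parts (fun x hx => p.parts_pos hx)
    have hdEven : Even (e - o) := by
      rw [Nat.even_sub hle]
      tauto
    -- counts of newparts
    have hcons : M.sup ::ₘ M.erase M.sup = M := Multiset.cons_erase ht
    have hcE : (StmtAux.newparts p).countP (fun i => Even i) = o := by
      rw [StmtAux.newparts, Multiset.countP_cons, ← hM, ← he, ← ho]
      have h1 : (Even (M.sup + (e - o))) ↔ Even M.sup := by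
        rw [Nat.even_add]
        tauto
      have h2 : M.countP (fun i => Even i)
          = (M.erase M.sup).countP (fun i => Even i)
            + (if Even M.sup then 1 else 0) := by
        conv_lhs => rw [← hcons]
        rw [Multiset.countP_cons]
      rw [hMe] at h2
      by_cases hs : Even M.sup
      · rw [if_pos (h1.mpr hs)]
        rw [if_pos hs] at h2
        omega
      · rw [if_neg (fun hc => hs (h1.mp hc))]
        rw [if_neg hs] at h2
        omega
    have hcO : (StmtAux.newparts p).countP (fun i => Odd i) = e := by
      rw [StmtAux.newparts, Multiset.countP_cons, ← hM, ← he, ← ho]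
      have h1 : (Odd (M.sup + (e - o))) ↔ Odd M.sup := by
        rw [Nat.odd_add]
        constructor
        · intro hh
          rw [← Nat.not_even_iff_odd]
          intro hc
          exact (Nat.not_even_iff_odd.mpr (hh.mpr hdEven)) hc
        · intro hh
          constructor
          · intro _; exact hdEven
          · intro _; exact hh
      have h2 : M.countP (fun i => Odd i)
          = (M.erase M.sup).countP (fun i => Odd i)
            + (if Odd M.sup then 1 else 0) := by
        conv_lhs => rw [← hcons]
        rw [Multiset.countP_cons]
      rw [hMo] at h2
      by_cases hs : Odd M.sup
      · rw [if_pos (h1.mpr hs)]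
        rw [if_pos hs] at h2
        omega
      · rw [if_neg (fun hc => hs (h1.mp hc))]
        rw [if_neg hs] at h2
        omega
    refine ⟨?_, ?_, ?_, ?_⟩
    · intro i hi
      rw [hparts, StmtAux.newparts, ← hM, ← he, ← ho] at hi
      rcases Multiset.mem_cons.mp hi with h | h
      · subst h
        have := hMge _ ht
        omega
      · exact hMge _ (Multiset.mem_of_mem_erase h)
    · rw [hparts, hcE]; exact hEo
    · rw [hparts, hcO]; exact hEe
    · rw [hparts, hcE, hcO]; exact hgt
  · -- injectivity
    intro p1 hp1 p2 hp2 heq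
    -- reconstruction lemma
    have recon : ∀ p : n.Partition, (∀ i ∈ p.parts, m ≤ i) →
        Even (p.parts.countP (fun i => Even i)) →
        Even (p.parts.countP (fun i => Odd i)) →
        p.parts.countP (fun i => Even i) > p.parts.countP (fun i => Odd i) →
        p.parts =
          ((((StmtAux.phi p).parts.sup) -
            ((StmtAux.phi p).parts.countP (fun i => Odd i)
              - (StmtAux.phi p).parts.countP (fun i => Even i))) ::ₘ
            ((StmtAux.phi p).parts.erase (StmtAux.phi p).parts.sup)).map
              StmtAux.pflip := by
      intro p hge hEe hEo hgt
      have h0 : p.parts ≠ 0 := by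
        intro h
        have := p.parts_sum
        rw [h, Multiset.sum_zero] at this
        omega
      have hle : p.parts.countP (fun i => Odd i) ≤ p.parts.countP (fun i => Even i) :=
        le_of_lt hgt
      have hparts := StmtAux.phi_parts p h0 hle
      set e := p.parts.countP (fun i => Even i) with he
      set o := p.parts.countP (fun i => Odd i) with ho
      set M := p.parts.map StmtAux.pflip with hM
      have hM0 : M ≠ 0 := by
        intro h; apply h0
        simpa [hM] using congrArg Multiset.card h
      have ht : M.sup ∈ M := StmtAux.sup_mem hM0
      have hnp : (StmtAux.phi p).parts = (M.sup + (e - o)) ::ₘ M.erase M.sup := by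
        rw [hparts, StmtAux.newparts, ← hM, ← he, ← ho]
      -- the sup of newparts
      have hsup : (StmtAux.phi p).parts.sup = M.sup + (e - o) := by
        rw [hnp, Multiset.sup_cons]
        have h1 : (M.erase M.sup).sup ≤ M.sup :=
          Multiset.sup_le.mpr fun b hb =>
            Multiset.le_sup (Multiset.mem_of_mem_erase hb)
        exact sup_eq_left.mpr (le_trans h1 (Nat.le_add_right _ _))
      have herase : (StmtAux.phi p).parts.erase (StmtAux.phi p).parts.sup
          = M.erase M.sup := by
        rw [hsup, hnp, Multiset.erase_cons_head]
      -- counts of the image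
      have hMe : M.countP (fun i => Even i) = o :=
        StmtAux.countP_map_pflip_even p.parts (fun x hx => p.parts_pos hx)
      have hMo : M.countP (fun i => Odd i) = e :=
        StmtAux.countP_map_pflip_odd p.parts (fun x hx => p.parts_pos hx)
      have hdEven : Even (e - o) := by
        rw [Nat.even_sub hle]
        tauto
      have hcons : M.sup ::ₘ M.erase M.sup = M := Multiset.cons_erase ht
      have hcE : (StmtAux.phi p).parts.countP (fun i => Even i) = o := by
        rw [hnp, Multiset.countP_cons]
        have h1 : (Even (M.sup + (e - o))) ↔ Even M.sup := by
          rw [Nat.even_add]; tauto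
        have h2 : M.countP (fun i => Even i)
            = (M.erase M.sup).countP (fun i => Even i)
              + (if Even M.sup then 1 else 0) := by
          conv_lhs => rw [← hcons]
          rw [Multiset.countP_cons]
        rw [hMe] at h2
        by_cases hs : Even M.sup
        · rw [if_pos (h1.mpr hs)]; rw [if_pos hs] at h2; omega
        · rw [if_neg (fun hc => hs (h1.mp hc))]; rw [if_neg hs] at h2; omega
      have hcO : (StmtAux.phi p).parts.countP (fun i => Odd i) = e := by
        rw [hnp, Multiset.countP_cons]
        have h1 : (Odd (M.sup + (e - o))) ↔ Odd M.sup := by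
          rw [Nat.odd_add]
          constructor
          · intro hh
            rw [← Nat.not_even_iff_odd]
            intro hc
            exact (Nat.not_even_iff_odd.mpr (hh.mpr hdEven)) hc
          · intro hh
            exact ⟨fun _ => hdEven, fun _ => hh⟩
        have h2 : M.countP (fun i => Odd i)
            = (M.erase M.sup).countP (fun i => Odd i)
              + (if Odd M.sup then 1 else 0) := by
          conv_lhs => rw [← hcons]
          rw [Multiset.countP_cons]
        rw [hMo] at h2
        by_cases hs : Odd M.sup
        · rw [if_pos (h1.mpr hs)]; rw [if_pos hs] at h2; omega
        · rw [if_neg (fun hc => hs (h1.mp hc))]; rw [if_neg hs] at h2; omega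
      -- now compute the reconstruction
      rw [hcE, hcO, herase, hsup]
      have hd : M.sup + (e - o) - (e - o) = M.sup := by omega
      rw [hd, hcons]
      -- M.map pflip = p.parts
      rw [hM, Multiset.map_map]
      have : p.parts.map (StmtAux.pflip ∘ StmtAux.pflip) = p.parts.map id := by
        apply Multiset.map_congr rfl
        intro x hx
        exact StmtAux.pflip_pflip (p.parts_pos hx)
      rw [this, Multiset.map_id]
    obtain ⟨hge1, hEe1, hEo1, hgt1⟩ := hp1
    obtain ⟨hge2, hEe2, hEo2, hgt2⟩ := hp2
    have r1 := recon p1 hge1 hEe1 hEo1 hgt1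
    have r2 := recon p2 hge2 hEe2 hEo2 hgt2
    apply Nat.Partition.ext
    rw [r1, r2, heq]
end

section
/- Let m be an even positive integer. For every even positive integer n, the number of partitions of n all of whose parts are at least m, in which the number of odd parts and the number of even parts are both even and the number of even parts exceeds the number of odd parts, is at least the number of partitions of n all of whose parts are at least m, in which the number of odd parts and the number of even parts are both even and the number of odd parts exceeds the number of even parts; that is, E_me(n) ≥ O_me(n). -/
/- Auxiliary machinery -/

private def fstep (x : ℕ) : ℕ := if Odd x then x - 1 else x + 1
private def gstep (x : ℕ) : ℕ := if Even x then x + 1 else x - 1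

private def Tmap (M : Multiset ℕ) : Multiset ℕ :=
  ((M.map fstep).sup + (M.countP (fun i => Odd i) - M.countP (fun i => Even i))) ::ₘ
    (M.map fstep).erase (M.map fstep).sup

private lemma fstep_even {x : ℕ} (hx : 1 ≤ x) : Even (fstep x) ↔ Odd x := by
  simp only [fstep, Nat.even_iff, Nat.odd_iff]
  split <;> rename_i h <;> omega

private lemma fstep_odd {x : ℕ} (hx : 1 ≤ x) : Odd (fstep x) ↔ Even x := by
  simp only [fstep, Nat.even_iff, Nat.odd_iff]
  split <;> rename_i h <;> omega

private lemma gstep_fstep {x : ℕ} (hx : 1 ≤ x) : gstep (fstep x) = x := by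
  simp only [fstep, gstep]
  split <;> rename_i h <;> split <;> rename_i h2 <;>
    simp only [Nat.odd_iff] at h <;> simp only [Nat.even_iff] at h2 <;> omega

private lemma fstep_ge {m x : ℕ} (hme : Even m) (hx : m ≤ x) : m ≤ fstep x := by
  simp only [fstep]
  rw [Nat.even_iff] at hme
  split <;> rename_i h
  · rw [Nat.odd_iff] at h; omega
  · omega

private lemma countP_even_map (M : Multiset ℕ) (h : ∀ x ∈ M, 1 ≤ x) :
    (M.map fstep).countP (fun i => Even i) = M.countP (fun i => Odd i) := by
  rw [Multiset.countP_map, Multiset.countP_eq_card_filter]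
  congr 1
  exact Multiset.filter_congr fun x hx => fstep_even (h x hx)

private lemma countP_odd_map (M : Multiset ℕ) (h : ∀ x ∈ M, 1 ≤ x) :
    (M.map fstep).countP (fun i => Odd i) = M.countP (fun i => Even i) := by
  rw [Multiset.countP_map, Multiset.countP_eq_card_filter]
  congr 1
  exact Multiset.filter_congr fun x hx => fstep_odd (h x hx)

private lemma sum_map_fstep (M : Multiset ℕ) (h : ∀ x ∈ M, 1 ≤ x) :
    (M.map fstep).sum + M.countP (fun i => Odd i) = M.sum + M.countP (fun i => Even i) := by
  induction M using Multiset.induction with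
  | empty => simp
  | cons a s ih =>
    have ha : 1 ≤ a := h a (Multiset.mem_cons_self a s)
    have ih' := ih (fun x hx => h x (Multiset.mem_cons_of_mem hx))
    simp only [Multiset.map_cons, Multiset.sum_cons, Multiset.countP_cons]
    rcases Nat.even_or_odd a with he | ho
    · rw [show fstep a = a + 1 from by simp [fstep, Nat.not_odd_iff_even.mpr he]]
      rw [if_pos he, if_neg (Nat.not_odd_iff_even.mpr he)]
      omega
    · rw [show fstep a = a - 1 from by simp [fstep, ho]]
      rw [if_neg (Nat.not_even_iff_odd.mpr ho), if_pos ho]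
      omega

private lemma map_gstep_fstep (M : Multiset ℕ) (h : ∀ x ∈ M, 1 ≤ x) :
    (M.map fstep).map gstep = M := by
  rw [Multiset.map_map]
  conv_rhs => rw [← Multiset.map_id M]
  exact Multiset.map_congr rfl fun x hx => gstep_fstep (h x hx)

private lemma sup_mem {s : Multiset ℕ} (h : s ≠ 0) : s.sup ∈ s := by
  induction s using Multiset.induction with
  | empty => exact absurd rfl h
  | cons a t ih =>
    by_cases ht : t = 0
    · subst ht
      simp [Multiset.sup_cons]
    · rw [Multiset.sup_cons]
      rcases le_total a t.sup with h1 | h1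
      · rw [sup_eq_right.mpr h1]; exact Multiset.mem_cons_of_mem (ih ht)
      · rw [sup_eq_left.mpr h1]; exact Multiset.mem_cons_self a t

private lemma Tmap_spec (m : ℕ) (hm : 0 < m) (hme : Even m) (M : Multiset ℕ)
    (h1 : ∀ i ∈ M, m ≤ i)
    (hE : Even (M.countP (fun i => Even i))) (hO : Even (M.countP (fun i => Odd i)))
    (hlt : M.countP (fun i => Even i) < M.countP (fun i => Odd i)) :
    (∀ i ∈ Tmap M, m ≤ i) ∧ (Tmap M).sum = M.sum ∧
      (Tmap M).countP (fun i => Even i) = M.countP (fun i => Odd i) ∧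
      (Tmap M).countP (fun i => Odd i) = M.countP (fun i => Even i) ∧
      (((Tmap M).sup -
        ((Tmap M).countP (fun i => Even i) - (Tmap M).countP (fun i => Odd i))) ::ₘ
        (Tmap M).erase (Tmap M).sup).map gstep = M := by
  set s := M.map fstep with hs
  set t := s.sup with htdef
  set d := M.countP (fun i => Odd i) - M.countP (fun i => Even i) with hd
  have h1' : ∀ x ∈ M, 1 ≤ x := fun x hx => le_trans hm (h1 x hx)
  have hMne : M ≠ 0 := by
    intro h0; rw [h0] at hlt; simp at hlt
  have hsne : s ≠ 0 := by
    simpa [hs, Multiset.map_eq_zero] using hMne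
  have hts : t ∈ s := sup_mem hsne
  have hsparts : ∀ i ∈ s, m ≤ i := by
    intro i hi
    rw [hs] at hi
    obtain ⟨x, hx, rfl⟩ := Multiset.mem_map.mp hi
    exact fstep_ge hme (h1 x hx)
  have hd_even : Even d := by
    rw [hd, Nat.even_sub hlt.le]
    simp [hO, hE]
  have hcE : s.countP (fun i => Even i) = M.countP (fun i => Odd i) := countP_even_map M h1'
  have hcO : s.countP (fun i => Odd i) = M.countP (fun i => Even i) := countP_odd_map M h1'
  have hcons : t ::ₘ s.erase t = s := Multiset.cons_erase hts
  have hT : Tmap M = (t + d) ::ₘ s.erase t := rfl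
  have hparE : Even (t + d) ↔ Even t := by
    rw [Nat.even_add]; simp [hd_even]
  have hparO : Odd (t + d) ↔ Odd t := by
    rw [Nat.odd_add]; simp [hd_even]
  have hsplitE : s.countP (fun i => Even i)
      = (s.erase t).countP (fun i => Even i) + if Even t then 1 else 0 := by
    conv_lhs => rw [← hcons]
    rw [Multiset.countP_cons]
  have hsplitO : s.countP (fun i => Odd i)
      = (s.erase t).countP (fun i => Odd i) + if Odd t then 1 else 0 := by
    conv_lhs => rw [← hcons]
    rw [Multiset.countP_cons]
  have hqE : (Tmap M).countP (fun i => Even i) = M.countP (fun i => Odd i) := by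
    rw [hT, Multiset.countP_cons, ← hcE, hsplitE]
    congr 1
    by_cases h : Even t
    · rw [if_pos (hparE.mpr h), if_pos h]
    · rw [if_neg (fun hh => h (hparE.mp hh)), if_neg h]
  have hqO : (Tmap M).countP (fun i => Odd i) = M.countP (fun i => Even i) := by
    rw [hT, Multiset.countP_cons, ← hcO, hsplitO]
    congr 1
    by_cases h : Odd t
    · rw [if_pos (hparO.mpr h), if_pos h]
    · rw [if_neg (fun hh => h (hparO.mp hh)), if_neg h]
  have hsum : (Tmap M).sum = M.sum := by
    have hsum_s : s.sum + M.countP (fun i => Odd i) = M.sum + M.countP (fun i => Even i) :=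
      sum_map_fstep M h1'
    have hsplit : s.sum = t + (s.erase t).sum := by
      conv_lhs => rw [← hcons]
      rw [Multiset.sum_cons]
    have hTs : (Tmap M).sum = t + d + (s.erase t).sum := by
      rw [hT, Multiset.sum_cons]
    omega
  have hparts : ∀ i ∈ Tmap M, m ≤ i := by
    intro i hi
    rw [hT, Multiset.mem_cons] at hi
    rcases hi with rfl | hi
    · exact le_trans (hsparts t hts) (Nat.le_add_right _ _)
    · exact hsparts i (Multiset.mem_of_mem_erase hi)
  have hsup : (Tmap M).sup = t + d := by
    rw [hT, Multiset.sup_cons]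
    have h2 : (s.erase t).sup ≤ t + d := by
      rw [Multiset.sup_le]
      intro b hb
      exact le_trans (Multiset.le_sup (Multiset.mem_of_mem_erase hb)) (Nat.le_add_right _ _)
    exact sup_eq_left.mpr h2
  have hgap : (Tmap M).countP (fun i => Even i) - (Tmap M).countP (fun i => Odd i) = d := by
    rw [hqE, hqO]
  have herase : (Tmap M).erase (Tmap M).sup = s.erase t := by
    rw [hsup, hT, Multiset.erase_cons_head]
  refine ⟨hparts, hsum, hqE, hqO, ?_⟩
  have htd : t + d - d = t := by omega
  rw [hgap, herase, hsup, htd, hcons, hs]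
  exact map_gstep_fstep M h1'

theorem stmt_3 : ∀ m n : ℕ, 0 < m → Even m → 0 < n → Even n →
    Ome m n ≤ Eme m n := by
  intro m n hm hme hn hne
  classical
  rw [Ome, Eme]
  set cond : n.Partition → Prop := fun p =>
    (∀ i ∈ p.parts, m ≤ i) ∧ Even (p.parts.countP (fun i => Even i)) ∧
      Even (p.parts.countP (fun i => Odd i)) ∧
      p.parts.countP (fun i => Odd i) > p.parts.countP (fun i => Even i) with hcond
  have spec : ∀ p : n.Partition, ∀ h : cond p,
      (∀ i ∈ Tmap p.parts, m ≤ i) ∧ (Tmap p.parts).sum = p.parts.sum ∧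
      (Tmap p.parts).countP (fun i => Even i) = p.parts.countP (fun i => Odd i) ∧
      (Tmap p.parts).countP (fun i => Odd i) = p.parts.countP (fun i => Even i) ∧
      (((Tmap p.parts).sup -
        ((Tmap p.parts).countP (fun i => Even i) - (Tmap p.parts).countP (fun i => Odd i))) ::ₘ
        (Tmap p.parts).erase (Tmap p.parts).sup).map gstep = p.parts :=
    fun p h => Tmap_spec m hm hme p.parts h.1 h.2.1 h.2.2.1 h.2.2.2
  set F : n.Partition → n.Partition := fun p =>
    if h : cond p then
      ⟨Tmap p.parts,
        fun {i} hi => lt_of_lt_of_le hm ((spec p h).1 i hi),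
        by rw [(spec p h).2.1, p.parts_sum]⟩
    else p with hF
  apply Set.ncard_le_ncard_of_injOn F
  · intro p hp
    have hp' : cond p := hp
    have hFp : (F p).parts = Tmap p.parts := by
      rw [hF]; simp only [dif_pos hp']
    obtain ⟨hs1, hs2, hs3, hs4, hs5⟩ := spec p hp'
    refine ⟨?_, ?_, ?_, ?_⟩ <;> rw [hFp]
    · exact hs1
    · rw [hs3]; exact hp'.2.2.1
    · rw [hs4]; exact hp'.2.1
    · rw [hs3, hs4]; exact hp'.2.2.2
  · intro p hp q hq hpq
    have hp' : cond p := hp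
    have hq' : cond q := hq
    have hFp : (F p).parts = Tmap p.parts := by rw [hF]; simp only [dif_pos hp']
    have hFq : (F q).parts = Tmap q.parts := by rw [hF]; simp only [dif_pos hq']
    have hT : Tmap p.parts = Tmap q.parts := by
      rw [← hFp, ← hFq, hpq]
    have h5p := (spec p hp').2.2.2.2
    have h5q := (spec q hq').2.2.2.2
    have : p.parts = q.parts := by
      rw [← h5p, ← h5q, hT]
    exact Nat.Partition.ext this
end

section
/- Let m be an odd positive integer. For every odd positive integer n, the number of partitions of n all of whose parts are at least m, in which the number of odd parts and the number of even parts are both odd and the number of odd parts exceeds the number of even parts, is at least the number of partitions of n all of whose parts are at least m, in which the number of odd parts and the number of even parts are both odd and the number of even parts exceeds the number of odd parts; that is, O_mo(n) ≥ E_mo(n). -/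
/-- The number of partitions of `n` with every part at least `m` in which the
number of even parts and the number of odd parts are both odd, and the number
of even parts exceeds the number of odd parts. -/
noncomputable def Emo (m n : ℕ) : ℕ :=
  Set.ncard {p : n.Partition | (∀ i ∈ p.parts, m ≤ i) ∧
    Odd (p.parts.countP (fun i => Even i)) ∧ Odd (p.parts.countP (fun i => Odd i)) ∧
    p.parts.countP (fun i => Even i) > p.parts.countP (fun i => Odd i)}

/-- The number of partitions of `n` with every part at least `m` in which the
number of even parts and the number of odd parts are both odd, and the number
of odd parts exceeds the number of even parts. -/
noncomputable def Omo (m n : ℕ) : ℕ :=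
  Set.ncard {p : n.Partition | (∀ i ∈ p.parts, m ≤ i) ∧
    Odd (p.parts.countP (fun i => Even i)) ∧ Odd (p.parts.countP (fun i => Odd i)) ∧
    p.parts.countP (fun i => Odd i) > p.parts.countP (fun i => Even i)}

namespace StmtAux4

open Multiset

lemma sup_mem_of_ne_zero {s : Multiset ℕ} (hs : s ≠ 0) : s.sup ∈ s := by
  induction s using Multiset.induction with
  | empty => simp at hs
  | cons a t ih =>
    rcases eq_or_ne t 0 with rfl | ht
    · simp
    · rw [Multiset.sup_cons]
      rcases le_total a t.sup with h | h
      · rw [sup_eq_right.mpr h]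
        exact Multiset.mem_cons_of_mem (ih ht)
      · rw [sup_eq_left.mpr h]
        exact Multiset.mem_cons_self _ _

lemma sum_map_sub_one (s : Multiset ℕ) (h : ∀ i ∈ s, 1 ≤ i) :
    (s.map (fun i => i - 1)).sum + Multiset.card s = s.sum := by
  induction s using Multiset.induction with
  | empty => simp
  | cons a t ih =>
    have ha : 1 ≤ a := h a (Multiset.mem_cons_self _ _)
    have ht := ih (fun i hi => h i (Multiset.mem_cons_of_mem hi))
    simp only [Multiset.map_cons, Multiset.sum_cons, Multiset.card_cons]
    omega

lemma sum_map_add_one (s : Multiset ℕ) :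
    (s.map (fun i => i + 1)).sum = s.sum + Multiset.card s := by
  induction s using Multiset.induction with
  | empty => simp
  | cons a t ih =>
    simp only [Multiset.map_cons, Multiset.sum_cons, Multiset.card_cons, ih]
    omega

/-- The forward map on multisets of parts. -/
def fwd (s : Multiset ℕ) : Multiset ℕ :=
  ((((s.filter (fun i => Even i)).map (fun i => i - 1)).erase
      (((s.filter (fun i => Even i)).map (fun i => i - 1)).sup)) +
    {((s.filter (fun i => Even i)).map (fun i => i - 1)).sup +
      (Multiset.card (s.filter (fun i => Even i)) -
        Multiset.card (s.filter (fun i => Odd i)))}) +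
  (s.filter (fun i => Odd i)).map (fun i => i + 1)

/-- The backward map on multisets of parts. -/
def bwd (s : Multiset ℕ) : Multiset ℕ :=
  (((s.filter (fun i => Odd i)).erase ((s.filter (fun i => Odd i)).sup) +
    {(s.filter (fun i => Odd i)).sup -
      (Multiset.card (s.filter (fun i => Odd i)) -
        Multiset.card (s.filter (fun i => Even i)))}).map (fun i => i + 1)) +
  (s.filter (fun i => Even i)).map (fun i => i - 1)

theorem main (m : ℕ) (hm0 : 0 < m) (hmo : Odd m) (s : Multiset ℕ)
    (h1 : ∀ i ∈ s, m ≤ i)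
    (hEc : Odd (s.countP (fun i => Even i)))
    (hOc : Odd (s.countP (fun i => Odd i)))
    (hlt : s.countP (fun i => Odd i) < s.countP (fun i => Even i)) :
    (∀ i ∈ fwd s, m ≤ i) ∧ (fwd s).sum = s.sum ∧
    Odd ((fwd s).countP (fun i => Even i)) ∧ Odd ((fwd s).countP (fun i => Odd i)) ∧
    (fwd s).countP (fun i => Even i) < (fwd s).countP (fun i => Odd i) ∧
    bwd (fwd s) = s := by
  classical
  simp only [Multiset.countP_eq_card_filter] at hEc hOc hlt
  set E := s.filter (fun i => Even i) with hE
  set O := s.filter (fun i => Odd i) with hO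
  set M := E.map (fun i => i - 1) with hM
  set b := Multiset.card E with hb
  set a := Multiset.card O with ha
  set d := b - a with hd
  -- basic facts about counts
  have hbodd : b % 2 = 1 := Nat.odd_iff.mp hEc
  have haodd : a % 2 = 1 := Nat.odd_iff.mp hOc
  have hab : a < b := hlt
  have hdpos : 0 < d := by omega
  -- facts about elements
  have hEe : ∀ e ∈ E, Even e ∧ m + 1 ≤ e := by
    intro e he
    have h2 : Even e := Multiset.of_mem_filter he
    have h3 : m ≤ e := h1 e (Multiset.mem_of_mem_filter he)
    refine ⟨h2, ?_⟩
    rcases Nat.eq_or_lt_of_le h3 with rfl | h4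
    · exact absurd h2 (by simpa using hmo)
    · omega
  have hOe : ∀ o ∈ O, Odd o ∧ m ≤ o := fun o ho =>
    ⟨Multiset.of_mem_filter ho, h1 o (Multiset.mem_of_mem_filter ho)⟩
  have hMe : ∀ x ∈ M, Odd x ∧ m ≤ x := by
    intro x hx
    rw [hM, Multiset.mem_map] at hx
    obtain ⟨e, he, rfl⟩ := hx
    obtain ⟨h2, h3⟩ := hEe e he
    have : Odd (e - 1) := by
      rw [Nat.odd_sub (by omega)]
      simp [Nat.even_iff, Nat.odd_iff] at h2 ⊢
      omega
    exact ⟨this, by omega⟩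
  have hMne : M ≠ 0 := by
    intro h
    have : Multiset.card M = 0 := by rw [h]; simp
    rw [hM, Multiset.card_map, ← hb] at this
    omega
  have hsupM : M.sup ∈ M := sup_mem_of_ne_zero hMne
  obtain ⟨hsupodd, hsupge⟩ := hMe _ hsupM
  have htodd : Odd (M.sup + d) := by
    rw [Nat.odd_iff] at hsupodd ⊢
    omega
  -- the two chunks of fwd s
  set A : Multiset ℕ := M.erase M.sup + {M.sup + d} with hA
  set B : Multiset ℕ := O.map (fun i => i + 1) with hB
  have hfwd : fwd s = A + B := rfl
  have hAe : ∀ x ∈ A, Odd x ∧ m ≤ x := by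
    intro x hx
    rw [hA, Multiset.mem_add] at hx
    rcases hx with hx | hx
    · exact hMe x (Multiset.mem_of_mem_erase hx)
    · rw [Multiset.mem_singleton] at hx
      subst hx
      exact ⟨htodd, le_trans hsupge (Nat.le_add_right _ _)⟩
  have hBe : ∀ x ∈ B, Even x ∧ m ≤ x := by
    intro x hx
    rw [hB, Multiset.mem_map] at hx
    obtain ⟨o, ho, rfl⟩ := hx
    obtain ⟨h2, h3⟩ := hOe o ho
    refine ⟨?_, by omega⟩
    rw [Nat.even_iff] ; rw [Nat.odd_iff] at h2 ; omega
  have hcardA : Multiset.card A = b := by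
    rw [hA, Multiset.card_add, Multiset.card_erase_of_mem hsupM, Multiset.card_singleton,
      hM, Multiset.card_map, ← hb]
    rw [Nat.pred_eq_sub_one]
    omega
  have hcardB : Multiset.card B = a := by
    rw [hB, Multiset.card_map, ← ha]
  -- filters of fwd s
  have hfiltO : (fwd s).filter (fun i => Odd i) = A := by
    rw [hfwd, Multiset.filter_add,
      Multiset.filter_eq_self.mpr (fun x hx => (hAe x hx).1),
      Multiset.filter_eq_nil.mpr (fun x hx => by
        have := (hBe x hx).1 ; rw [← Nat.not_odd_iff_even] at this ; exact this),
      add_zero]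
  have hfiltE : (fwd s).filter (fun i => Even i) = B := by
    rw [hfwd, Multiset.filter_add,
      Multiset.filter_eq_nil.mpr (fun x hx => by
        have := (hAe x hx).1 ; rw [← Nat.not_even_iff_odd] at this ; exact this),
      Multiset.filter_eq_self.mpr (fun x hx => (hBe x hx).1),
      zero_add]
  -- sums
  have hsum1 : M.sum + b = E.sum := by
    rw [hM, hb]
    exact sum_map_sub_one E (fun e he => by have := (hEe e he).2 ; omega)
  have hsum2 : (M.erase M.sup).sum + M.sup = M.sum := by
    conv_rhs => rw [← Multiset.cons_erase hsupM]
    rw [Multiset.sum_cons] ; omega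
  have hsum3 : B.sum = O.sum + a := by
    rw [hB, ha] ; exact sum_map_add_one O
  have hsum4 : E.sum + O.sum = s.sum := by
    have := Multiset.filter_add_not (fun i => Even i) s
    rw [← hE] at this
    have hOeq : s.filter (fun i => ¬ Even i) = O := by
      rw [hO]
      exact Multiset.filter_congr (fun x _ => Nat.not_even_iff_odd)
    rw [hOeq] at this
    rw [← this, Multiset.sum_add]
  have hsumA : A.sum = (M.erase M.sup).sum + (M.sup + d) := by
    rw [hA, Multiset.sum_add, Multiset.sum_singleton]
  have hsumfwd : (fwd s).sum = s.sum := by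
    rw [hfwd, Multiset.sum_add, hsumA]
    omega
  -- bwd (fwd s) = s
  have hsupA : A.sup = M.sup + d := by
    rw [hA, Multiset.sup_add, Multiset.sup_singleton]
    have h5 : (M.erase M.sup).sup ≤ M.sup := by
      apply Multiset.sup_le.mpr
      intro x hx
      exact Multiset.le_sup (Multiset.mem_of_mem_erase hx)
    exact sup_eq_right.mpr (le_trans h5 (Nat.le_add_right _ _))
  have hAerase : A.erase (M.sup + d) = M.erase M.sup := by
    rw [hA, add_comm, Multiset.singleton_add, Multiset.erase_cons_head]
  have hbwd : bwd (fwd s) = s := by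
    rw [bwd]
    rw [hfiltO, hfiltE, hcardA, hcardB, hsupA, hAerase, ← hd]
    have h6 : M.sup + d - d = M.sup := by omega
    rw [h6]
    have h7 : M.erase M.sup + {M.sup} = M := by
      rw [add_comm, Multiset.singleton_add, Multiset.cons_erase hsupM]
    rw [h7, hM, Multiset.map_map, hB, Multiset.map_map]
    have h8 : E.map ((fun i => i + 1) ∘ (fun i => i - 1)) = E := by
      rw [show E.map ((fun i => i + 1) ∘ (fun i => i - 1)) =
            E.map (fun i => i) from
          Multiset.map_congr rfl (fun x hx => by
            have := (hEe x hx).2 ; simp only [Function.comp] ; omega),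
        Multiset.map_id']
    have h9 : O.map ((fun i => i - 1) ∘ (fun i => i + 1)) = O := by
      rw [show O.map ((fun i => i - 1) ∘ (fun i => i + 1)) =
            O.map (fun i => i) from
          Multiset.map_congr rfl (fun x _ => by simp only [Function.comp] ; omega),
        Multiset.map_id']
    rw [h8, h9]
    have := Multiset.filter_add_not (fun i => Even i) s
    rw [← hE] at this
    have hOeq : s.filter (fun i => ¬ Even i) = O := by
      rw [hO]
      exact Multiset.filter_congr (fun x _ => Nat.not_even_iff_odd)
    rw [hOeq] at this
    exact this
  refine ⟨?_, hsumfwd, ?_, ?_, ?_, hbwd⟩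
  · intro i hi
    rw [hfwd, Multiset.mem_add] at hi
    rcases hi with hi | hi
    · exact (hAe i hi).2
    · exact (hBe i hi).2
  · rw [Multiset.countP_eq_card_filter, hfiltE, hcardB, Nat.odd_iff] ; omega
  · rw [Multiset.countP_eq_card_filter, hfiltO, hcardA, Nat.odd_iff] ; omega
  · rw [Multiset.countP_eq_card_filter, hfiltE, hcardB,
      Multiset.countP_eq_card_filter, hfiltO, hcardA]
    exact hab

/-- The forward map on partitions. -/
def F (m n : ℕ) (p : n.Partition) : n.Partition :=
  if h : 0 < m ∧ Odd m ∧ (∀ i ∈ p.parts, m ≤ i) ∧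
      Odd (p.parts.countP (fun i => Even i)) ∧ Odd (p.parts.countP (fun i => Odd i)) ∧
      p.parts.countP (fun i => Odd i) < p.parts.countP (fun i => Even i) then
    { parts := fwd p.parts
      parts_pos := fun {i} hi =>
        lt_of_lt_of_le h.1
          ((main m h.1 h.2.1 p.parts h.2.2.1 h.2.2.2.1 h.2.2.2.2.1 h.2.2.2.2.2).1 i hi)
      parts_sum := by
        rw [(main m h.1 h.2.1 p.parts h.2.2.1 h.2.2.2.1 h.2.2.2.2.1 h.2.2.2.2.2).2.1,
          p.parts_sum] }
  else p

end StmtAux4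

theorem stmt_4 : ∀ m n : ℕ, 0 < m → Odd m → 0 < n → Odd n →
    Emo m n ≤ Omo m n := by
  intro m n hm hmo hn hno
  rw [Emo, Omo]
  apply Set.ncard_le_ncard_of_injOn (StmtAux4.F m n)
  · intro p hp
    obtain ⟨hp1, hp2, hp3, hp4⟩ := hp
    have hcond : 0 < m ∧ Odd m ∧ (∀ i ∈ p.parts, m ≤ i) ∧
        Odd (p.parts.countP (fun i => Even i)) ∧ Odd (p.parts.countP (fun i => Odd i)) ∧
        p.parts.countP (fun i => Odd i) < p.parts.countP (fun i => Even i) :=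
      ⟨hm, hmo, hp1, hp2, hp3, hp4⟩
    have hparts : (StmtAux4.F m n p).parts = StmtAux4.fwd p.parts := by
      rw [StmtAux4.F, dif_pos hcond]
    obtain ⟨q1, q2, q3, q4, q5, q6⟩ :=
      StmtAux4.main m hm hmo p.parts hp1 hp2 hp3 hp4
    refine ⟨?_, ?_, ?_, ?_⟩ <;> rw [hparts]
    · exact q1
    · exact q3
    · exact q4
    · exact q5
  · intro p hp q hq hpq
    obtain ⟨hp1, hp2, hp3, hp4⟩ := hp
    obtain ⟨hq1, hq2, hq3, hq4⟩ := hq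
    have hcondp : 0 < m ∧ Odd m ∧ (∀ i ∈ p.parts, m ≤ i) ∧
        Odd (p.parts.countP (fun i => Even i)) ∧ Odd (p.parts.countP (fun i => Odd i)) ∧
        p.parts.countP (fun i => Odd i) < p.parts.countP (fun i => Even i) :=
      ⟨hm, hmo, hp1, hp2, hp3, hp4⟩
    have hcondq : 0 < m ∧ Odd m ∧ (∀ i ∈ q.parts, m ≤ i) ∧
        Odd (q.parts.countP (fun i => Even i)) ∧ Odd (q.parts.countP (fun i => Odd i)) ∧
        q.parts.countP (fun i => Odd i) < q.parts.countP (fun i => Even i) :=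
      ⟨hm, hmo, hq1, hq2, hq3, hq4⟩
    have hpartsp : (StmtAux4.F m n p).parts = StmtAux4.fwd p.parts := by
      rw [StmtAux4.F, dif_pos hcondp]
    have hpartsq : (StmtAux4.F m n q).parts = StmtAux4.fwd q.parts := by
      rw [StmtAux4.F, dif_pos hcondq]
    have h1 : StmtAux4.fwd p.parts = StmtAux4.fwd q.parts := by
      rw [← hpartsp, ← hpartsq, hpq]
    have h2 := (StmtAux4.main m hm hmo p.parts hp1 hp2 hp3 hp4).2.2.2.2.2
    have h3 := (StmtAux4.main m hm hmo q.parts hq1 hq2 hq3 hq4).2.2.2.2.2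
    apply Nat.Partition.ext
    rw [← h2, ← h3, h1]
end

section
/- Let m be an even positive integer. For every odd positive integer n, the number of partitions of n all of whose parts are at least m, in which the number of odd parts and the number of even parts are both odd and the number of even parts exceeds the number of odd parts, is at least the number of partitions of n all of whose parts are at least m, in which the number of odd parts and the number of even parts are both odd and the number of odd parts exceeds the number of even parts; that is, E_mo(n) ≥ O_mo(n). -/
private lemma sup_mem_multiset {s : Multiset ℕ} (hs : s ≠ 0) : s.sup ∈ s := by
  induction s using Multiset.induction_on with
  | empty => simp at hs
  | cons a t ih =>
    rcases eq_or_ne t 0 with rfl | h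
    · simp
    · rw [Multiset.sup_cons]
      rcases le_total a t.sup with h1 | h1
      · rw [sup_eq_right.2 h1]
        exact Multiset.mem_cons_of_mem (ih h)
      · rw [sup_eq_left.2 h1]
        exact Multiset.mem_cons_self a t

private lemma sum_map_sub_one {s : Multiset ℕ} (h : ∀ i ∈ s, 1 ≤ i) :
    (s.map (· - 1)).sum + Multiset.card s = s.sum := by
  induction s using Multiset.induction_on with
  | empty => simp
  | cons a t ih =>
    simp only [Multiset.map_cons, Multiset.sum_cons, Multiset.card_cons]
    have h1 : 1 ≤ a := h a (Multiset.mem_cons_self a t)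
    have h2 := ih (fun i hi => h i (Multiset.mem_cons_of_mem hi))
    omega

private lemma sum_map_add_one (s : Multiset ℕ) :
    (s.map (· + 1)).sum = s.sum + Multiset.card s := by
  induction s using Multiset.induction_on with
  | empty => simp
  | cons a t ih =>
    simp only [Multiset.map_cons, Multiset.sum_cons, Multiset.card_cons]
    omega

/-- The image multiset of the injection. -/
private def fparts (n : ℕ) (p : n.Partition) : Multiset ℕ :=
  (p.parts.filter (fun i => Even i)).map (· + 1) +
  ((p.parts.filter (fun i => Odd i)).erase (p.parts.filter (fun i => Odd i)).sup).map (· - 1) +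
  {(p.parts.filter (fun i => Odd i)).sup +
    (Multiset.card (p.parts.filter (fun i => Odd i)) - 1 -
      Multiset.card (p.parts.filter (fun i => Even i)))}

/-- The inverse map. -/
private def recov (s : Multiset ℕ) : Multiset ℕ :=
  (s.filter (fun i => Odd i)).map (· - 1) +
  ((s.filter (fun i => Even i)).erase (s.filter (fun i => Even i)).sup).map (· + 1) +
  {(s.filter (fun i => Even i)).sup -
    (Multiset.card (s.filter (fun i => Even i)) - 1 -
      Multiset.card (s.filter (fun i => Odd i)))}

private lemma fparts_main {m n : ℕ} (hm : 0 < m) (hme : Even m) (p : n.Partition)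
    (h1 : ∀ i ∈ p.parts, m ≤ i)
    (h2 : Odd (p.parts.countP (fun i => Even i)))
    (h3 : Odd (p.parts.countP (fun i => Odd i)))
    (h4 : p.parts.countP (fun i => Odd i) > p.parts.countP (fun i => Even i)) :
    (fparts n p).sum = n ∧ (∀ i ∈ fparts n p, m ≤ i) ∧
    (fparts n p).countP (fun i => Even i) = p.parts.countP (fun i => Odd i) ∧
    (fparts n p).countP (fun i => Odd i) = p.parts.countP (fun i => Even i) ∧
    recov (fparts n p) = p.parts := by
  set O := p.parts.filter (fun i => Odd i) with hO
  set E := p.parts.filter (fun i => Even i) with hE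
  set a := Multiset.card O with ha
  set b := Multiset.card E with hb
  have hcO : p.parts.countP (fun i => Odd i) = a := Multiset.countP_eq_card_filter _ _
  have hcE : p.parts.countP (fun i => Even i) = b := Multiset.countP_eq_card_filter _ _
  rw [hcO] at h3 h4
  rw [hcE] at h2 h4
  have haodd : a % 2 = 1 := Nat.odd_iff.1 h3
  have hbodd : b % 2 = 1 := Nat.odd_iff.1 h2
  have hab : b + 2 ≤ a := by omega
  have hb1 : 1 ≤ b := by omega
  have hOmem : ∀ i ∈ O, Odd i ∧ m + 1 ≤ i := by
    intro i hi
    have hoi : Odd i := (Multiset.mem_filter.1 hi).2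
    have hmi : m ≤ i := h1 i (Multiset.mem_filter.1 hi).1
    refine ⟨hoi, ?_⟩
    have h5 := Nat.even_iff.1 hme
    have h6 := Nat.odd_iff.1 hoi
    omega
  have hEmem : ∀ i ∈ E, Even i ∧ m ≤ i := by
    intro i hi
    exact ⟨(Multiset.mem_filter.1 hi).2, h1 i (Multiset.mem_filter.1 hi).1⟩
  have hOne : O ≠ 0 := by
    intro h
    rw [h] at ha
    simp at ha
    omega
  set o1 := O.sup with ho1def
  have ho1 : o1 ∈ O := sup_mem_multiset hOne
  have ho1odd : Odd o1 := (hOmem o1 ho1).1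
  have ho1m : m + 1 ≤ o1 := (hOmem o1 ho1).2
  set O' := O.erase o1 with hO'
  have hcons : o1 ::ₘ O' = O := Multiset.cons_erase ho1
  have hcardO' : Multiset.card O' = a - 1 := by
    rw [hO', Multiset.card_erase_of_mem ho1, Nat.pred_eq_sub_one, ha]
  have hO'mem : ∀ i ∈ O', Odd i ∧ m + 1 ≤ i ∧ i ≤ o1 := by
    intro i hi
    have hiO : i ∈ O := Multiset.mem_of_mem_erase hi
    exact ⟨(hOmem i hiO).1, (hOmem i hiO).2, Multiset.le_sup hiO⟩
  set d := a - 1 - b with hd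
  have hdodd : d % 2 = 1 := by omega
  have hfp : fparts n p = E.map (· + 1) + O'.map (· - 1) + {o1 + d} := rfl
  -- sums
  have hEnot : E = Multiset.filter (fun i => ¬ Odd i) p.parts := by
    rw [hE]
    exact Multiset.filter_congr (fun x _ => by simp [Nat.not_odd_iff_even])
  have hsplit : O + E = p.parts := by
    rw [hO, hEnot]
    exact Multiset.filter_add_not _ _
  have hsumOE : O.sum + E.sum = n := by
    rw [← Multiset.sum_add, hsplit, p.parts_sum]
  have h1sum : (E.map (· + 1)).sum = E.sum + b := by
    rw [sum_map_add_one, hb]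
  have h2sum : (O'.map (· - 1)).sum + (a - 1) = O'.sum := by
    rw [← hcardO']
    exact sum_map_sub_one (fun i hi => by have := (hO'mem i hi).2.1; omega)
  have hOsum : o1 + O'.sum = O.sum := by
    rw [← hcons, Multiset.sum_cons]
  have hsum : (fparts n p).sum = n := by
    rw [hfp]
    simp only [Multiset.sum_add, Multiset.sum_singleton]
    have key : ∀ se so so' s1 s2 : ℕ, s1 = se + b → s2 + (a - 1) = so' → o1 + so' = so →
        so + se = n → s1 + s2 + (o1 + d) = n := by
      intro se so so' s1 s2 e1 e2 e3 e4
      omega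
    exact key E.sum O.sum O'.sum _ _ h1sum h2sum hOsum hsumOE
  -- parts are at least m
  have hge : ∀ i ∈ fparts n p, m ≤ i := by
    intro i hi
    rw [hfp] at hi
    simp only [Multiset.mem_add, Multiset.mem_map, Multiset.mem_singleton] at hi
    rcases hi with (⟨e, he, rfl⟩ | ⟨o, ho, rfl⟩) | rfl
    · have := (hEmem e he).2; omega
    · have := (hO'mem o ho).2.1; omega
    · omega
  -- counts
  have hcount1 : (E.map (· + 1)).countP (fun i => Even i) = 0 := by
    rw [Multiset.countP_eq_zero]
    rintro x hx
    simp only [Multiset.mem_map] at hx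
    obtain ⟨e, he, rfl⟩ := hx
    have := Nat.even_iff.1 (hEmem e he).1
    rw [Nat.even_iff]
    omega
  have hcount1' : (E.map (· + 1)).countP (fun i => Odd i) = b := by
    rw [show b = Multiset.card (E.map (· + 1)) by simp [hb]]
    rw [Multiset.countP_eq_card]
    rintro x hx
    simp only [Multiset.mem_map] at hx
    obtain ⟨e, he, rfl⟩ := hx
    have := Nat.even_iff.1 (hEmem e he).1
    rw [Nat.odd_iff]
    omega
  have hcount2 : (O'.map (· - 1)).countP (fun i => Even i) = a - 1 := by
    rw [show a - 1 = Multiset.card (O'.map (· - 1)) by simp [hcardO']]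
    rw [Multiset.countP_eq_card]
    rintro x hx
    simp only [Multiset.mem_map] at hx
    obtain ⟨o, ho, rfl⟩ := hx
    have := Nat.odd_iff.1 (hO'mem o ho).1
    rw [Nat.even_iff]
    omega
  have hcount2' : (O'.map (· - 1)).countP (fun i => Odd i) = 0 := by
    rw [Multiset.countP_eq_zero]
    rintro x hx
    simp only [Multiset.mem_map] at hx
    obtain ⟨o, ho, rfl⟩ := hx
    have := Nat.odd_iff.1 (hO'mem o ho).1
    rw [Nat.odd_iff]
    omega
  have ho1deven : Even (o1 + d) := by
    rw [Nat.even_iff]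
    have := Nat.odd_iff.1 ho1odd
    omega
  have ho1dodd : ¬ Odd (o1 + d) := by
    rw [Nat.odd_iff]
    have := Nat.odd_iff.1 ho1odd
    omega
  have hsingE : Multiset.countP (fun i => Even i) ({o1 + d} : Multiset ℕ) = 1 := by
    rw [Multiset.countP_eq_card_filter, Multiset.filter_singleton, if_pos ho1deven]
    simp
  have hsingO : Multiset.countP (fun i => Odd i) ({o1 + d} : Multiset ℕ) = 0 := by
    rw [Multiset.countP_eq_card_filter, Multiset.filter_singleton, if_neg ho1dodd]
    simp
  have hcountE : (fparts n p).countP (fun i => Even i) = a := by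
    rw [hfp, Multiset.countP_add, Multiset.countP_add, hcount1, hcount2, hsingE]
    omega
  have hcountO : (fparts n p).countP (fun i => Odd i) = b := by
    rw [hfp, Multiset.countP_add, Multiset.countP_add, hcount1', hcount2', hsingO]
    omega
  -- recovery
  have hfE : Multiset.filter (fun i => Even i) (E.map (· + 1)) = 0 :=
    Multiset.filter_eq_nil.2 (by
      rintro x hx
      simp only [Multiset.mem_map] at hx
      obtain ⟨e, he, rfl⟩ := hx
      have := Nat.even_iff.1 (hEmem e he).1
      rw [Nat.even_iff]
      omega)
  have hfE' : Multiset.filter (fun i => Odd i) (E.map (· + 1)) = E.map (· + 1) :=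
    Multiset.filter_eq_self.2 (by
      rintro x hx
      simp only [Multiset.mem_map] at hx
      obtain ⟨e, he, rfl⟩ := hx
      have := Nat.even_iff.1 (hEmem e he).1
      rw [Nat.odd_iff]
      omega)
  have hfO : Multiset.filter (fun i => Even i) (O'.map (· - 1)) = O'.map (· - 1) :=
    Multiset.filter_eq_self.2 (by
      rintro x hx
      simp only [Multiset.mem_map] at hx
      obtain ⟨o, ho, rfl⟩ := hx
      have := Nat.odd_iff.1 (hO'mem o ho).1
      rw [Nat.even_iff]
      omega)
  have hfO' : Multiset.filter (fun i => Odd i) (O'.map (· - 1)) = 0 :=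
    Multiset.filter_eq_nil.2 (by
      rintro x hx
      simp only [Multiset.mem_map] at hx
      obtain ⟨o, ho, rfl⟩ := hx
      have := Nat.odd_iff.1 (hO'mem o ho).1
      rw [Nat.odd_iff]
      omega)
  have hF : (fparts n p).filter (fun i => Even i) = O'.map (· - 1) + {o1 + d} := by
    rw [hfp]
    simp only [Multiset.filter_add, hfE, hfO, Multiset.filter_singleton, if_pos ho1deven]
    simp
  have hG : (fparts n p).filter (fun i => Odd i) = E.map (· + 1) := by
    rw [hfp]
    simp only [Multiset.filter_add, hfE', hfO', Multiset.filter_singleton, if_neg ho1dodd]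
    simp
  have hcardF : Multiset.card ((fparts n p).filter (fun i => Even i)) = a := by
    rw [hF]
    simp only [Multiset.card_add, Multiset.card_map, Multiset.card_singleton, hcardO']
    omega
  have hcardG : Multiset.card ((fparts n p).filter (fun i => Odd i)) = b := by
    rw [hG]; simp [hb]
  have hFsup : ((fparts n p).filter (fun i => Even i)).sup = o1 + d := by
    apply le_antisymm
    · rw [Multiset.sup_le]
      intro x hx
      rw [hF] at hx
      simp only [Multiset.mem_add, Multiset.mem_map, Multiset.mem_singleton] at hx
      rcases hx with ⟨o, ho, rfl⟩ | rfl
      · have := (hO'mem o ho).2.2; omega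
      · exact le_refl _
    · apply Multiset.le_sup
      rw [hF]
      simp
  have hFerase : ((fparts n p).filter (fun i => Even i)).erase (o1 + d) = O'.map (· - 1) := by
    rw [hF, add_comm (O'.map (· - 1)) ({o1 + d} : Multiset ℕ), Multiset.singleton_add,
      Multiset.erase_cons_head]
  have hrec : recov (fparts n p) = p.parts := by
    rw [recov, hcardF, hcardG, hFsup, hFerase, hG]
    have e1 : (E.map (· + 1)).map (· - 1) = E := by
      rw [Multiset.map_map]
      rw [Multiset.map_congr rfl (g := fun i => i) (fun x _ => by simp)]
      exact Multiset.map_id' E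
    have e2 : (O'.map (· - 1)).map (· + 1) = O' := by
      rw [Multiset.map_map]
      rw [Multiset.map_congr rfl (g := fun i => i)
        (fun x hx => by have := (hO'mem x hx).2.1; simp; omega)]
      exact Multiset.map_id' O'
    have e3 : o1 + d - (a - 1 - b) = o1 := by omega
    rw [e1, e2, e3, ← hsplit, ← hcons, ← Multiset.singleton_add]
    ac_rfl
  exact ⟨hsum, hge, by rw [hcountE, hcO], by rw [hcountO, hcE], hrec⟩

theorem stmt_5 : ∀ m n : ℕ, 0 < m → Even m → 0 < n → Odd n →
    Omo m n ≤ Emo m n := by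
  intro m n hm hme hn hno
  classical
  rw [Omo, Emo]
  set f : n.Partition → n.Partition := fun p =>
    if h : (∀ i ∈ p.parts, m ≤ i) ∧ Odd (p.parts.countP (fun i => Even i)) ∧
        Odd (p.parts.countP (fun i => Odd i)) ∧
        p.parts.countP (fun i => Odd i) > p.parts.countP (fun i => Even i) then
      ⟨fparts n p,
        fun {i} hi => lt_of_lt_of_le hm
          ((fparts_main hm hme p h.1 h.2.1 h.2.2.1 h.2.2.2).2.1 i hi),
        (fparts_main hm hme p h.1 h.2.1 h.2.2.1 h.2.2.2).1⟩
    else p with hf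
  apply Set.ncard_le_ncard_of_injOn f
  · intro p hp
    simp only [Set.mem_setOf_eq] at hp ⊢
    rw [hf]
    simp only [dif_pos hp]
    obtain ⟨hs, hg, hcE, hcO, _⟩ := fparts_main hm hme p hp.1 hp.2.1 hp.2.2.1 hp.2.2.2
    refine ⟨hg, ?_, ?_, ?_⟩
    · rw [hcE]; exact hp.2.2.1
    · rw [hcO]; exact hp.2.1
    · rw [hcE, hcO]; exact hp.2.2.2
  · intro p hp q hq hpq
    simp only [Set.mem_setOf_eq] at hp hq
    rw [hf] at hpq
    simp only [dif_pos hp, dif_pos hq] at hpq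
    have hparts : fparts n p = fparts n q := congrArg Nat.Partition.parts hpq
    have r1 := (fparts_main hm hme p hp.1 hp.2.1 hp.2.2.1 hp.2.2.2).2.2.2.2
    have r2 := (fparts_main hm hme q hq.1 hq.2.1 hq.2.2.1 hq.2.2.2).2.2.2.2
    apply Nat.Partition.ext
    rw [← r1, ← r2, hparts]
end

section
/- For every integer n > 6, the number of partitions of n having at least one odd part in which every odd part is less than every even part strictly exceeds the number of partitions of n in which every even part is less than every odd part; that is, p_ou^eu(n) > p_eu^ou(n) for all n > 6. -/
/-- The number of partitions of `n` in which each even part is less than each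
odd part. -/
noncomputable def peuou (n : ℕ) : ℕ :=
  Set.ncard {p : n.Partition |
    ∀ a ∈ p.parts, ∀ b ∈ p.parts, Even a → Odd b → a < b}

/-- The number of partitions of `n` containing at least one odd part in which
each odd part is less than each even part. -/
noncomputable def poueu (n : ℕ) : ℕ :=
  Set.ncard {p : n.Partition | (∃ a ∈ p.parts, Odd a) ∧
    ∀ a ∈ p.parts, ∀ b ∈ p.parts, Odd a → Even b → a < b}

namespace StmtAux
open Multiset

/-- odd and at least 3 -/
def odd3 (x : ℕ) : Prop := x % 2 = 1 ∧ 3 ≤ x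

instance : DecidablePred odd3 := fun _ => instDecidableAnd

instance (m : Multiset ℕ) : Decidable (∃ x ∈ m, x % 2 = 1) :=
  Multiset.decidableExistsMultiset

def dec (x : ℕ) : ℕ := if odd3 x then x - 1 else x

/-- the even parts -/
def Ev (P : Multiset ℕ) : Multiset ℕ := P.filter (fun x => x % 2 = 0)

/-- the odd parts that are at least 3 -/
def O3 (P : Multiset ℕ) : Multiset ℕ := P.filter odd3

/-- the parts that are at least 4 -/
def Big (P : Multiset ℕ) : Multiset ℕ := P.filter (fun x => 4 ≤ x)

/-- the smallest part that is at least 4 -/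
def W (P : Multiset ℕ) : ℕ := ((Big P).sort (· ≤ ·)).headI

/-- The injection, at the level of multisets of parts. -/
def gp (n : ℕ) (P : Multiset ℕ) : Multiset ℕ :=
  if ∃ x ∈ P, x % 2 = 1 then
    P.map dec + Multiset.replicate ((O3 P).card) 1
  else if Big P = 0 then {n - 3, 3}
  else (Big P).erase (W P) + (W P - 1) ::ₘ Multiset.replicate (2 * P.count 2 + 1) 1

lemma sup_mem_s6 {s : Multiset ℕ} (h : s ≠ 0) : s.sup ∈ s := by
  induction s using Multiset.induction with
  | empty => simp at h
  | cons a t ih =>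
    rw [Multiset.sup_cons]
    rcases eq_or_ne t 0 with rfl | ht
    · simp
    · rcases le_total t.sup a with hle | hle
      · rw [sup_eq_left.2 hle]; exact Multiset.mem_cons_self a t
      · rw [sup_eq_right.2 hle]; exact Multiset.mem_cons_of_mem (ih ht)

/-- key uniqueness lemma: a multiset splits uniquely into a "top block" of
given size and a complementary block below it. -/
lemma split_unique : ∀ (k : ℕ) (E G E' G' : Multiset ℕ), G.card = k → G'.card = k →
    E + G = E' + G' → (∀ e ∈ E, ∀ g ∈ G, e ≤ g) → (∀ e ∈ E', ∀ g ∈ G', e ≤ g) →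
    G = G' := by
  intro k
  induction k with
  | zero =>
    intro E G E' G' h1 h2 _ _ _
    rw [Multiset.card_eq_zero] at h1 h2; rw [h1, h2]
  | succ k ih =>
    intro E G E' G' h1 h2 heq hEG hEG'
    have hG : G ≠ 0 := by
      intro h; rw [h] at h1; simp at h1
    have hG' : G' ≠ 0 := by
      intro h; rw [h] at h2; simp at h2
    set m := G.sup with hm
    have hmG : m ∈ G := sup_mem_s6 hG
    have hmax : ∀ x ∈ G, x ≤ m := fun x hx => Multiset.le_sup hx
    have hmG' : m ∈ G' := by
      have hmem : m ∈ E' + G' := by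
        rw [← heq]; exact Multiset.mem_add.2 (Or.inr hmG)
      rcases Multiset.mem_add.1 hmem with hE' | hG'mem
      · obtain ⟨g', hg'⟩ := Multiset.exists_mem_of_ne_zero hG'
        have h1' : m ≤ g' := hEG' m hE' g' hg'
        have hg'mem : g' ∈ E + G := by
          rw [heq]; exact Multiset.mem_add.2 (Or.inr hg')
        rcases Multiset.mem_add.1 hg'mem with hgE | hgG
        · have h2' : g' ≤ m := hEG g' hgE m hmG
          have : g' = m := le_antisymm h2' h1'
          rwa [← this]
        · have h2' : g' ≤ m := hmax g' hgG
          have : g' = m := le_antisymm h2' h1'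
          rwa [← this]
      · exact hG'mem
    have heq' : E + G.erase m = E' + G'.erase m := by
      have h := congrArg (fun s => s.erase m) heq
      simpa [Multiset.erase_add_right_pos _ hmG, Multiset.erase_add_right_pos _ hmG'] using h
    have hrec : G.erase m = G'.erase m := by
      apply ih E (G.erase m) E' (G'.erase m)
      · rw [Multiset.card_erase_of_mem hmG, h1]; rfl
      · rw [Multiset.card_erase_of_mem hmG', h2]; rfl
      · exact heq'
      · exact fun e he g hg => hEG e he g (Multiset.mem_of_mem_erase hg)
      · exact fun e he g hg => hEG' e he g (Multiset.mem_of_mem_erase hg)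
    calc G = m ::ₘ G.erase m := (Multiset.cons_erase hmG).symm
    _ = m ::ₘ G'.erase m := by rw [hrec]
    _ = G' := Multiset.cons_erase hmG'

end StmtAux

namespace StmtAux
open Multiset

lemma decomp {P : Multiset ℕ} (hpos : ∀ x ∈ P, 0 < x) :
    P = Ev P + O3 P + Multiset.replicate (P.count 1) 1 := by
  have h1 : P = Ev P + P.filter (fun x => ¬ x % 2 = 0) :=
    (Multiset.filter_add_not _ P).symm
  have h2 : P.filter (fun x => ¬ x % 2 = 0) = O3 P + P.filter (· = 1) := by
    have := (Multiset.filter_add_not odd3 (P.filter (fun x => ¬ x % 2 = 0)))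
    rw [Multiset.filter_filter, Multiset.filter_filter] at this
    rw [← this]
    congr 1
    · unfold O3
      apply Multiset.filter_congr
      intro x hx
      unfold odd3
      omega
    · apply Multiset.filter_congr
      intro x hx
      have := hpos x hx
      unfold odd3
      omega
  rw [Multiset.filter_eq'] at h2
  nth_rewrite 1 [h1]
  rw [h2, add_assoc]

lemma mem_Ev {P : Multiset ℕ} {x : ℕ} (h : x ∈ Ev P) : x % 2 = 0 ∧ x ∈ P := by
  unfold Ev at h
  have h1 := Multiset.of_mem_filter h
  have h2 := Multiset.mem_of_mem_filter h
  exact ⟨h1, h2⟩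

lemma mem_O3 {P : Multiset ℕ} {x : ℕ} (h : x ∈ O3 P) : (x % 2 = 1 ∧ 3 ≤ x) ∧ x ∈ P := by
  unfold O3 at h
  have h1 := Multiset.of_mem_filter h
  have h2 := Multiset.mem_of_mem_filter h
  exact ⟨h1, h2⟩

lemma map_dec_eq {P : Multiset ℕ} (hpos : ∀ x ∈ P, 0 < x) :
    P.map dec = Ev P + (O3 P).map (· - 1) + Multiset.replicate (P.count 1) 1 := by
  have h1 : (Ev P).map dec = Ev P := by
    rw [show (Ev P).map dec = (Ev P).map id from Multiset.map_congr rfl fun x hx => by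
      have := (mem_Ev hx).1
      unfold dec
      rw [if_neg (by unfold odd3; omega : ¬ odd3 x)]
      rfl]
    simp
  have h2 : (O3 P).map dec = (O3 P).map (· - 1) :=
    Multiset.map_congr rfl fun x hx => by
      have := (mem_O3 hx).1
      unfold dec
      rw [if_pos (show odd3 x from this)]
  have h3 : (Multiset.replicate (P.count 1) 1).map dec = Multiset.replicate (P.count 1) 1 := by
    rw [Multiset.map_replicate]
    rfl
  nth_rewrite 1 [decomp hpos]
  rw [Multiset.map_add, Multiset.map_add, h1, h2, h3]

lemma gp_case1 {n : ℕ} {P : Multiset ℕ} (c1 : ∃ x ∈ P, x % 2 = 1)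
    (hpos : ∀ x ∈ P, 0 < x) :
    gp n P = Ev P + (O3 P).map (· - 1) +
      Multiset.replicate (P.count 1 + (O3 P).card) 1 := by
  unfold gp
  rw [if_pos c1, map_dec_eq hpos, Multiset.replicate_add, add_assoc, add_assoc]

end StmtAux

namespace StmtAux
open Multiset

lemma even_sum {P : Multiset ℕ} (h : ∀ x ∈ P, x % 2 = 0) : P.sum % 2 = 0 := by
  induction P using Multiset.induction with
  | empty => simp
  | cons a t ih =>
    rw [Multiset.sum_cons]
    have h1 := h a (Multiset.mem_cons_self a t)
    have h2 := ih (fun x hx => h x (Multiset.mem_cons_of_mem hx))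
    omega

lemma mem_Big {P : Multiset ℕ} {x : ℕ} (h : x ∈ Big P) : 4 ≤ x ∧ x ∈ P := by
  unfold Big at h
  have h1 := Multiset.of_mem_filter h
  have h2 := Multiset.mem_of_mem_filter h
  exact ⟨h1, h2⟩

lemma decomp2 {P : Multiset ℕ} (hall : ∀ x ∈ P, x % 2 = 0) (hpos : ∀ x ∈ P, 0 < x) :
    P = Big P + Multiset.replicate (P.count 2) 2 := by
  have h1 : P = Big P + P.filter (fun x => ¬ 4 ≤ x) :=
    (Multiset.filter_add_not _ P).symm
  have h2 : P.filter (fun x => ¬ 4 ≤ x) = P.filter (· = 2) := by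
    apply Multiset.filter_congr
    intro x hx
    have := hall x hx
    have := hpos x hx
    constructor
    · intro h; omega
    · intro h; omega
  rw [Multiset.filter_eq'] at h2
  nth_rewrite 1 [h1]
  rw [h2]

lemma W_spec {P : Multiset ℕ} (h : Big P ≠ 0) :
    W P ∈ Big P ∧ ∀ x ∈ Big P, W P ≤ x := by
  have hne : (Big P).sort (· ≤ ·) ≠ [] := by
    intro hnil
    apply h
    have := Multiset.sort_eq (Big P) (· ≤ ·)
    rw [hnil] at this
    simpa using this.symm
  obtain ⟨a, t, hat⟩ := List.exists_cons_of_ne_nil hne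
  have hsorted := Multiset.pairwise_sort (Big P) (· ≤ ·)
  rw [hat] at hsorted
  have hle := (List.pairwise_cons.mp hsorted).1
  have hWa : W P = a := by unfold W; rw [hat]; rfl
  constructor
  · rw [← Multiset.mem_sort (· ≤ ·), hat, hWa]
    exact List.mem_cons_self
  · intro x hx
    rw [← Multiset.mem_sort (· ≤ ·), hat] at hx
    rcases List.mem_cons.mp hx with rfl | hx
    · rw [hWa]
    · rw [hWa]; exact hle x hx

section shape

variable {E G : Multiset ℕ} {m : ℕ}

lemma shape_filter_even (hE : ∀ x ∈ E, x % 2 = 0) (hG : ∀ x ∈ G, x % 2 = 0) :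
    (E + G + Multiset.replicate m 1).filter (fun x => x % 2 = 0) = E + G := by
  rw [Multiset.filter_add, Multiset.filter_add]
  rw [Multiset.filter_eq_self.2 hE, Multiset.filter_eq_self.2 hG,
    Multiset.filter_eq_nil.2 (fun a ha => by
      rw [Multiset.eq_of_mem_replicate ha]; omega), add_zero]

lemma shape_count_one (hE : ∀ x ∈ E, x % 2 = 0) (hG : ∀ x ∈ G, x % 2 = 0) :
    (E + G + Multiset.replicate m 1).count 1 = m := by
  rw [Multiset.count_add, Multiset.count_add]
  have e1 : E.count 1 = 0 := Multiset.count_eq_zero.2 (fun h => by have := hE 1 h; omega)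
  have e2 : G.count 1 = 0 := Multiset.count_eq_zero.2 (fun h => by have := hG 1 h; omega)
  rw [e1, e2, Multiset.count_replicate_self]
  omega

lemma shape_countP_odd3 (hE : ∀ x ∈ E, x % 2 = 0) (hG : ∀ x ∈ G, x % 2 = 0) :
    (E + G + Multiset.replicate m 1).countP odd3 = 0 := by
  rw [Multiset.countP_eq_zero]
  intro a ha
  rcases Multiset.mem_add.1 ha with h | h
  · rcases Multiset.mem_add.1 h with h | h
    · have := hE a h; unfold odd3; omega
    · have := hG a h; unfold odd3; omega
  · rw [Multiset.eq_of_mem_replicate h]; unfold odd3; omega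

end shape

section shape2

variable {R : Multiset ℕ} {w m : ℕ}

lemma shape2_countP_odd3 (hR : ∀ x ∈ R, x % 2 = 0) (hw : w % 2 = 0 ∧ 4 ≤ w) :
    (R + (w - 1) ::ₘ Multiset.replicate m 1).countP odd3 = 1 := by
  rw [Multiset.countP_add, Multiset.countP_cons, Multiset.countP_eq_zero.2 (fun a ha => by
      have := hR a ha; unfold odd3; omega),
    Multiset.countP_eq_zero.2 (fun a ha => by
      rw [Multiset.eq_of_mem_replicate ha]; unfold odd3; omega)]
  rw [if_pos (by unfold odd3; omega)]

lemma shape2_filter_odd3 (hR : ∀ x ∈ R, x % 2 = 0) (hw : w % 2 = 0 ∧ 4 ≤ w) :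
    (R + (w - 1) ::ₘ Multiset.replicate m 1).filter odd3 = {w - 1} := by
  rw [Multiset.filter_add, Multiset.filter_cons,
    Multiset.filter_eq_nil.2 (fun a ha => by have := hR a ha; unfold odd3; omega),
    Multiset.filter_eq_nil.2 (fun a ha => by
      rw [Multiset.eq_of_mem_replicate ha]; unfold odd3; omega),
    if_pos (by unfold odd3; omega : odd3 (w - 1))]
  simp

lemma shape2_count_one (hR : ∀ x ∈ R, 4 ≤ x) (hw : 4 ≤ w) :
    (R + (w - 1) ::ₘ Multiset.replicate m 1).count 1 = m := by
  rw [Multiset.count_add, Multiset.count_cons,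
    Multiset.count_eq_zero.2 (fun h => by have := hR 1 h; omega),
    if_neg (by omega), Multiset.count_replicate_self]
  omega

lemma shape2_filter_even (hR : ∀ x ∈ R, x % 2 = 0) (hw : w % 2 = 0 ∧ 4 ≤ w) :
    (R + (w - 1) ::ₘ Multiset.replicate m 1).filter (fun x => x % 2 = 0) = R := by
  rw [Multiset.filter_add, Multiset.filter_cons,
    Multiset.filter_eq_self.2 hR,
    Multiset.filter_eq_nil.2 (fun a ha => by
      rw [Multiset.eq_of_mem_replicate ha]; omega),
    if_neg (by omega), add_zero]
  simp

end shape2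

end StmtAux

namespace StmtAux
open Multiset

lemma sub_one_sum : ∀ (S : Multiset ℕ), (∀ x ∈ S, 1 ≤ x) →
    (S.map (· - 1)).sum + S.card = S.sum := by
  intro S
  induction S using Multiset.induction with
  | empty => simp
  | cons a t ih =>
    intro h
    rw [Multiset.map_cons, Multiset.sum_cons, Multiset.sum_cons, Multiset.card_cons]
    have h1 := h a (Multiset.mem_cons_self a t)
    have h2 := ih (fun x hx => h x (Multiset.mem_cons_of_mem hx))
    omega

lemma dec_sum {P : Multiset ℕ} (hpos : ∀ x ∈ P, 0 < x) :
    (P.map dec).sum + (O3 P).card = P.sum := by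
  have hP := congrArg Multiset.sum (decomp hpos)
  rw [Multiset.sum_add, Multiset.sum_add] at hP
  rw [map_dec_eq hpos, Multiset.sum_add, Multiset.sum_add]
  have hs := sub_one_sum (O3 P) (fun x hx => by have := (mem_O3 hx).1; omega)
  omega

lemma all_even_of_not_exists_odd {P : Multiset ℕ} (c1 : ¬ ∃ x ∈ P, x % 2 = 1) :
    ∀ x ∈ P, x % 2 = 0 := by
  push_neg at c1
  intro x hx
  have := c1 x hx
  omega

/-- The injection, as a map on partitions. -/
def g (n : ℕ) (hn : 6 < n) (p : n.Partition) : n.Partition where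
  parts := gp n p.parts
  parts_pos := by
    intro i hi
    unfold gp at hi
    split_ifs at hi with c1 c2
    · rcases Multiset.mem_add.1 hi with h | h
      · obtain ⟨x, hx, rfl⟩ := Multiset.mem_map.1 h
        have := p.parts_pos hx
        unfold dec
        split_ifs with h' <;> unfold odd3 at h' <;> omega
      · rw [Multiset.eq_of_mem_replicate h]; omega
    · rcases Multiset.mem_cons.1 hi with rfl | h
      · omega
      · rw [Multiset.mem_singleton.1 h]; omega
    · rcases Multiset.mem_add.1 hi with h | h
      · have := (mem_Big (Multiset.mem_of_mem_erase h)).1; omega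
      · rcases Multiset.mem_cons.1 h with rfl | h
        · have h4 := (W_spec c2).1
          have := (mem_Big h4).1
          omega
        · rw [Multiset.eq_of_mem_replicate h]; omega
  parts_sum := by
    have hsum := p.parts_sum
    have hpos : ∀ x ∈ p.parts, 0 < x := fun x hx => p.parts_pos hx
    unfold gp
    split_ifs with c1 c2
    · rw [Multiset.sum_add, Multiset.sum_replicate, smul_eq_mul, mul_one]
      have := dec_sum hpos
      omega
    · show (n - 3) + (3 + 0) = n
      omega
    · have hall := all_even_of_not_exists_odd c1
      have hW := W_spec c2
      have h4 := (mem_Big hW.1).1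
      have hbigsum : (Big p.parts).sum = W p.parts + ((Big p.parts).erase (W p.parts)).sum := by
        conv_lhs => rw [← Multiset.cons_erase hW.1]
        rw [Multiset.sum_cons]
      have hdec : p.parts.sum = (Big p.parts).sum + 2 * p.parts.count 2 := by
        conv_lhs => rw [decomp2 hall hpos]
        rw [Multiset.sum_add, Multiset.sum_replicate, smul_eq_mul]
        ring
      rw [Multiset.sum_add, Multiset.sum_cons, Multiset.sum_replicate, smul_eq_mul, mul_one]
      omega

lemma mem_map_dec {P : Multiset ℕ} {a : ℕ} (hpos : ∀ x ∈ P, 0 < x)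
    (h : a ∈ P.map dec) : (a % 2 = 1 → a = 1) ∧ 0 < a := by
  obtain ⟨x, hx, rfl⟩ := Multiset.mem_map.1 h
  have := hpos x hx
  unfold dec
  split_ifs with h' <;> unfold odd3 at h' <;> omega

lemma g_mem {n : ℕ} (hn : 6 < n) (p : n.Partition) :
    (∃ a ∈ (g n hn p).parts, Odd a) ∧
      ∀ a ∈ (g n hn p).parts, ∀ b ∈ (g n hn p).parts, Odd a → Even b → a < b := by
  have hpos : ∀ x ∈ p.parts, 0 < x := fun x hx => p.parts_pos hx
  show (∃ a ∈ gp n p.parts, Odd a) ∧ ∀ a ∈ gp n p.parts, ∀ b ∈ gp n p.parts,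
    Odd a → Even b → a < b
  unfold gp
  split_ifs with c1 c2
  · constructor
    · obtain ⟨x, hx, hxodd⟩ := c1
      by_cases h3 : 3 ≤ x
      · refine ⟨1, ?_, odd_one⟩
        apply Multiset.mem_add.2 (Or.inr _)
        rw [Multiset.mem_replicate]
        refine ⟨?_, rfl⟩
        have hmem : x ∈ O3 p.parts := Multiset.mem_filter.2 ⟨hx, hxodd, h3⟩
        intro hc
        rw [Multiset.card_eq_zero] at hc
        rw [hc] at hmem
        simp at hmem
      · have hx1 : x = 1 := by have := hpos x hx; omega
        refine ⟨1, ?_, odd_one⟩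
        apply Multiset.mem_add.2 (Or.inl _)
        apply Multiset.mem_map.2 ⟨x, hx, ?_⟩
        rw [hx1]; rfl
    · intro a ha b hb hao hbe
      rw [Nat.odd_iff] at hao
      rw [Nat.even_iff] at hbe
      have ha1 : a = 1 := by
        rcases Multiset.mem_add.1 ha with h | h
        · exact (mem_map_dec hpos h).1 hao
        · exact Multiset.eq_of_mem_replicate h
      have hb2 : 2 ≤ b := by
        rcases Multiset.mem_add.1 hb with h | h
        · have := mem_map_dec hpos h; omega
        · have := Multiset.eq_of_mem_replicate h; omega
      omega
  · have hall := all_even_of_not_exists_odd c1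
    have hne : n % 2 = 0 := by
      have := even_sum hall
      rw [p.parts_sum] at this
      exact this
    constructor
    · refine ⟨3, ?_, by decide⟩
      apply Multiset.mem_cons.2 (Or.inr _)
      simp
    · intro a ha b hb hao hbe
      rw [Nat.even_iff] at hbe
      exfalso
      rcases Multiset.mem_cons.1 hb with rfl | h
      · omega
      · rw [Multiset.mem_singleton.1 h] at hbe
        omega
  · have hall := all_even_of_not_exists_odd c1
    have hW := W_spec c2
    have h4 := (mem_Big hW.1).1
    constructor
    · refine ⟨1, ?_, odd_one⟩
      apply Multiset.mem_add.2 (Or.inr _)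
      apply Multiset.mem_cons.2 (Or.inr _)
      rw [Multiset.mem_replicate]
      exact ⟨by omega, rfl⟩
    · intro a ha b hb hao hbe
      rw [Nat.odd_iff] at hao
      rw [Nat.even_iff] at hbe
      have hwe : W p.parts % 2 = 0 := hall _ (mem_Big hW.1).2
      have hb' : b ∈ (Big p.parts).erase (W p.parts) := by
        rcases Multiset.mem_add.1 hb with h | h
        · exact h
        · exfalso
          rcases Multiset.mem_cons.1 h with rfl | h
          · omega
          · have := Multiset.eq_of_mem_replicate h; omega
      have hbW : W p.parts ≤ b := hW.2 b (Multiset.mem_of_mem_erase hb')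
      have ha' : a = W p.parts - 1 ∨ a = 1 := by
        rcases Multiset.mem_add.1 ha with h | h
        · exfalso
          have := hall _ (mem_Big (Multiset.mem_of_mem_erase h)).2
          omega
        · rcases Multiset.mem_cons.1 h with rfl | h
          · exact Or.inl rfl
          · exact Or.inr (Multiset.eq_of_mem_replicate h)
      rcases ha' with rfl | rfl <;> omega

end StmtAux

namespace StmtAux
open Multiset

lemma gp_case2a {n : ℕ} {P : Multiset ℕ} (c1 : ¬ ∃ x ∈ P, x % 2 = 1)
    (hb : Big P = 0) : gp n P = {n - 3, 3} := by
  unfold gp; rw [if_neg c1, if_pos hb]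

lemma gp_case2b {n : ℕ} {P : Multiset ℕ} (c1 : ¬ ∃ x ∈ P, x % 2 = 1)
    (hb : ¬ Big P = 0) : gp n P =
      (Big P).erase (W P) + (W P - 1) ::ₘ Multiset.replicate (2 * P.count 2 + 1) 1 := by
  unfold gp; rw [if_neg c1, if_neg hb]

lemma hG_even {P : Multiset ℕ} : ∀ x ∈ (O3 P).map (· - 1), x % 2 = 0 := by
  intro x hx
  obtain ⟨o, ho, rfl⟩ := Multiset.mem_map.1 hx
  have := (mem_O3 ho).1
  omega

lemma hE_even {P : Multiset ℕ} : ∀ x ∈ Ev P, x % 2 = 0 := fun x hx => (mem_Ev hx).1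

lemma countP_gp_case1 {n : ℕ} {P : Multiset ℕ} (c1 : ∃ x ∈ P, x % 2 = 1)
    (hpos : ∀ x ∈ P, 0 < x) : (gp n P).countP odd3 = 0 := by
  rw [gp_case1 c1 hpos]
  exact shape_countP_odd3 hE_even hG_even

lemma W_even {P : Multiset ℕ} (c1 : ¬ ∃ x ∈ P, x % 2 = 1) (hb : ¬ Big P = 0) :
    W P % 2 = 0 ∧ 4 ≤ W P := by
  have hW := W_spec hb
  exact ⟨all_even_of_not_exists_odd c1 _ (mem_Big hW.1).2, (mem_Big hW.1).1⟩

lemma erase_even {P : Multiset ℕ} (c1 : ¬ ∃ x ∈ P, x % 2 = 1) :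
    ∀ x ∈ (Big P).erase (W P), x % 2 = 0 :=
  fun x hx => all_even_of_not_exists_odd c1 _ (mem_Big (Multiset.mem_of_mem_erase hx)).2

lemma countP_gp_case2b {n : ℕ} {P : Multiset ℕ} (c1 : ¬ ∃ x ∈ P, x % 2 = 1)
    (hb : ¬ Big P = 0) : (gp n P).countP odd3 = 1 := by
  rw [gp_case2b c1 hb]
  exact shape2_countP_odd3 (erase_even c1) (W_even c1 hb)

lemma countP_gp_case2a {n : ℕ} {P : Multiset ℕ} (c1 : ¬ ∃ x ∈ P, x % 2 = 1)
    (hb : Big P = 0) (hne : n % 2 = 0) (hn : 6 < n) : (gp n P).countP odd3 = 2 := by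
  rw [gp_case2a c1 hb]
  show Multiset.countP odd3 ((n-3) ::ₘ 3 ::ₘ 0) = 2
  rw [Multiset.countP_cons, Multiset.countP_cons, Multiset.countP_zero,
    if_pos (by unfold odd3; omega : odd3 (n - 3)), if_pos (by unfold odd3; omega : odd3 3)]

lemma n_even {n : ℕ} {P : Multiset ℕ} (c1 : ¬ ∃ x ∈ P, x % 2 = 1)
    (hsum : P.sum = n) : n % 2 = 0 := by
  have := even_sum (all_even_of_not_exists_odd c1)
  rwa [hsum] at this

lemma countP_gp_pos {n : ℕ} {P : Multiset ℕ} (c1 : ¬ ∃ x ∈ P, x % 2 = 1)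
    (hsum : P.sum = n) (hn : 6 < n) : 0 < (gp n P).countP odd3 := by
  by_cases hb : Big P = 0
  · rw [countP_gp_case2a c1 hb (n_even c1 hsum) hn]; omega
  · rw [countP_gp_case2b c1 hb]; omega

lemma O3_recover {P P' : Multiset ℕ}
    (h : (O3 P).map (· - 1) = (O3 P').map (· - 1)) : O3 P = O3 P' := by
  have h2 := congrArg (Multiset.map (· + 1)) h
  rw [Multiset.map_map, Multiset.map_map] at h2
  have e1 : ∀ (Q : Multiset ℕ), (O3 Q).map ((· + 1) ∘ (· - 1)) = O3 Q := by
    intro Q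
    rw [show (O3 Q).map ((· + 1) ∘ (· - 1)) = (O3 Q).map id from
      Multiset.map_congr rfl fun x hx => by
        have := (mem_O3 hx).1
        show x - 1 + 1 = id x
        simp only [id]
        omega]
    simp
  rwa [e1, e1] at h2

lemma gp_inj {n : ℕ} (hn : 6 < n) (P P' : Multiset ℕ)
    (hpos : ∀ x ∈ P, 0 < x) (hpos' : ∀ x ∈ P', 0 < x)
    (hsum : P.sum = n) (hsum' : P'.sum = n)
    (hA : ∀ a ∈ P, ∀ b ∈ P, a % 2 = 0 → b % 2 = 1 → a < b)
    (hA' : ∀ a ∈ P', ∀ b ∈ P', a % 2 = 0 → b % 2 = 1 → a < b)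
    (heq : gp n P = gp n P') : P = P' := by
  have hcntP := congrArg (Multiset.countP odd3) heq
  by_cases c1 : ∃ x ∈ P, x % 2 = 1 <;> by_cases c1' : ∃ x ∈ P', x % 2 = 1
  · -- both case 1
    rw [gp_case1 c1 hpos, gp_case1 c1' hpos'] at heq
    set E := Ev P with hE
    set G := (O3 P).map (· - 1) with hG
    set E' := Ev P' with hE'
    set G' := (O3 P').map (· - 1) with hG'
    set k := P.count 1 with hk
    set c := (O3 P).card with hc
    set k' := P'.count 1 with hk'
    set c' := (O3 P').card with hc'
    have hF : E + G = E' + G' := by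
      have h := congrArg (Multiset.filter (fun x => x % 2 = 0)) heq
      rwa [shape_filter_even hE_even hG_even, shape_filter_even hE_even hG_even] at h
    have hm : k + c = k' + c' := by
      have h := congrArg (Multiset.count 1) heq
      rwa [shape_count_one hE_even hG_even, shape_count_one hE_even hG_even] at h
    have hcard : Multiset.card G = c := by rw [hG, Multiset.card_map]
    have hcard' : Multiset.card G' = c' := by rw [hG', Multiset.card_map]
    have hcardF := congrArg Multiset.card hF
    rw [Multiset.card_add, Multiset.card_add, hcard, hcard'] at hcardF
    -- if there is a part 1, there are no even parts
    have hEzero : 1 ≤ k → E = 0 := by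
      intro hk1
      have h1P : (1 : ℕ) ∈ P := by rw [← Multiset.count_pos, ← hk]; omega
      apply Multiset.eq_zero_of_forall_notMem
      intro e he
      have hee := mem_Ev he
      have := hA e hee.2 1 h1P hee.1 rfl
      have := hpos e hee.2
      omega
    have hEzero' : 1 ≤ k' → E' = 0 := by
      intro hk1
      have h1P : (1 : ℕ) ∈ P' := by rw [← Multiset.count_pos, ← hk']; omega
      apply Multiset.eq_zero_of_forall_notMem
      intro e he
      have hee := mem_Ev he
      have := hA' e hee.2 1 h1P hee.1 rfl
      have := hpos' e hee.2
      omega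
    have key : E = E' ∧ G = G' ∧ k = k' := by
      rcases Nat.eq_zero_or_pos k with hk0 | hk1 <;>
        rcases Nat.eq_zero_or_pos k' with hk0' | hk1'
      · -- both no ones
        have hcc : c = c' := by omega
        have hGG : G = G' := by
          apply split_unique c E G E' G' hcard (by omega) hF
          · intro e he g hg
            obtain ⟨o, ho, rfl⟩ := Multiset.mem_map.1 hg
            have ho3 := mem_O3 ho
            have hee := mem_Ev he
            have := hA e hee.2 o ho3.2 hee.1 ho3.1.1
            omega
          · intro e he g hg
            obtain ⟨o, ho, rfl⟩ := Multiset.mem_map.1 hg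
            have ho3 := mem_O3 ho
            have hee := mem_Ev he
            have := hA' e hee.2 o ho3.2 hee.1 ho3.1.1
            omega
        refine ⟨?_, hGG, by omega⟩
        rw [hGG] at hF
        exact add_right_cancel hF
      · -- k = 0, k' ≥ 1 : impossible
        exfalso
        rw [hEzero' hk1'] at hcardF
        simp only [Multiset.card_zero] at hcardF
        omega
      · exfalso
        rw [hEzero hk1] at hcardF
        simp only [Multiset.card_zero] at hcardF
        omega
      · -- both have ones
        have he0 := hEzero hk1
        have he0' := hEzero' hk1'
        rw [he0, he0', zero_add, zero_add] at hF
        have hcc : c = c' := by rw [← hcard, ← hcard', hF]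
        exact ⟨by rw [he0, he0'], hF, by omega⟩
    have hO3 : O3 P = O3 P' := O3_recover (by rw [← hG, ← hG', key.2.1])
    calc P = E + O3 P + Multiset.replicate k 1 := decomp hpos
    _ = E' + O3 P' + Multiset.replicate k' 1 := by rw [key.1, hO3, key.2.2]
    _ = P' := (decomp hpos').symm
  · -- case 1 vs case 2 : impossible
    exfalso
    rw [countP_gp_case1 c1 hpos] at hcntP
    have := countP_gp_pos c1' hsum' hn
    omega
  · exfalso
    rw [countP_gp_case1 c1' hpos'] at hcntP
    have := countP_gp_pos c1 hsum hn
    omega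
  · -- both case 2
    have hall := all_even_of_not_exists_odd c1
    have hall' := all_even_of_not_exists_odd c1'
    by_cases hb : Big P = 0 <;> by_cases hb' : Big P' = 0
    · -- all parts equal 2
      have h2 : ∀ x ∈ P, x = 2 := by
        intro x hx
        have h4 : ¬ 4 ≤ x := by
          intro h4
          have : x ∈ Big P := Multiset.mem_filter.2 ⟨hx, h4⟩
          rw [hb] at this
          simp at this
        have := hall x hx
        have := hpos x hx
        omega
      have h2' : ∀ x ∈ P', x = 2 := by
        intro x hx
        have h4 : ¬ 4 ≤ x := by
          intro h4
          have : x ∈ Big P' := Multiset.mem_filter.2 ⟨hx, h4⟩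
          rw [hb'] at this
          simp at this
        have := hall' x hx
        have := hpos' x hx
        omega
      have hrep : P = Multiset.replicate (Multiset.card P) 2 :=
        Multiset.eq_replicate_card.2 h2
      have hrep' : P' = Multiset.replicate (Multiset.card P') 2 :=
        Multiset.eq_replicate_card.2 h2'
      have hs : 2 * Multiset.card P = n := by
        rw [← hsum]
        conv_rhs => rw [hrep]
        rw [Multiset.sum_replicate, smul_eq_mul]
        ring
      have hs' : 2 * Multiset.card P' = n := by
        rw [← hsum']
        conv_rhs => rw [hrep']
        rw [Multiset.sum_replicate, smul_eq_mul]
        ring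
      rw [hrep, hrep']
      congr 1
      omega
    · exfalso
      rw [countP_gp_case2a c1 hb (n_even c1 hsum) hn,
        countP_gp_case2b c1' hb'] at hcntP
      omega
    · exfalso
      rw [countP_gp_case2b c1 hb,
        countP_gp_case2a c1' hb' (n_even c1' hsum') hn] at hcntP
      omega
    · -- both case 2b
      rw [gp_case2b c1 hb, gp_case2b c1' hb'] at heq
      have hWe := W_even c1 hb
      have hWe' := W_even c1' hb'
      have hWW : W P = W P' := by
        have h := congrArg (Multiset.filter odd3) heq
        rw [shape2_filter_odd3 (erase_even c1) hWe,
          shape2_filter_odd3 (erase_even c1') hWe'] at h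
        have := Multiset.singleton_inj.1 h
        omega
      have hcc : P.count 2 = P'.count 2 := by
        have h := congrArg (Multiset.count 1) heq
        rw [shape2_count_one (fun x hx => (mem_Big (Multiset.mem_of_mem_erase hx)).1)
            hWe.2,
          shape2_count_one (fun x hx => (mem_Big (Multiset.mem_of_mem_erase hx)).1)
            hWe'.2] at h
        omega
      have hRR : (Big P).erase (W P) = (Big P').erase (W P') := by
        have h := congrArg (Multiset.filter (fun x => x % 2 = 0)) heq
        rwa [shape2_filter_even (erase_even c1) hWe,
          shape2_filter_even (erase_even c1') hWe'] at h
      have hBig : Big P = Big P' := by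
        calc Big P = W P ::ₘ (Big P).erase (W P) :=
              (Multiset.cons_erase (W_spec hb).1).symm
        _ = W P' ::ₘ (Big P').erase (W P') := by rw [hRR, hWW]
        _ = Big P' := Multiset.cons_erase (W_spec hb').1
      calc P = Big P + Multiset.replicate (P.count 2) 2 := decomp2 hall hpos
      _ = Big P' + Multiset.replicate (P'.count 2) 2 := by rw [hBig, hcc]
      _ = P' := (decomp2 hall' hpos').symm

end StmtAux

namespace StmtAux
open Multiset

lemma spare_odd {n : ℕ} {P : Multiset ℕ} (hpos : ∀ x ∈ P, 0 < x)
    (hsum : P.sum = n) (hn : 6 < n) (ho : n % 2 = 1) : gp n P ≠ {n} := by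
  intro h
  by_cases c1 : ∃ x ∈ P, x % 2 = 1
  · have hcnt := congrArg (Multiset.countP odd3) h
    rw [countP_gp_case1 c1 hpos] at hcnt
    have : Multiset.countP odd3 ({n} : Multiset ℕ) = 1 := by
      show Multiset.countP odd3 (n ::ₘ 0) = 1
      rw [Multiset.countP_cons, Multiset.countP_zero,
        if_pos (by unfold odd3; omega : odd3 n)]
    omega
  · have := n_even c1 hsum
    omega

lemma spare_even {n : ℕ} {P : Multiset ℕ} (hpos : ∀ x ∈ P, 0 < x)
    (hsum : P.sum = n) (hn : 6 < n) (he : n % 2 = 0) :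
    gp n P ≠ {n - 5, 3, 1, 1} := by
  intro h
  have hcnt := congrArg (Multiset.countP odd3) h
  have hq : Multiset.countP odd3 ({n - 5, 3, 1, 1} : Multiset ℕ) = 2 := by
    show Multiset.countP odd3 ((n-5) ::ₘ 3 ::ₘ 1 ::ₘ 1 ::ₘ 0) = 2
    rw [Multiset.countP_cons, Multiset.countP_cons, Multiset.countP_cons,
      Multiset.countP_cons, Multiset.countP_zero,
      if_pos (by unfold odd3; omega : odd3 (n - 5)),
      if_pos (by unfold odd3; omega : odd3 3),
      if_neg (by unfold odd3; omega : ¬ odd3 1)]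
  by_cases c1 : ∃ x ∈ P, x % 2 = 1
  · rw [countP_gp_case1 c1 hpos, hq] at hcnt
    omega
  · by_cases hb : Big P = 0
    · rw [gp_case2a c1 hb] at h
      have hcard := congrArg Multiset.card h
      simp only [Multiset.insert_eq_cons, Multiset.card_cons, Multiset.card_singleton] at hcard
      omega
    · rw [countP_gp_case2b c1 hb, hq] at hcnt
      omega

end StmtAux


theorem stmt_6 : ∀ n : ℕ, 6 < n → poueu n > peuou n := by
  intro n hn
  unfold peuou poueu
  set S : Set (n.Partition) :=
    {p : n.Partition | ∀ a ∈ p.parts, ∀ b ∈ p.parts, Even a → Odd b → a < b} with hS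
  set T : Set (n.Partition) :=
    {p : n.Partition | (∃ a ∈ p.parts, Odd a) ∧
      ∀ a ∈ p.parts, ∀ b ∈ p.parts, Odd a → Even b → a < b} with hT
  have hinj : Set.InjOn (StmtAux.g n hn) S := by
    intro p hp q hq hpq
    simp only [hS, Set.mem_setOf_eq] at hp hq
    have h : StmtAux.gp n p.parts = StmtAux.gp n q.parts :=
      congrArg Nat.Partition.parts hpq
    apply Nat.Partition.ext
    apply StmtAux.gp_inj hn _ _ (fun x hx => p.parts_pos hx)
      (fun x hx => q.parts_pos hx) p.parts_sum q.parts_sum ?_ ?_ h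
    · intro a ha b hb hae hbo
      exact hp a ha b hb (Nat.even_iff.2 hae) (Nat.odd_iff.2 hbo)
    · intro a ha b hb hae hbo
      exact hq a ha b hb (Nat.even_iff.2 hae) (Nat.odd_iff.2 hbo)
  have himg : StmtAux.g n hn '' S ⊆ T := by
    rintro q ⟨p, _, rfl⟩
    simp only [hT, Set.mem_setOf_eq]
    exact StmtAux.g_mem hn p
  -- the spare element
  obtain ⟨q, hqT, hqim⟩ : ∃ q : n.Partition, q ∈ T ∧ q ∉ StmtAux.g n hn '' S := by
    rcases Nat.even_or_odd n with he | ho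
    · rw [Nat.even_iff] at he
      refine ⟨⟨{n - 5, 3, 1, 1}, ?_, ?_⟩, ?_, ?_⟩
      · intro i hi
        simp only [Multiset.insert_eq_cons, Multiset.mem_cons,
          Multiset.mem_singleton] at hi
        rcases hi with rfl | rfl | rfl | rfl <;> omega
      · show n - 5 + (3 + (1 + (1 + 0))) = n
        omega
      · simp only [hT, Set.mem_setOf_eq]
        constructor
        · refine ⟨3, ?_, by decide⟩
          simp
        · intro a ha b hb hao hbe
          rw [Nat.even_iff] at hbe
          exfalso
          simp only [Multiset.insert_eq_cons, Multiset.mem_cons,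
            Multiset.mem_singleton] at hb
          rcases hb with rfl | rfl | rfl | rfl <;> omega
      · rintro ⟨p, hp, hgp⟩
        have h : StmtAux.gp n p.parts = {n - 5, 3, 1, 1} :=
          congrArg Nat.Partition.parts hgp
        exact StmtAux.spare_even (fun x hx => p.parts_pos hx) p.parts_sum hn he h
    · rw [Nat.odd_iff] at ho
      refine ⟨⟨{n}, ?_, ?_⟩, ?_, ?_⟩
      · intro i hi
        rw [Multiset.mem_singleton] at hi
        omega
      · simp
      · simp only [hT, Set.mem_setOf_eq]
        constructor
        · exact ⟨n, by simp, Nat.odd_iff.2 ho⟩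
        · intro a ha b hb hao hbe
          rw [Nat.even_iff] at hbe
          rw [Multiset.mem_singleton] at hb
          omega
      · rintro ⟨p, hp, hgp⟩
        have h : StmtAux.gp n p.parts = {n} :=
          congrArg Nat.Partition.parts hgp
        exact StmtAux.spare_odd (fun x hx => p.parts_pos hx) p.parts_sum hn ho h
  have h1 : S.ncard = (StmtAux.g n hn '' S).ncard :=
    (Set.ncard_image_of_injOn hinj).symm
  have h2 : (StmtAux.g n hn '' S) ⊂ T := ⟨himg, fun hsub => hqim (hsub hqT)⟩
  calc S.ncard = (StmtAux.g n hn '' S).ncard := h1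
  _ < T.ncard := Set.ncard_lt_ncard h2 (Set.toFinite T)
end

section
/- For every integer n > 3, the number of partitions of n with no part equal to 1, having at least one odd part, in which every odd part is less than every even part, is strictly less than the number of partitions of n with no part equal to 1 in which every even part is less than every odd part; that is, q_ou^eu(n) < q_eu^ou(n) for all n > 3. -/
open Multiset

/-- sum of (+1)-mapped list -/
lemma sum_map_add_one_s7 (l : List ℕ) : (l.map (· + 1)).sum = l.sum + l.length := by
  induction l with
  | nil => simp
  | cons a t ih => simp [ih]; omega

lemma sum_map_sub_one_s7 (l : List ℕ) (h : ∀ x ∈ l, 1 ≤ x) :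
    (l.map (· - 1)).sum + l.length = l.sum := by
  induction l with
  | nil => simp
  | cons a t ih =>
    have ha := h a (by simp)
    have ht := ih (fun x hx => h x (by simp [hx]))
    simp only [List.map_cons, List.sum_cons, List.length_cons]
    omega

lemma multiset_exists_min (s : Multiset ℕ) (h : s ≠ 0) : ∃ t ∈ s, ∀ y ∈ s, t ≤ y := by
  induction s using Multiset.induction_on with
  | empty => exact absurd rfl h
  | cons a s ih =>
    rcases eq_or_ne s 0 with rfl | hs
    · exact ⟨a, by simp, by simp⟩
    · obtain ⟨t, ht, hmin⟩ := ih hs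
      refine ⟨min a t, ?_, ?_⟩
      · rcases le_total a t with h' | h'
        · rw [min_eq_left h']; simp
        · rw [min_eq_right h']; exact Multiset.mem_cons_of_mem ht
      · intro y hy
        rcases Multiset.mem_cons.1 hy with rfl | hy
        · exact min_le_left _ _
        · exact le_trans (min_le_right _ _) (hmin y hy)

lemma split_le {a b a' b' : Multiset ℕ}
    (hab : a + b = a' + b')
    (h1 : ∀ x ∈ a, ∀ y ∈ b, x < y) (h2 : ∀ x ∈ a', ∀ y ∈ b', x < y)
    {t t' : ℕ} (ht : t ∈ b) (htmin : ∀ y ∈ b, t ≤ y)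
    (ht' : t' ∈ b') (htmin' : ∀ y ∈ b', t' ≤ y) (htt : t ≤ t') : a ≤ a' := by
  have hfa : (a + b).filter (· < t) = a := by
    rw [Multiset.filter_add]
    rw [Multiset.filter_eq_self.2 (fun x hx => h1 x hx t ht),
        Multiset.filter_eq_nil.2 (fun y hy => not_lt.2 (htmin y hy)), add_zero]
  have hfa' : (a' + b').filter (· < t') = a' := by
    rw [Multiset.filter_add]
    rw [Multiset.filter_eq_self.2 (fun x hx => h2 x hx t' ht'),
        Multiset.filter_eq_nil.2 (fun y hy => not_lt.2 (htmin' y hy)), add_zero]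
  calc a = (a' + b').filter (· < t) := by rw [← hab, hfa]
    _ ≤ (a' + b').filter (· < t') :=
        Multiset.monotone_filter_right _ (fun x hx => lt_of_lt_of_le hx htt)
    _ = a' := hfa'

lemma split_unique {a b a' b' : Multiset ℕ}
    (hab : a + b = a' + b')
    (h1 : ∀ x ∈ a, ∀ y ∈ b, x < y) (h2 : ∀ x ∈ a', ∀ y ∈ b', x < y)
    (hcard : Multiset.card b = Multiset.card b') : a = a' ∧ b = b' := by
  have hcards : Multiset.card a = Multiset.card a' := by
    have := congrArg Multiset.card hab
    simp only [Multiset.card_add] at this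
    omega
  rcases eq_or_ne b 0 with rfl | hb
  · have hb' : b' = 0 := by
      rw [← Multiset.card_eq_zero]; rw [← hcard]; simp
    subst hb'
    simp only [add_zero] at hab
    exact ⟨hab, rfl⟩
  · have hb' : b' ≠ 0 := by
      intro h; rw [h] at hcard; simp at hcard
      exact hb hcard
    obtain ⟨t, ht, htmin⟩ := multiset_exists_min b hb
    obtain ⟨t', ht', htmin'⟩ := multiset_exists_min b' hb'
    have haa : a = a' := by
      rcases le_total t t' with h | h
      · exact Multiset.eq_of_le_of_card_le
          (split_le hab h1 h2 ht htmin ht' htmin' h) (le_of_eq hcards.symm)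
      · exact (Multiset.eq_of_le_of_card_le
          (split_le hab.symm h2 h1 ht' htmin' ht htmin h) (le_of_eq hcards)).symm
    refine ⟨haa, ?_⟩
    rw [haa] at hab
    exact add_left_cancel hab
open Multiset

def oddL (s : Multiset ℕ) : List ℕ := (s.filter (Odd ·)).sort (· ≤ ·)
def evenL (s : Multiset ℕ) : List ℕ := (s.filter (fun x => ¬ Odd x)).sort (· ≤ ·)

lemma mem_oddL {s : Multiset ℕ} {x : ℕ} : x ∈ oddL s ↔ x ∈ s ∧ Odd x := by
  simp [oddL]
lemma mem_evenL {s : Multiset ℕ} {x : ℕ} : x ∈ evenL s ↔ x ∈ s ∧ Even x := by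
  simp [evenL, Nat.not_odd_iff_even]
lemma coe_oddL (s : Multiset ℕ) : (↑(oddL s) : Multiset ℕ) = s.filter (Odd ·) :=
  Multiset.sort_eq _ _
lemma coe_evenL (s : Multiset ℕ) : (↑(evenL s) : Multiset ℕ) = s.filter (fun x => ¬ Odd x) :=
  Multiset.sort_eq _ _
lemma oddL_sorted (s : Multiset ℕ) : List.Pairwise (· ≤ ·) (oddL s) :=
  Multiset.pairwise_sort _ _
lemma evenL_sorted (s : Multiset ℕ) : List.Pairwise (· ≤ ·) (evenL s) :=
  Multiset.pairwise_sort _ _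
lemma odd_even_split (s : Multiset ℕ) :
    (↑(oddL s) : Multiset ℕ) + ↑(evenL s) = s := by
  rw [coe_oddL, coe_evenL]; exact Multiset.filter_add_not _ s

/-- the injection, at the multiset level -/
def Fm (s : Multiset ℕ) : Multiset ℕ :=
  if (evenL s).length = 0 then s
  else if (evenL s).length ≤ (oddL s).length then
    (↑(((oddL s).take (evenL s).length).map (· - 1)) : Multiset ℕ)
      + ↑((oddL s).drop (evenL s).length) + ↑((evenL s).map (· + 1))
  else
    (↑((oddL s).map (· - 1)) : Multiset ℕ)
      + ↑((evenL s).take ((evenL s).length - (oddL s).length))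
      + ↑(((evenL s).drop ((evenL s).length - (oddL s).length)).map (· + 1))

def GoodA (s : Multiset ℕ) : Prop :=
  (∀ x ∈ s, 2 ≤ x) ∧ (∃ a ∈ s, Odd a) ∧ ∀ a ∈ s, Odd a → ∀ b ∈ s, Even b → a < b

lemma GoodA.odd_three {s : Multiset ℕ} (h : GoodA s) {x : ℕ} (hx : x ∈ s) (ho : Odd x) :
    3 ≤ x := by
  have h2 := h.1 x hx
  rcases ho with ⟨c, rfl⟩; omega

lemma GoodA.even_four {s : Multiset ℕ} (h : GoodA s) {x : ℕ} (hx : x ∈ s) (he : Even x) :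
    4 ≤ x := by
  obtain ⟨a, ha, hao⟩ := h.2.1
  have hlt := h.2.2 a ha hao x hx he
  have h3 := h.odd_three ha hao
  rcases he with ⟨c, rfl⟩; omega

section cases
variable {s : Multiset ℕ} (h : GoodA s)

lemma mem_take_oddL {x : ℕ} {t : ℕ} (hx : x ∈ (oddL s).take t) : x ∈ s ∧ Odd x :=
  mem_oddL.1 (List.take_subset _ _ hx)
lemma mem_drop_oddL {x : ℕ} {t : ℕ} (hx : x ∈ (oddL s).drop t) : x ∈ s ∧ Odd x :=
  mem_oddL.1 (List.drop_subset _ _ hx)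
lemma mem_take_evenL {x : ℕ} {t : ℕ} (hx : x ∈ (evenL s).take t) : x ∈ s ∧ Even x :=
  mem_evenL.1 (List.take_subset _ _ hx)
lemma mem_drop_evenL {x : ℕ} {t : ℕ} (hx : x ∈ (evenL s).drop t) : x ∈ s ∧ Even x :=
  mem_evenL.1 (List.drop_subset _ _ hx)

lemma Fm_eq_A (hmk : (evenL s).length ≤ (oddL s).length) (hm : (evenL s).length ≠ 0) :
    Fm s = (↑(((oddL s).take (evenL s).length).map (· - 1)) : Multiset ℕ)
      + ↑((oddL s).drop (evenL s).length) + ↑((evenL s).map (· + 1)) := by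
  rw [Fm, if_neg hm, if_pos hmk]

lemma Fm_eq_B (hmk : ¬ (evenL s).length ≤ (oddL s).length) :
    Fm s = (↑((oddL s).map (· - 1)) : Multiset ℕ)
      + ↑((evenL s).take ((evenL s).length - (oddL s).length))
      + ↑(((evenL s).drop ((evenL s).length - (oddL s).length)).map (· + 1)) := by
  have hm : (evenL s).length ≠ 0 := by omega
  rw [Fm, if_neg hm, if_neg hmk]

-- parity of blocks
lemma block_take_odd_sub_even {t x : ℕ}
    (hx : x ∈ ((oddL s).take t).map (· - 1)) : Even x := by
  obtain ⟨y, hy, rfl⟩ := List.mem_map.1 hx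
  exact Nat.Odd.sub_odd (mem_take_oddL hy).2 odd_one
lemma block_odd_map_odd_sub_even {x : ℕ}
    (hx : x ∈ (oddL s).map (· - 1)) : Even x := by
  obtain ⟨y, hy, rfl⟩ := List.mem_map.1 hx
  exact Nat.Odd.sub_odd (mem_oddL.1 hy).2 odd_one
lemma block_even_add_odd {x : ℕ} {l : List ℕ} (hl : ∀ y ∈ l, Even y)
    (hx : x ∈ l.map (· + 1)) : Odd x := by
  obtain ⟨y, hy, rfl⟩ := List.mem_map.1 hx
  exact (hl y hy).add_one

lemma Fm_filters_A (hmk : (evenL s).length ≤ (oddL s).length) (hm : (evenL s).length ≠ 0) :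
    (Fm s).filter (fun x => ¬ Odd x) = ↑(((oddL s).take (evenL s).length).map (· - 1)) ∧
    (Fm s).filter (Odd ·) = ↑((oddL s).drop (evenL s).length) + ↑((evenL s).map (· + 1)) := by
  rw [Fm_eq_A hmk hm]
  rw [Multiset.filter_add, Multiset.filter_add, Multiset.filter_add, Multiset.filter_add]
  constructor
  · rw [Multiset.filter_eq_self.2 (fun a ha => by
        simp only [Multiset.mem_coe] at ha
        exact Nat.not_odd_iff_even.2 (block_take_odd_sub_even ha)),
      Multiset.filter_eq_nil.2 (fun a ha => by
        simp only [Multiset.mem_coe] at ha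
        exact not_not_intro (mem_drop_oddL ha).2),
      Multiset.filter_eq_nil.2 (fun a ha => by
        simp only [Multiset.mem_coe] at ha
        exact not_not_intro (block_even_add_odd (fun y hy => (mem_evenL.1 hy).2) ha))]
    simp
  · rw [Multiset.filter_eq_nil.2 (fun a ha => by
        simp only [Multiset.mem_coe] at ha
        exact Nat.not_odd_iff_even.2 (block_take_odd_sub_even ha)),
      Multiset.filter_eq_self.2 (fun a ha => by
        simp only [Multiset.mem_coe] at ha
        exact (mem_drop_oddL ha).2),
      Multiset.filter_eq_self.2 (fun a ha => by
        simp only [Multiset.mem_coe] at ha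
        exact block_even_add_odd (fun y hy => (mem_evenL.1 hy).2) ha)]
    simp

lemma Fm_filters_B (hmk : ¬ (evenL s).length ≤ (oddL s).length) :
    (Fm s).filter (fun x => ¬ Odd x) = ↑((oddL s).map (· - 1))
        + ↑((evenL s).take ((evenL s).length - (oddL s).length)) ∧
    (Fm s).filter (Odd ·) = ↑(((evenL s).drop ((evenL s).length - (oddL s).length)).map (· + 1)) := by
  rw [Fm_eq_B hmk]
  rw [Multiset.filter_add, Multiset.filter_add, Multiset.filter_add, Multiset.filter_add]
  constructor
  · rw [Multiset.filter_eq_self.2 (fun a ha => by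
        simp only [Multiset.mem_coe] at ha
        exact Nat.not_odd_iff_even.2 (block_odd_map_odd_sub_even ha)),
      Multiset.filter_eq_self.2 (fun a ha => by
        simp only [Multiset.mem_coe] at ha
        exact Nat.not_odd_iff_even.2 (mem_take_evenL ha).2),
      Multiset.filter_eq_nil.2 (fun a ha => by
        simp only [Multiset.mem_coe] at ha
        exact not_not_intro (block_even_add_odd (fun y hy => (mem_drop_evenL hy).2) ha))]
    simp
  · rw [Multiset.filter_eq_nil.2 (fun a ha => by
        simp only [Multiset.mem_coe] at ha
        exact Nat.not_odd_iff_even.2 (block_odd_map_odd_sub_even ha)),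
      Multiset.filter_eq_nil.2 (fun a ha => by
        simp only [Multiset.mem_coe] at ha
        exact Nat.not_odd_iff_even.2 (mem_take_evenL ha).2),
      Multiset.filter_eq_self.2 (fun a ha => by
        simp only [Multiset.mem_coe] at ha
        exact block_even_add_odd (fun y hy => (mem_drop_evenL hy).2) ha)]
    simp

end cases

lemma coe_take_drop (l : List ℕ) (n : ℕ) :
    (↑(l.take n) : Multiset ℕ) + ↑(l.drop n) = ↑l := by
  rw [Multiset.coe_add]
  exact congrArg _ (List.take_append_drop n l)

lemma map_sub_add_cancel {m : Multiset ℕ} (hm : ∀ x ∈ m, 1 ≤ x) :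
    (m.map (· - 1)).map (· + 1) = m := by
  rw [Multiset.map_map]
  calc m.map ((· + 1) ∘ (· - 1)) = m.map id := Multiset.map_congr rfl
        (fun x hx => by have := hm x hx; show x - 1 + 1 = x; omega)
    _ = m := Multiset.map_id m

lemma add_one_inj : Function.Injective (· + 1 : ℕ → ℕ) := add_left_injective 1

lemma Fm_sum {s : Multiset ℕ} (h : GoodA s) : (Fm s).sum = s.sum := by
  have hsplit : (oddL s).sum + (evenL s).sum = s.sum := by
    have := congrArg Multiset.sum (odd_even_split s)
    simpa using this
  by_cases hm : (evenL s).length = 0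
  · rw [Fm, if_pos hm]
  by_cases hmk : (evenL s).length ≤ (oddL s).length
  · rw [Fm_eq_A hmk hm]
    have hsub : ∀ x ∈ (oddL s).take (evenL s).length, 1 ≤ x := fun x hx => by
      have := h.1 x (mem_take_oddL hx).1; omega
    have h1 := sum_map_sub_one_s7 _ hsub
    have h2 := sum_map_add_one_s7 (evenL s)
    have htd : ((oddL s).take (evenL s).length).sum
        + ((oddL s).drop (evenL s).length).sum = (oddL s).sum := by
      conv_rhs => rw [← List.take_append_drop (evenL s).length (oddL s)]
      rw [List.sum_append]
    have hlen : ((oddL s).take (evenL s).length).length = (evenL s).length := by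
      rw [List.length_take]; omega
    simp only [Multiset.sum_add, Multiset.sum_coe]
    omega
  · rw [Fm_eq_B hmk]
    have hsub : ∀ x ∈ oddL s, 1 ≤ x := fun x hx => by
      have := h.1 x (mem_oddL.1 hx).1; omega
    have h1 := sum_map_sub_one_s7 _ hsub
    have h2 := sum_map_add_one_s7 ((evenL s).drop ((evenL s).length - (oddL s).length))
    have htd : ((evenL s).take ((evenL s).length - (oddL s).length)).sum
        + ((evenL s).drop ((evenL s).length - (oddL s).length)).sum = (evenL s).sum := by
      conv_rhs => rw [← List.take_append_drop ((evenL s).length - (oddL s).length) (evenL s)]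
      rw [List.sum_append]
    have hlen : ((evenL s).drop ((evenL s).length - (oddL s).length)).length
        = (oddL s).length := by
      rw [List.length_drop]; omega
    simp only [Multiset.sum_add, Multiset.sum_coe]
    omega

lemma Fm_two_le {s : Multiset ℕ} (h : GoodA s) : ∀ x ∈ Fm s, 2 ≤ x := by
  intro x hx
  by_cases hm : (evenL s).length = 0
  · rw [Fm, if_pos hm] at hx; exact h.1 x hx
  by_cases hmk : (evenL s).length ≤ (oddL s).length
  · rw [Fm_eq_A hmk hm] at hx
    rcases Multiset.mem_add.1 hx with hx | hx
    · rcases Multiset.mem_add.1 hx with hx | hx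
      · simp only [Multiset.mem_coe, List.mem_map] at hx
        obtain ⟨y, hy, rfl⟩ := hx
        have := h.odd_three (mem_take_oddL hy).1 (mem_take_oddL hy).2
        omega
      · simp only [Multiset.mem_coe] at hx
        have := h.odd_three (mem_drop_oddL hx).1 (mem_drop_oddL hx).2
        omega
    · simp only [Multiset.mem_coe, List.mem_map] at hx
      obtain ⟨y, hy, rfl⟩ := hx
      have := h.even_four (mem_evenL.1 hy).1 (mem_evenL.1 hy).2
      omega
  · rw [Fm_eq_B hmk] at hx
    rcases Multiset.mem_add.1 hx with hx | hx
    · rcases Multiset.mem_add.1 hx with hx | hx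
      · simp only [Multiset.mem_coe, List.mem_map] at hx
        obtain ⟨y, hy, rfl⟩ := hx
        have := h.odd_three (mem_oddL.1 hy).1 (mem_oddL.1 hy).2
        omega
      · simp only [Multiset.mem_coe] at hx
        have := h.even_four (mem_take_evenL hx).1 (mem_take_evenL hx).2
        omega
    · simp only [Multiset.mem_coe, List.mem_map] at hx
      obtain ⟨y, hy, rfl⟩ := hx
      have := h.even_four (mem_drop_evenL hy).1 (mem_drop_evenL hy).2
      omega

lemma Fm_sep {s : Multiset ℕ} (h : GoodA s) :
    ∀ a ∈ Fm s, Even a → ∀ b ∈ Fm s, Odd b → a < b := by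
  intro a ha hae b hb hbo
  by_cases hm : (evenL s).length = 0
  · -- all parts of s odd; contradiction with Even a
    rw [Fm, if_pos hm] at ha
    exfalso
    have hnil : evenL s = [] := List.length_eq_zero_iff.1 hm
    have : a ∈ evenL s := mem_evenL.2 ⟨ha, hae⟩
    rw [hnil] at this; exact absurd this (List.not_mem_nil (a := a))
  have hamem : a ∈ (Fm s).filter (fun x => ¬ Odd x) :=
    Multiset.mem_filter.2 ⟨ha, Nat.not_odd_iff_even.2 hae⟩
  have hbmem : b ∈ (Fm s).filter (Odd ·) := Multiset.mem_filter.2 ⟨hb, hbo⟩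
  by_cases hmk : (evenL s).length ≤ (oddL s).length
  · obtain ⟨hev, hod⟩ := Fm_filters_A (s := s) hmk hm
    rw [hev] at hamem; rw [hod] at hbmem
    simp only [Multiset.mem_coe, List.mem_map] at hamem
    obtain ⟨y, hy, rfl⟩ := hamem
    have hy3 := h.odd_three (mem_take_oddL hy).1 (mem_take_oddL hy).2
    rcases Multiset.mem_add.1 hbmem with hb' | hb'
    · simp only [Multiset.mem_coe] at hb'
      have hle : y ≤ b := (oddL_sorted s).rel_of_mem_take_of_mem_drop hy hb'
      omega
    · simp only [Multiset.mem_coe, List.mem_map] at hb'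
      obtain ⟨e, he, rfl⟩ := hb'
      have hlt := h.2.2 y (mem_take_oddL hy).1 (mem_take_oddL hy).2
        e (mem_evenL.1 he).1 (mem_evenL.1 he).2
      omega
  · obtain ⟨hev, hod⟩ := Fm_filters_B (s := s) hmk
    rw [hev] at hamem; rw [hod] at hbmem
    simp only [Multiset.mem_coe, List.mem_map] at hbmem
    obtain ⟨e, he, rfl⟩ := hbmem
    rcases Multiset.mem_add.1 hamem with ha' | ha'
    · simp only [Multiset.mem_coe, List.mem_map] at ha'
      obtain ⟨y, hy, rfl⟩ := ha'
      have hlt := h.2.2 y (mem_oddL.1 hy).1 (mem_oddL.1 hy).2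
        e (mem_drop_evenL he).1 (mem_drop_evenL he).2
      omega
    · simp only [Multiset.mem_coe] at ha'
      have hle : a ≤ e := (evenL_sorted s).rel_of_mem_take_of_mem_drop ha' he
      omega

lemma Fm_cards {s : Multiset ℕ} (hm : (evenL s).length ≠ 0) :
    Multiset.card ((Fm s).filter (fun x => ¬ Odd x)) = (evenL s).length ∧
    Multiset.card ((Fm s).filter (Odd ·)) = (oddL s).length := by
  by_cases hmk : (evenL s).length ≤ (oddL s).length
  · obtain ⟨hev, hod⟩ := Fm_filters_A (s := s) hmk hm
    rw [hev, hod]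
    constructor
    · simp only [Multiset.coe_card, List.length_map, List.length_take]
      omega
    · simp only [Multiset.card_add, Multiset.coe_card, List.length_map, List.length_drop]
      omega
  · obtain ⟨hev, hod⟩ := Fm_filters_B (s := s) hmk
    rw [hev, hod]
    constructor
    · simp only [Multiset.card_add, Multiset.coe_card, List.length_map, List.length_take]
      omega
    · simp only [Multiset.coe_card, List.length_map, List.length_drop]
      omega

lemma Fm_inj {s s' : Multiset ℕ} (h : GoodA s) (h' : GoodA s') (heq : Fm s = Fm s') :
    s = s' := by
  have hsplit : ∀ (u : Multiset ℕ), u.filter (Odd ·) + u.filter (fun x => ¬ Odd x) = u :=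
    fun u => Multiset.filter_add_not _ u
  by_cases hm : (evenL s).length = 0 <;> by_cases hm' : (evenL s').length = 0
  · -- both all odd
    rw [Fm, if_pos hm, Fm, if_pos hm'] at heq; exact heq
  · -- s all odd, s' mixed : contradiction
    exfalso
    have h1 : (Fm s).filter (fun x => ¬ Odd x) = 0 := by
      rw [Fm, if_pos hm]
      rw [Multiset.filter_eq_nil.2]
      intro a ha hna
      have : a ∈ evenL s := mem_evenL.2 ⟨ha, Nat.not_odd_iff_even.1 hna⟩
      rw [List.length_eq_zero_iff.1 hm] at this
      exact absurd this (List.not_mem_nil (a := a))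
    have h2 := (Fm_cards (s := s') hm').1
    rw [← heq, h1] at h2
    simp at h2
    exact hm' h2.symm
  · -- symmetric
    exfalso
    have h1 : (Fm s').filter (fun x => ¬ Odd x) = 0 := by
      rw [Fm, if_pos hm']
      rw [Multiset.filter_eq_nil.2]
      intro a ha hna
      have : a ∈ evenL s' := mem_evenL.2 ⟨ha, Nat.not_odd_iff_even.1 hna⟩
      rw [List.length_eq_zero_iff.1 hm'] at this
      exact absurd this (List.not_mem_nil (a := a))
    have h2 := (Fm_cards (s := s) hm).1
    rw [heq, h1] at h2
    simp at h2
    exact hm h2.symm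
  · -- both mixed
    have hcards := (Fm_cards (s := s) hm)
    have hcards' := (Fm_cards (s := s') hm')
    have hmeq : (evenL s).length = (evenL s').length := by
      rw [← hcards.1, ← hcards'.1, heq]
    have hkeq : (oddL s).length = (oddL s').length := by
      rw [← hcards.2, ← hcards'.2, heq]
    by_cases hmk : (evenL s).length ≤ (oddL s).length
    · have hmk' : (evenL s').length ≤ (oddL s').length := by omega
      obtain ⟨hev, hod⟩ := Fm_filters_A (s := s) hmk hm
      obtain ⟨hev', hod'⟩ := Fm_filters_A (s := s') hmk' hm'
      have hE : (↑(((oddL s).take (evenL s).length).map (· - 1)) : Multiset ℕ)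
          = ↑(((oddL s').take (evenL s').length).map (· - 1)) := by
        rw [← hev, ← hev', heq]
      have hO : (↑((oddL s).drop (evenL s).length) : Multiset ℕ) + ↑((evenL s).map (· + 1))
          = ↑((oddL s').drop (evenL s').length) + ↑((evenL s').map (· + 1)) := by
        rw [← hod, ← hod', heq]
      -- recover the take parts
      have htake : (↑((oddL s).take (evenL s).length) : Multiset ℕ)
          = ↑((oddL s').take (evenL s').length) := by
        have e1 : ∀ x ∈ (↑((oddL s).take (evenL s).length) : Multiset ℕ), 1 ≤ x := by
          intro x hx
          simp only [Multiset.mem_coe] at hx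
          have := h.1 x (mem_take_oddL hx).1; omega
        have e2 : ∀ x ∈ (↑((oddL s').take (evenL s').length) : Multiset ℕ), 1 ≤ x := by
          intro x hx
          simp only [Multiset.mem_coe] at hx
          have := h'.1 x (mem_take_oddL hx).1; omega
        have := congrArg (Multiset.map (· + 1)) (by
          have : (↑((oddL s).take (evenL s).length) : Multiset ℕ).map (· - 1)
              = (↑((oddL s').take (evenL s').length) : Multiset ℕ).map (· - 1) := by
            rw [Multiset.map_coe, Multiset.map_coe]
            exact hE
          exact this)
        rwa [map_sub_add_cancel e1, map_sub_add_cancel e2] at this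
      -- split the odd part
      have hsp := split_unique hO
        (fun x hx y hy => by
          simp only [Multiset.mem_coe] at hx
          simp only [Multiset.mem_coe, List.mem_map] at hy
          obtain ⟨e, he, rfl⟩ := hy
          have := h.2.2 x (mem_drop_oddL hx).1 (mem_drop_oddL hx).2
            e (mem_evenL.1 he).1 (mem_evenL.1 he).2
          omega)
        (fun x hx y hy => by
          simp only [Multiset.mem_coe] at hx
          simp only [Multiset.mem_coe, List.mem_map] at hy
          obtain ⟨e, he, rfl⟩ := hy
          have := h'.2.2 x (mem_drop_oddL hx).1 (mem_drop_oddL hx).2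
            e (mem_evenL.1 he).1 (mem_evenL.1 he).2
          omega)
        (by simp only [Multiset.coe_card, List.length_map]; exact hmeq)
      have hdrop := hsp.1
      have hEmap := hsp.2
      have hEeq : (↑(evenL s) : Multiset ℕ) = ↑(evenL s') := by
        have : (↑(evenL s) : Multiset ℕ).map (· + 1) = (↑(evenL s') : Multiset ℕ).map (· + 1) := by
          rw [Multiset.map_coe, Multiset.map_coe]; exact hEmap
        exact Multiset.map_injective add_one_inj this
      have hOeq : (↑(oddL s) : Multiset ℕ) = ↑(oddL s') := by
        rw [← coe_take_drop (oddL s) (evenL s).length, ← coe_take_drop (oddL s') (evenL s').length,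
          htake, hdrop]
      have := odd_even_split s
      rw [hOeq, hEeq, odd_even_split s'] at this
      exact this.symm
    · have hmk' : ¬ (evenL s').length ≤ (oddL s').length := by omega
      obtain ⟨hev, hod⟩ := Fm_filters_B (s := s) hmk
      obtain ⟨hev', hod'⟩ := Fm_filters_B (s := s') hmk'
      have hE : (↑((oddL s).map (· - 1)) : Multiset ℕ)
            + ↑((evenL s).take ((evenL s).length - (oddL s).length))
          = ↑((oddL s').map (· - 1))
            + ↑((evenL s').take ((evenL s').length - (oddL s').length)) := by
        rw [← hev, ← hev', heq]
      have hO : (↑(((evenL s).drop ((evenL s).length - (oddL s).length)).map (· + 1)) : Multiset ℕ)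
          = ↑(((evenL s').drop ((evenL s').length - (oddL s').length)).map (· + 1)) := by
        rw [← hod, ← hod', heq]
      have hsp := split_unique hE
        (fun x hx y hy => by
          simp only [Multiset.mem_coe, List.mem_map] at hx
          obtain ⟨o, ho, rfl⟩ := hx
          simp only [Multiset.mem_coe] at hy
          have := h.2.2 o (mem_oddL.1 ho).1 (mem_oddL.1 ho).2
            y (mem_take_evenL hy).1 (mem_take_evenL hy).2
          omega)
        (fun x hx y hy => by
          simp only [Multiset.mem_coe, List.mem_map] at hx
          obtain ⟨o, ho, rfl⟩ := hx
          simp only [Multiset.mem_coe] at hy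
          have := h'.2.2 o (mem_oddL.1 ho).1 (mem_oddL.1 ho).2
            y (mem_take_evenL hy).1 (mem_take_evenL hy).2
          omega)
        (by simp only [Multiset.coe_card, List.length_take]; omega)
      have hOeq : (↑(oddL s) : Multiset ℕ) = ↑(oddL s') := by
        have e1 : ∀ x ∈ (↑(oddL s) : Multiset ℕ), 1 ≤ x := by
          intro x hx
          simp only [Multiset.mem_coe] at hx
          have := h.1 x (mem_oddL.1 hx).1; omega
        have e2 : ∀ x ∈ (↑(oddL s') : Multiset ℕ), 1 ≤ x := by
          intro x hx
          simp only [Multiset.mem_coe] at hx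
          have := h'.1 x (mem_oddL.1 hx).1; omega
        have : (↑(oddL s) : Multiset ℕ).map (· - 1) = (↑(oddL s') : Multiset ℕ).map (· - 1) := by
          rw [Multiset.map_coe, Multiset.map_coe]; exact hsp.1
        have := congrArg (Multiset.map (· + 1)) this
        rwa [map_sub_add_cancel e1, map_sub_add_cancel e2] at this
      have hdropeq : (↑((evenL s).drop ((evenL s).length - (oddL s).length)) : Multiset ℕ)
          = ↑((evenL s').drop ((evenL s').length - (oddL s').length)) := by
        have : (↑((evenL s).drop ((evenL s).length - (oddL s).length)) : Multiset ℕ).map (· + 1)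
            = (↑((evenL s').drop ((evenL s').length - (oddL s').length)) : Multiset ℕ).map (· + 1) := by
          rw [Multiset.map_coe, Multiset.map_coe]; exact hO
        exact Multiset.map_injective add_one_inj this
      have hEeq : (↑(evenL s) : Multiset ℕ) = ↑(evenL s') := by
        rw [← coe_take_drop (evenL s) ((evenL s).length - (oddL s).length),
          ← coe_take_drop (evenL s') ((evenL s').length - (oddL s').length),
          hsp.2, hdropeq]
      have := odd_even_split s
      rw [hOeq, hEeq, odd_even_split s'] at this
      exact this.symm

lemma Fm_has_odd {s : Multiset ℕ} (h : GoodA s) : ∃ b ∈ Fm s, Odd b := by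
  by_cases hm : (evenL s).length = 0
  · rw [Fm, if_pos hm]; exact h.2.1
  · have hcard := (Fm_cards (s := s) hm).2
    have hk : (oddL s).length ≠ 0 := by
      obtain ⟨a, ha, hao⟩ := h.2.1
      have hmem : a ∈ oddL s := mem_oddL.2 ⟨ha, hao⟩
      intro h0; rw [List.length_eq_zero_iff.1 h0] at hmem
      exact (List.not_mem_nil (a := a)) hmem
    have hpos : 0 < Multiset.card ((Fm s).filter (Odd ·)) := by omega
    obtain ⟨b, hb⟩ := Multiset.card_pos_iff_exists_mem.1 hpos
    exact ⟨b, (Multiset.mem_filter.1 hb).1, (Multiset.mem_filter.1 hb).2⟩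

lemma GoodA_of_mem {n : ℕ} {p : n.Partition}
    (hp : 1 ∉ p.parts ∧ (∃ a ∈ p.parts, Odd a) ∧
      ∀ a ∈ p.parts, ∀ b ∈ p.parts, Odd a → Even b → a < b) : GoodA p.parts := by
  refine ⟨fun x hx => ?_, hp.2.1, fun a ha hao b hb hbe => hp.2.2 a ha b hb hao hbe⟩
  have h0 := p.parts_pos hx
  have h1 : x ≠ 1 := fun e => hp.1 (e ▸ hx)
  omega

open Classical in
noncomputable def FP {n : ℕ} (p : n.Partition) : n.Partition :=
  if h : GoodA p.parts then
    { parts := Fm p.parts,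
      parts_pos := fun {x} hx => by have := Fm_two_le h x hx; omega,
      parts_sum := by rw [Fm_sum h, p.parts_sum] }
  else p

lemma FP_parts {n : ℕ} {p : n.Partition} (h : GoodA p.parts) :
    (FP p).parts = Fm p.parts := by
  rw [FP, dif_pos h]

/-- The number of non-unitary partitions of `n` (no part equal to 1) in which
each even part is less than each odd part. -/
noncomputable def qeuou (n : ℕ) : ℕ :=
  Set.ncard {p : n.Partition | 1 ∉ p.parts ∧
    ∀ a ∈ p.parts, ∀ b ∈ p.parts, Even a → Odd b → a < b}

/-- The number of non-unitary partitions of `n` (no part equal to 1) containing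
at least one odd part in which each odd part is less than each even part. -/
noncomputable def qoueu (n : ℕ) : ℕ :=
  Set.ncard {p : n.Partition | 1 ∉ p.parts ∧ (∃ a ∈ p.parts, Odd a) ∧
    ∀ a ∈ p.parts, ∀ b ∈ p.parts, Odd a → Even b → a < b}

lemma ncard_lt_aux {α : Type*} [Fintype α] {A B : Set α} (f : α → α)
    (hf : Set.InjOn f A) (him : f '' A ⊆ B) {w : α} (hwB : w ∈ B) (hw : w ∉ f '' A) :
    A.ncard < B.ncard := by
  rw [← Set.ncard_image_of_injOn hf]
  exact Set.ncard_lt_ncard ((Set.ssubset_iff_of_subset him).2 ⟨w, hwB, hw⟩) (Set.toFinite B)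

theorem stmt_7 : ∀ n : ℕ, 3 < n → qoueu n < qeuou n := by
  intro n hn
  unfold qoueu qeuou
  set A : Set n.Partition := {p : n.Partition | 1 ∉ p.parts ∧ (∃ a ∈ p.parts, Odd a) ∧
    ∀ a ∈ p.parts, ∀ b ∈ p.parts, Odd a → Even b → a < b} with hAdef
  set B : Set n.Partition := {p : n.Partition | 1 ∉ p.parts ∧
    ∀ a ∈ p.parts, ∀ b ∈ p.parts, Even a → Odd b → a < b} with hBdef
  have hGood : ∀ p ∈ A, GoodA p.parts := fun p hp => GoodA_of_mem hp
  have hinj : Set.InjOn FP A := by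
    intro p hp q hq hpq
    have h1 := congrArg Nat.Partition.parts hpq
    rw [FP_parts (hGood p hp), FP_parts (hGood q hq)] at h1
    exact Nat.Partition.ext (Fm_inj (hGood p hp) (hGood q hq) h1)
  have him : FP '' A ⊆ B := by
    rintro _ ⟨p, hp, rfl⟩
    have hg := hGood p hp
    constructor
    · intro h1
      rw [FP_parts hg] at h1
      have := Fm_two_le hg 1 h1
      omega
    · intro a ha b hb hae hbo
      rw [FP_parts hg] at ha hb
      exact Fm_sep hg a ha hae b hb hbo
  rcases Nat.even_or_odd n with he | ho
  · -- n even : witness = all 2s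
    obtain ⟨c, hc⟩ := he
    have hc2 : 2 ≤ c := by omega
    have wsum : (Multiset.replicate c 2).sum = n := by
      rw [Multiset.sum_replicate, smul_eq_mul]; omega
    set w : n.Partition := ⟨Multiset.replicate c 2, fun {x} hx => by
      rw [Multiset.eq_of_mem_replicate hx]; omega, wsum⟩ with hwdef
    have hwB : w ∈ B := by
      constructor
      · intro h1
        have := Multiset.eq_of_mem_replicate (show (1:ℕ) ∈ Multiset.replicate c 2 from h1)
        omega
      · intro a _ b hb _ hbo
        have hb2 : b = 2 := Multiset.eq_of_mem_replicate hb
        rw [hb2] at hbo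
        exact absurd hbo (by decide)
    have hwnot : w ∉ FP '' A := by
      rintro ⟨p, hp, hF⟩
      have hg := hGood p hp
      have hparts := congrArg Nat.Partition.parts hF
      rw [FP_parts hg] at hparts
      obtain ⟨b, hb, hbo⟩ := Fm_has_odd hg
      rw [hparts] at hb
      have hb2 : b = 2 := Multiset.eq_of_mem_replicate hb
      rw [hb2] at hbo
      exact absurd hbo (by decide)
    exact ncard_lt_aux FP hinj him hwB hwnot
  · -- n odd : witness = one 3 and 2s
    obtain ⟨c, hc⟩ := ho
    have hc2 : 2 ≤ c := by omega
    have wsum : (3 ::ₘ Multiset.replicate (c - 1) 2).sum = n := by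
      rw [Multiset.sum_cons, Multiset.sum_replicate, smul_eq_mul]; omega
    set w : n.Partition := ⟨3 ::ₘ Multiset.replicate (c - 1) 2, fun {x} hx => by
      rcases Multiset.mem_cons.1 hx with rfl | hx'
      · omega
      · rw [Multiset.eq_of_mem_replicate hx']; omega, wsum⟩ with hwdef
    have hwparts : w.parts = 3 ::ₘ Multiset.replicate (c - 1) 2 := by rw [hwdef]
    have hwB : w ∈ B := by
      constructor
      · intro h1
        rw [hwparts] at h1
        rcases Multiset.mem_cons.1 h1 with h' | h'
        · omega
        · have := Multiset.eq_of_mem_replicate h'; omega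
      · intro a ha b hb hae hbo
        rw [hwparts] at ha hb
        have ha2 : a = 2 := by
          rcases Multiset.mem_cons.1 ha with rfl | h'
          · exact absurd hae (by decide)
          · exact Multiset.eq_of_mem_replicate h'
        have hb3 : b = 3 := by
          rcases Multiset.mem_cons.1 hb with rfl | h'
          · rfl
          · rw [Multiset.eq_of_mem_replicate h'] at hbo
            exact absurd hbo (by decide)
        omega
    have hwnot : w ∉ FP '' A := by
      rintro ⟨p, hp, hF⟩
      have hg := hGood p hp
      have hparts := congrArg Nat.Partition.parts hF
      rw [FP_parts hg, hwparts] at hparts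
      -- filters of the witness
      have wfo : (3 ::ₘ Multiset.replicate (c - 1) 2).filter (Odd ·) = {3} := by
        rw [Multiset.filter_cons_of_pos _ (by decide),
          Multiset.filter_eq_nil.2 (fun a ha => by
            rw [Multiset.eq_of_mem_replicate ha]; decide)]
        rfl
      have wfe : (3 ::ₘ Multiset.replicate (c - 1) 2).filter (fun x => ¬ Odd x)
          = Multiset.replicate (c - 1) 2 := by
        rw [Multiset.filter_cons_of_neg _ (by decide),
          Multiset.filter_eq_self.2 (fun a ha => by
            rw [Multiset.eq_of_mem_replicate ha]; decide)]
      set s := p.parts with hsdef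
      by_cases hm : (evenL s).length = 0
      · -- all odd : image has no even parts, but witness does
        rw [Fm, if_pos hm] at hparts
        have h0 : s.filter (fun x => ¬ Odd x) = 0 := by
          rw [← coe_evenL, List.length_eq_zero_iff.1 hm]; rfl
        rw [hparts, wfe] at h0
        have := congrArg Multiset.card h0
        simp [Multiset.card_replicate] at this
        omega
      · have hcards := Fm_cards (s := s) hm
        have hm_eq : (evenL s).length = c - 1 := by
          have := hcards.1
          rw [hparts, wfe] at this
          simpa [Multiset.card_replicate] using this.symm
        have hk_eq : (oddL s).length = 1 := by
          have := hcards.2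
          rw [hparts, wfo] at this
          simpa using this.symm
        have key : ∃ e ∈ s, Even e ∧ e + 1 = 3 := by
          by_cases hmk : (evenL s).length ≤ (oddL s).length
          · obtain ⟨_, hod⟩ := Fm_filters_A (s := s) hmk hm
            rw [hparts, wfo] at hod
            have hdropnil : (oddL s).drop (evenL s).length = [] := by
              apply List.drop_eq_nil_of_le
              omega
            rw [hdropnil] at hod
            have h3 : (3:ℕ) ∈ ({3} : Multiset ℕ) := Multiset.mem_singleton_self 3
            rw [hod] at h3
            simp only [Multiset.coe_nil, zero_add, Multiset.mem_coe, List.mem_map] at h3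
            obtain ⟨e, he, he3⟩ := h3
            exact ⟨e, (mem_evenL.1 he).1, (mem_evenL.1 he).2, he3⟩
          · obtain ⟨_, hod⟩ := Fm_filters_B (s := s) hmk
            rw [hparts, wfo] at hod
            have h3 : (3:ℕ) ∈ ({3} : Multiset ℕ) := Multiset.mem_singleton_self 3
            rw [hod] at h3
            simp only [Multiset.mem_coe, List.mem_map] at h3
            obtain ⟨e, he, he3⟩ := h3
            exact ⟨e, (mem_drop_evenL he).1, (mem_drop_evenL he).2, he3⟩
        obtain ⟨e, he, hee, he3⟩ := key
        have := hg.even_four he hee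
        omega
    exact ncard_lt_aux FP hinj him hwB hwnot
end

section
/- For every integer n ≥ 7, the inequality b_{2n-4} + b_{2n-6} + b_{2n-8} + b_{2n-10} > b_{2n} holds, where b_{2k} denotes the number of partitions of 2k all of whose parts are even. -/
open Multiset

open Multiset

noncomputable def minp {m : ℕ} (p : Nat.Partition m) : ℕ :=
  if h : p.parts.toFinset.Nonempty then p.parts.toFinset.min' h else 0

lemma minp_mem {m : ℕ} {p : Nat.Partition m} (h : p.parts ≠ 0) : minp p ∈ p.parts := by
  have hne : p.parts.toFinset.Nonempty := by
    rw [Finset.nonempty_iff_ne_empty]; simpa [Multiset.toFinset_eq_empty] using h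
  rw [minp, dif_pos hne]
  have := Finset.min'_mem _ hne
  simpa [Multiset.mem_toFinset] using this

lemma minp_le {m : ℕ} {p : Nat.Partition m} {x : ℕ} (hx : x ∈ p.parts) : minp p ≤ x := by
  have hne : p.parts.toFinset.Nonempty := ⟨x, by simpa [Multiset.mem_toFinset] using hx⟩
  rw [minp, dif_pos hne]
  exact Finset.min'_le _ _ (by simpa [Multiset.mem_toFinset] using hx)

def junkP (r : ℕ) : Nat.Partition r := Nat.Partition.ofSums r (Multiset.replicate r 1) (by simp)

/-- condition for fmap to act nontrivially -/
def fcond (t : ℕ) (mk : Multiset ℕ) {m : ℕ} (r : ℕ) (p : Nat.Partition m) : Prop :=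
  p.parts ≠ 0 ∧ t ≤ minp p ∧ 0 < t ∧ (∀ x ∈ mk, 0 < x) ∧ m - t + mk.sum = r

lemma fcond_sum {t : ℕ} {mk : Multiset ℕ} {m r : ℕ} {p : Nat.Partition m}
    (h : fcond t mk r p) :
    (p.parts.erase (minp p) + Multiset.replicate (minp p - t) 1 + mk).sum = r := by
  obtain ⟨hne, hta, ht, hmk, hr⟩ := h
  have hmem := minp_mem hne
  have hc : minp p ::ₘ p.parts.erase (minp p) = p.parts := Multiset.cons_erase hmem
  have hsum : minp p + (p.parts.erase (minp p)).sum = m := by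
    have := congrArg Multiset.sum hc
    rw [Multiset.sum_cons, p.parts_sum] at this
    exact this
  simp only [Multiset.sum_add, Multiset.sum_replicate, smul_eq_mul, mul_one]
  omega

open scoped Classical in
noncomputable def fmap (t : ℕ) (mk : Multiset ℕ) {m : ℕ} (r : ℕ) (p : Nat.Partition m) :
    Nat.Partition r :=
  if h : fcond t mk r p then
    { parts := p.parts.erase (minp p) + Multiset.replicate (minp p - t) 1 + mk
      parts_pos := by
        intro i hi
        rcases Multiset.mem_add.1 hi with hi | hi
        · rcases Multiset.mem_add.1 hi with hi | hi
          · exact p.parts_pos (Multiset.mem_of_mem_erase hi)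
          · rw [Multiset.eq_of_mem_replicate hi]; norm_num
        · exact h.2.2.2.1 _ hi
      parts_sum := fcond_sum h }
  else junkP r

lemma fmap_parts {t : ℕ} {mk : Multiset ℕ} {m r : ℕ} {p : Nat.Partition m}
    (h : fcond t mk r p) :
    (fmap t mk r p).parts
      = p.parts.erase (minp p) + Multiset.replicate (minp p - t) 1 + mk := by
  classical simp only [fmap]
  rw [dif_pos h]

def PS (t m : ℕ) : Set (Nat.Partition m) := {p | ∀ i ∈ p.parts, t ≤ i}

noncomputable def qq (t m : ℕ) : ℕ := (PS t m).ncard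

lemma mem_PS1 {m : ℕ} (p : Nat.Partition m) : p ∈ PS 1 m := fun _ hi => p.parts_pos hi

lemma parts_ne_zero {m : ℕ} (p : Nat.Partition m) (hm : 0 < m) : p.parts ≠ 0 := by
  intro h
  have := p.parts_sum
  rw [h] at this
  simp at this
  omega

lemma fcond_of {t t' m r : ℕ} {mk : Multiset ℕ} {p : Nat.Partition m}
    (hp : p ∈ PS t' m) (ht : 0 < t) (htt' : t ≤ t') (hm : 0 < m)
    (hmk : ∀ x ∈ mk, 0 < x) (hr : m - t + mk.sum = r) : fcond t mk r p := by
  refine ⟨parts_ne_zero p hm, ?_, ht, hmk, hr⟩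
  exact le_trans htt' (hp _ (minp_mem (parts_ne_zero p hm)))

lemma count_one_fmap {t t' m r : ℕ} {mk : Multiset ℕ} {p : Nat.Partition m}
    (hp : p ∈ PS t' m) (h2 : 2 ≤ t') (hmk : ∀ x ∈ mk, x ≠ 1)
    (hc : fcond t mk r p) :
    Multiset.count 1 (fmap t mk r p).parts = minp p - t := by
  rw [fmap_parts hc]
  rw [Multiset.count_add, Multiset.count_add]
  have hE : Multiset.count 1 (p.parts.erase (minp p)) = 0 := by
    rw [Multiset.count_eq_zero]
    intro h1
    have := hp _ (Multiset.mem_of_mem_erase h1)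
    omega
  have hmk0 : Multiset.count 1 mk = 0 := by
    rw [Multiset.count_eq_zero]
    intro h1
    exact hmk _ h1 rfl
  rw [hE, hmk0, Multiset.count_replicate_self]
  omega

lemma fmap_injOn {t t' m r : ℕ} {mk : Multiset ℕ}
    (h2 : 2 ≤ t) (htt' : t ≤ t') (hm : 0 < m)
    (hmk : ∀ x ∈ mk, 0 < x ∧ x ≠ 1) (hr : m - t + mk.sum = r) :
    Set.InjOn (fmap t mk r) (PS t' m) := by
  intro p1 hp1 p2 hp2 heq
  have h2' : 2 ≤ t' := le_trans h2 htt'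
  have hc1 : fcond t mk r p1 := fcond_of hp1 (by omega) htt' hm (fun x hx => (hmk x hx).1) hr
  have hc2 : fcond t mk r p2 := fcond_of hp2 (by omega) htt' hm (fun x hx => (hmk x hx).1) hr
  have hcount : minp p1 - t = minp p2 - t := by
    rw [← count_one_fmap hp1 h2' (fun x hx => (hmk x hx).2) hc1,
      ← count_one_fmap hp2 h2' (fun x hx => (hmk x hx).2) hc2, heq]
  have ha1 : t ≤ minp p1 := hc1.2.1
  have ha2 : t ≤ minp p2 := hc2.2.1
  have ha : minp p1 = minp p2 := by omega
  have hparts := congrArg Nat.Partition.parts heq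
  rw [fmap_parts hc1, fmap_parts hc2, ha] at hparts
  have hE : p1.parts.erase (minp p2) = p2.parts.erase (minp p2) := by
    have := add_right_cancel hparts
    exact add_right_cancel this
  apply Nat.Partition.ext
  rw [← Multiset.cons_erase (minp_mem hc1.1), ← Multiset.cons_erase (minp_mem hc2.1),
    ha, hE]

lemma qrec (t m : ℕ) (ht : 0 < t) (htm : t ≤ m) : qq t m = qq t (m - t) + qq (t + 1) m := by
  classical
  set A : Set (Nat.Partition m) := {p | (∀ i ∈ p.parts, t ≤ i) ∧ t ∈ p.parts} with hA
  have key : ∀ p ∈ A, minp p = t ∧ fcond t 0 (m - t) p ∧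
      (fmap t 0 (m - t) p).parts = p.parts.erase t := by
    intro p hp
    have hne : p.parts ≠ 0 := by
      intro h
      have := hp.2
      rw [h] at this
      simp at this
    have hmin : minp p = t := le_antisymm (minp_le hp.2) (hp.1 _ (minp_mem hne))
    have hc : fcond t 0 (m - t) p := ⟨hne, by omega, ht, by simp, by simp⟩
    refine ⟨hmin, hc, ?_⟩
    rw [fmap_parts hc, hmin]
    simp
  have hinj : Set.InjOn (fmap t 0 (m - t)) A := by
    intro p1 h1 p2 h2 he
    obtain ⟨hm1, hc1, he1⟩ := key p1 h1
    obtain ⟨hm2, hc2, he2⟩ := key p2 h2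
    apply Nat.Partition.ext
    rw [← Multiset.cons_erase h1.2, ← Multiset.cons_erase h2.2, ← he1, ← he2, he]
  have himg : fmap t 0 (m - t) '' A = PS t (m - t) := by
    ext μ
    constructor
    · rintro ⟨p, hp, rfl⟩
      obtain ⟨hm1, hc1, he1⟩ := key p hp
      intro i hi
      rw [he1] at hi
      exact hp.1 _ (Multiset.mem_of_mem_erase hi)
    · intro hμ
      have hpos : ∀ i ∈ t ::ₘ μ.parts, 0 < i := by
        intro i hi
        rcases Multiset.mem_cons.1 hi with rfl | hi
        · exact ht
        · exact μ.parts_pos hi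
      have hsum : (t ::ₘ μ.parts).sum = m := by
        rw [Multiset.sum_cons, μ.parts_sum]; omega
      set p : Nat.Partition m := ⟨t ::ₘ μ.parts, fun {i} hi => hpos i hi, hsum⟩ with hpdef
      have hmem : p ∈ A := by
        constructor
        · intro i hi
          rcases Multiset.mem_cons.1 hi with rfl | hi
          · exact le_refl _
          · exact hμ _ hi
        · exact Multiset.mem_cons_self _ _
      refine ⟨p, hmem, ?_⟩
      obtain ⟨_, _, he⟩ := key _ hmem
      apply Nat.Partition.ext
      rw [he]
      simp [hpdef, Multiset.erase_cons_head]
  have hsplit : PS t m = A ∪ PS (t + 1) m := by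
    ext p
    constructor
    · intro hp
      by_cases hmem : t ∈ p.parts
      · exact Or.inl ⟨hp, hmem⟩
      · refine Or.inr (fun i hi => ?_)
        have h1 := hp _ hi
        have h2 : i ≠ t := fun h => hmem (h ▸ hi)
        omega
    · rintro (hp | hp)
      · exact hp.1
      · exact fun i hi => le_trans (by omega) (hp _ hi)
  have hdisj : Disjoint A (PS (t + 1) m) := by
    rw [Set.disjoint_left]
    rintro p ⟨_, hmem⟩ hp
    have := hp _ hmem
    omega
  have hAn : A.ncard = qq t (m - t) := by
    rw [qq, ← himg, Set.ncard_image_of_injOn hinj]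
  rw [qq, hsplit, Set.ncard_union_eq hdisj (Set.toFinite _) (Set.toFinite _), hAn]
  rfl

lemma double_halve {l : Multiset ℕ} (h : ∀ i ∈ l, Even i) :
    (l.map (· / 2)).map (fun x => 2 * x) = l := by
  rw [Multiset.map_map]
  have : l.map ((fun x => 2 * x) ∘ (· / 2)) = l.map id := by
    refine Multiset.map_congr rfl ?_
    intro y hy
    obtain ⟨c, rfl⟩ := h y hy
    simp only [Function.comp_apply, id]
    omega
  rw [this, Multiset.map_id]

lemma sum_double (l : Multiset ℕ) : (l.map (fun x => 2 * x)).sum = 2 * l.sum := by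
  induction l using Multiset.induction with
  | empty => simp
  | cons a s ih => simp [ih]; ring

open scoped Classical in
noncomputable def halve {k : ℕ} (p : Nat.Partition (2 * k)) : Nat.Partition k :=
  if h : ∀ i ∈ p.parts, Even i then
    { parts := p.parts.map (· / 2)
      parts_pos := by
        intro i hi
        obtain ⟨y, hy, rfl⟩ := Multiset.mem_map.1 hi
        obtain ⟨c, hc⟩ := h y hy
        have := p.parts_pos hy
        omega
      parts_sum := by
        have h2 : ((p.parts.map (· / 2)).map (fun x => 2 * x)).sum = 2 * k := by
          rw [double_halve h, p.parts_sum]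
        rw [sum_double] at h2
        omega }
  else junkP k


lemma halve_parts {k : ℕ} {p : Nat.Partition (2 * k)} (h : ∀ i ∈ p.parts, Even i) :
    (halve p).parts = p.parts.map (· / 2) := by
  classical simp only [halve]
  rw [dif_pos h]

/-- `b k` is the number of partitions of `2 * k` in which every part is even. -/
noncomputable def b (k : ℕ) : ℕ :=
  Set.ncard {p : (2 * k).Partition | ∀ i ∈ p.parts, Even i}

lemma b_eq (k : ℕ) : b k = qq 1 k := by
  classical
  set E : Set (Nat.Partition (2 * k)) := {p | ∀ i ∈ p.parts, Even i} with hE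
  have hinj : Set.InjOn halve E := by
    intro p1 h1 p2 h2 heq
    apply Nat.Partition.ext
    have e1 := double_halve (l := p1.parts) h1
    have e2 := double_halve (l := p2.parts) h2
    rw [← e1, ← e2, ← halve_parts h1, ← halve_parts h2, heq]
  have himg : halve '' E = PS 1 k := by
    ext μ
    constructor
    · rintro ⟨p, hp, rfl⟩
      exact mem_PS1 _
    · intro _
      have hpos : ∀ i ∈ μ.parts.map (fun x => 2 * x), 0 < i := by
        intro i hi
        obtain ⟨y, hy, rfl⟩ := Multiset.mem_map.1 hi
        have := μ.parts_pos hy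
        omega
      have hsum : (μ.parts.map (fun x => 2 * x)).sum = 2 * k := by
        rw [sum_double, μ.parts_sum]
      set p : Nat.Partition (2 * k) :=
        ⟨μ.parts.map (fun x => 2 * x), fun {i} hi => hpos i hi, hsum⟩ with hpdef
      have hp : p ∈ E := by
        intro i hi
        obtain ⟨y, hy, rfl⟩ := Multiset.mem_map.1 hi
        exact ⟨y, by ring⟩
      refine ⟨p, hp, ?_⟩
      apply Nat.Partition.ext
      rw [halve_parts hp]
      show (μ.parts.map (fun x => 2 * x)).map (· / 2) = μ.parts
      rw [Multiset.map_map]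
      have : μ.parts.map ((· / 2) ∘ fun x => 2 * x) = μ.parts.map id := by
        refine Multiset.map_congr rfl ?_
        intro y _
        simp only [Function.comp_apply, id]
        omega
      rw [this, Multiset.map_id]
  rw [b, qq, ← himg, Set.ncard_image_of_injOn hinj]

lemma qq_zero {t m : ℕ} (hm : 0 < m) (h : m < t) : qq t m = 0 := by
  have : PS t m = ∅ := by
    rw [Set.eq_empty_iff_forall_notMem]
    intro p hp
    obtain ⟨a, ha⟩ := Multiset.exists_mem_of_ne_zero (parts_ne_zero p hm)
    have h1 := hp _ ha
    have h2 : a ≤ m := by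
      have := Multiset.single_le_sum (fun x _ => Nat.zero_le x) a ha
      rw [p.parts_sum] at this
      exact this
    omega
  rw [qq, this, Set.ncard_empty]

theorem stmt_10 : ∀ n : ℕ, 7 ≤ n →
    b (n - 2) + b (n - 3) + b (n - 4) + b (n - 5) > b n := by
  intro n hn
  classical
  simp only [b_eq, gt_iff_lt]
  -- recurrences
  have h1 : qq 1 n = qq 1 (n - 1) + qq 2 n := qrec 1 n (by omega) (by omega)
  have h2 : qq 1 (n - 1) = qq 1 (n - 2) + qq 2 (n - 1) := by
    have := qrec 1 (n - 1) (by omega) (by omega)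
    have e : n - 1 - 1 = n - 2 := by omega
    rwa [e] at this
  have h3 : qq 2 n = qq 2 (n - 2) + qq 3 n := qrec 2 n (by omega) (by omega)
  have h4 : qq 3 n = qq 3 (n - 3) + qq 4 n := qrec 3 n (by omega) (by omega)
  have h5 : qq 4 n = qq 4 (n - 4) + qq 5 n := qrec 4 n (by omega) (by omega)
  -- bound A+B into partitions of n-3
  have hA : qq 2 (n - 1) + qq 3 (n - 3) ≤ qq 1 (n - 3) := by
    have hinjA : Set.InjOn (fmap 2 0 (n - 3)) (PS 2 (n - 1)) :=
      fmap_injOn (by norm_num) le_rfl (by omega) (by simp)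
        (by simp only [Multiset.sum_zero]; omega)
    have hinjB : Set.InjOn (fmap 2 {2} (n - 3)) (PS 3 (n - 3)) :=
      fmap_injOn (by norm_num) (by norm_num) (by omega)
        (by intro x hx; rw [Multiset.mem_singleton] at hx; omega)
        (by simp only [Multiset.sum_singleton]; omega)
    have hdisj : Disjoint (fmap 2 0 (n - 3) '' PS 2 (n - 1))
        (fmap 2 {2} (n - 3) '' PS 3 (n - 3)) := by
      rw [Set.disjoint_left]
      rintro μ ⟨p1, hp1, rfl⟩ ⟨p2, hp2, heq⟩
      have hc1 : fcond 2 0 (n - 3) p1 := fcond_of hp1 (by norm_num) le_rfl (by omega)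
        (by simp) (by simp only [Multiset.sum_zero]; omega)
      have hc2 : fcond 2 {2} (n - 3) p2 := fcond_of hp2 (by norm_num) (by norm_num) (by omega)
        (by intro x hx; rw [Multiset.mem_singleton] at hx; omega)
        (by simp only [Multiset.sum_singleton]; omega)
      have hcount1 := count_one_fmap hp1 (le_refl 2) (by simp) hc1
      have hcount2 := count_one_fmap hp2 (by norm_num)
        (by intro x hx; rw [Multiset.mem_singleton] at hx; omega) hc2
      rw [← heq] at hcount1
      have hm2 : 3 ≤ minp p2 := hp2 _ (minp_mem hc2.1)
      -- 2 is a part of the B-image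
      have h2mem : 2 ∈ (fmap 2 {2} (n - 3) p2).parts := by
        rw [fmap_parts hc2]
        exact Multiset.mem_add.2 (Or.inr (Multiset.mem_singleton_self 2))
      -- but in the A-image, that forces minp p1 = 2
      rw [heq, fmap_parts hc1] at h2mem
      rcases Multiset.mem_add.1 h2mem with h2m | h2m
      · rcases Multiset.mem_add.1 h2m with h2m | h2m
        · have hle : minp p1 ≤ 2 := minp_le (Multiset.mem_of_mem_erase h2m)
          have hge : 2 ≤ minp p1 := hc1.2.1
          omega
        · have := Multiset.eq_of_mem_replicate h2m
          omega
      · simp at h2m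
    calc qq 2 (n - 1) + qq 3 (n - 3)
        = (fmap 2 0 (n - 3) '' PS 2 (n - 1)).ncard
          + (fmap 2 {2} (n - 3) '' PS 3 (n - 3)).ncard := by
          rw [Set.ncard_image_of_injOn hinjA, Set.ncard_image_of_injOn hinjB]; rfl
      _ = ((fmap 2 0 (n - 3) '' PS 2 (n - 1)) ∪ (fmap 2 {2} (n - 3) '' PS 3 (n - 3))).ncard := by
          rw [Set.ncard_union_eq hdisj (Set.toFinite _) (Set.toFinite _)]
      _ ≤ qq 1 (n - 3) := by
          apply Set.ncard_le_ncard _ (Set.toFinite _)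
          rintro μ (⟨p, hp, rfl⟩ | ⟨p, hp, rfl⟩) <;> exact mem_PS1 _
  -- bound D into partitions of n-4
  have hD : qq 2 (n - 2) ≤ qq 1 (n - 4) := by
    have hinjD : Set.InjOn (fmap 2 0 (n - 4)) (PS 2 (n - 2)) :=
      fmap_injOn (by norm_num) le_rfl (by omega) (by simp)
        (by simp only [Multiset.sum_zero]; omega)
    calc qq 2 (n - 2) = (fmap 2 0 (n - 4) '' PS 2 (n - 2)).ncard := by
          rw [Set.ncard_image_of_injOn hinjD]; rfl
      _ ≤ qq 1 (n - 4) := by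
          apply Set.ncard_le_ncard _ (Set.toFinite _)
          rintro μ ⟨p, hp, rfl⟩
          exact mem_PS1 _
  -- strict bound C+E into partitions of n-5
  have hCE : qq 4 (n - 4) + qq 5 n < qq 1 (n - 5) := by
    have hx0pos : ∀ i ∈ (2 ::ₘ Multiset.replicate (n - 7) 1), 0 < i := by
      intro i hi
      rcases Multiset.mem_cons.1 hi with rfl | hi
      · norm_num
      · rw [Multiset.eq_of_mem_replicate hi]; norm_num
    have hx0sum : (2 ::ₘ Multiset.replicate (n - 7) 1).sum = n - 5 := by
      rw [Multiset.sum_cons, Multiset.sum_replicate]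
      simp only [smul_eq_mul, mul_one]
      omega
    set x0 : Nat.Partition (n - 5) :=
      ⟨2 ::ₘ Multiset.replicate (n - 7) 1, fun {i} hi => hx0pos i hi, hx0sum⟩ with hx0def
    have h2x0 : 2 ∈ x0.parts := by
      rw [hx0def]
      show (2 : ℕ) ∈ 2 ::ₘ Multiset.replicate (n - 7) 1
      exact Multiset.mem_cons_self _ _
    have hinjE : Set.InjOn (fmap 5 0 (n - 5)) (PS 5 n) :=
      fmap_injOn (by norm_num) le_rfl (by omega) (by simp)
        (by simp only [Multiset.sum_zero]; omega)
    have hx0E : x0 ∉ fmap 5 0 (n - 5) '' PS 5 n := by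
      rintro ⟨p, hp, heq⟩
      have hc : fcond 5 0 (n - 5) p := fcond_of hp (by norm_num) le_rfl (by omega)
        (by simp) (by simp only [Multiset.sum_zero]; omega)
      have h2mem : 2 ∈ (fmap 5 0 (n - 5) p).parts := by rw [heq]; exact h2x0
      rw [fmap_parts hc] at h2mem
      rcases Multiset.mem_add.1 h2mem with h2m | h2m
      · rcases Multiset.mem_add.1 h2m with h2m | h2m
        · have := hp _ (Multiset.mem_of_mem_erase h2m); omega
        · have := Multiset.eq_of_mem_replicate h2m; omega
      · simp at h2m
    have hlt : (PS 1 (n - 5) \ {x0}).ncard < qq 1 (n - 5) :=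
      Set.ncard_diff_singleton_lt_of_mem (mem_PS1 x0) (Set.toFinite _)
    by_cases h8 : 8 ≤ n
    · have hinjC : Set.InjOn (fmap 4 {3} (n - 5)) (PS 4 (n - 4)) :=
        fmap_injOn (by norm_num) le_rfl (by omega)
          (by intro x hx; rw [Multiset.mem_singleton] at hx; omega)
          (by simp only [Multiset.sum_singleton]; omega)
      have hx0C : x0 ∉ fmap 4 {3} (n - 5) '' PS 4 (n - 4) := by
        rintro ⟨p, hp, heq⟩
        have hc : fcond 4 {3} (n - 5) p := fcond_of hp (by norm_num) le_rfl (by omega)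
          (by intro x hx; rw [Multiset.mem_singleton] at hx; omega)
          (by simp only [Multiset.sum_singleton]; omega)
        have h2mem : 2 ∈ (fmap 4 {3} (n - 5) p).parts := by rw [heq]; exact h2x0
        rw [fmap_parts hc] at h2mem
        rcases Multiset.mem_add.1 h2mem with h2m | h2m
        · rcases Multiset.mem_add.1 h2m with h2m | h2m
          · have := hp _ (Multiset.mem_of_mem_erase h2m); omega
          · have := Multiset.eq_of_mem_replicate h2m; omega
        · rw [Multiset.mem_singleton] at h2m; omega
      have hdisjCE : Disjoint (fmap 4 {3} (n - 5) '' PS 4 (n - 4))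
          (fmap 5 0 (n - 5) '' PS 5 n) := by
        rw [Set.disjoint_left]
        rintro μ ⟨p1, hp1, rfl⟩ ⟨p2, hp2, heq⟩
        have hc1 : fcond 4 {3} (n - 5) p1 := fcond_of hp1 (by norm_num) le_rfl (by omega)
          (by intro x hx; rw [Multiset.mem_singleton] at hx; omega)
          (by simp only [Multiset.sum_singleton]; omega)
        have hc2 : fcond 5 0 (n - 5) p2 := fcond_of hp2 (by norm_num) le_rfl (by omega)
          (by simp) (by simp only [Multiset.sum_zero]; omega)
        have h3mem : 3 ∈ (fmap 4 {3} (n - 5) p1).parts := by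
          rw [fmap_parts hc1]
          exact Multiset.mem_add.2 (Or.inr (Multiset.mem_singleton_self 3))
        rw [← heq, fmap_parts hc2] at h3mem
        rcases Multiset.mem_add.1 h3mem with h3m | h3m
        · rcases Multiset.mem_add.1 h3m with h3m | h3m
          · have := hp2 _ (Multiset.mem_of_mem_erase h3m); omega
          · have := Multiset.eq_of_mem_replicate h3m; omega
        · simp at h3m
      calc qq 4 (n - 4) + qq 5 n
          = (fmap 4 {3} (n - 5) '' PS 4 (n - 4)).ncard
            + (fmap 5 0 (n - 5) '' PS 5 n).ncard := by
            rw [Set.ncard_image_of_injOn hinjC, Set.ncard_image_of_injOn hinjE]; rfl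
        _ = ((fmap 4 {3} (n - 5) '' PS 4 (n - 4)) ∪ (fmap 5 0 (n - 5) '' PS 5 n)).ncard := by
            rw [Set.ncard_union_eq hdisjCE (Set.toFinite _) (Set.toFinite _)]
        _ ≤ (PS 1 (n - 5) \ {x0}).ncard := by
            apply Set.ncard_le_ncard _ (Set.toFinite _)
            rintro μ (hμ | hμ)
            · obtain ⟨p, hp, rfl⟩ := hμ
              refine ⟨mem_PS1 _, ?_⟩
              intro hx
              rw [Set.mem_singleton_iff] at hx
              exact hx0C ⟨p, hp, hx⟩
            · obtain ⟨p, hp, rfl⟩ := hμ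
              refine ⟨mem_PS1 _, ?_⟩
              intro hx
              rw [Set.mem_singleton_iff] at hx
              exact hx0E ⟨p, hp, hx⟩
        _ < qq 1 (n - 5) := hlt
    · have hn7 : n = 7 := by omega
      have hq40 : qq 4 (n - 4) = 0 := by
        subst hn7
        exact qq_zero (by norm_num) (by norm_num)
      rw [hq40, zero_add]
      calc qq 5 n = (fmap 5 0 (n - 5) '' PS 5 n).ncard := by
            rw [Set.ncard_image_of_injOn hinjE]; rfl
        _ ≤ (PS 1 (n - 5) \ {x0}).ncard := by
            apply Set.ncard_le_ncard _ (Set.toFinite _)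
            rintro μ ⟨p, hp, rfl⟩
            refine ⟨mem_PS1 _, ?_⟩
            intro hx
            rw [Set.mem_singleton_iff] at hx
            exact hx0E ⟨p, hp, hx⟩
        _ < qq 1 (n - 5) := hlt
  omega
end

section
/- For every positive integer n, the number of partitions of n with no part equal to 2 in which the number of odd parts exceeds the number of even parts strictly exceeds the number of partitions of n with no part equal to 2 in which the number of even parts exceeds the number of odd parts; that is, p_o^{{2}}(n) > p_e^{{2}}(n) for all n ≥ 1. -/
/-- The number of partitions of `n` with no part equal to 2 having more odd
parts than even parts. -/
noncomputable def po2 (n : ℕ) : ℕ :=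
  Set.ncard {p : n.Partition | 2 ∉ p.parts ∧
    p.parts.countP (fun i => Odd i) > p.parts.countP (fun i => Even i)}

/-- The number of partitions of `n` with no part equal to 2 having more even
parts than odd parts. -/
noncomputable def pe2 (n : ℕ) : ℕ :=
  Set.ncard {p : n.Partition | 2 ∉ p.parts ∧
    p.parts.countP (fun i => Even i) > p.parts.countP (fun i => Odd i)}

open Multiset

namespace Pbias

def mE (s : Multiset ℕ) : Multiset ℕ := s.filter (fun x => Even x)
def mO3 (s : Multiset ℕ) : Multiset ℕ := s.filter (fun x => Odd x ∧ x ≠ 1)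

def phi (s : Multiset ℕ) : Multiset ℕ :=
  Multiset.replicate (s.count 1 + (mE s).card - (mO3 s).card) 1
    + (mO3 s).map (· + 1) + (mE s).map (· - 1)

lemma decomp (s : Multiset ℕ) :
    s = Multiset.replicate (s.count 1) 1 + mO3 s + mE s := by
  have h1 : s.filter (fun x => Odd x) + s.filter (fun x => ¬ Odd x) = s :=
    filter_add_not _ s
  have h2 : s.filter (fun x => ¬ Odd x) = mE s := by
    apply filter_congr; intro x _; simp [Nat.not_odd_iff_even]
  have h3 : s.filter (fun x => Odd x)
      = Multiset.replicate (s.count 1) 1 + mO3 s := by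
    have h4 : (s.filter (fun x => Odd x)).filter (fun x => x = 1)
        + (s.filter (fun x => Odd x)).filter (fun x => ¬ x = 1)
        = s.filter (fun x => Odd x) := filter_add_not _ _
    rw [filter_filter, filter_filter] at h4
    have h5 : s.filter (fun a => a = 1 ∧ Odd a) = s.filter (fun a => a = 1) := by
      apply filter_congr; intro x _; constructor
      · rintro ⟨h, _⟩; exact h
      · rintro rfl; exact ⟨rfl, by decide⟩
    have h6 : s.filter (fun a => ¬ a = 1 ∧ Odd a) = mO3 s := by
      unfold mO3; apply filter_congr; intro x _; tauto
    rw [h5, h6] at h4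
    rw [← h4]
    congr 1
    have := filter_eq' s 1
    simpa using this
  conv_lhs => rw [← h1]
  rw [h2, h3]

lemma countOdd (s : Multiset ℕ) :
    s.countP (fun i => Odd i) = s.count 1 + (mO3 s).card := by
  conv_lhs => rw [decomp s]
  rw [countP_add, countP_add]
  have r1 : (Multiset.replicate (s.count 1) 1).countP (fun i => Odd i)
      = s.count 1 := by
    rw [countP_eq_card.mpr, card_replicate]
    intro a ha; rw [eq_of_mem_replicate ha]; decide
  have r2 : (mO3 s).countP (fun i => Odd i) = (mO3 s).card := by
    rw [countP_eq_card.mpr]; intro a ha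
    exact ((mem_filter.mp ha).2).1
  have r3 : (mE s).countP (fun i => Odd i) = 0 := by
    rw [countP_eq_zero]; intro a ha
    have := (mem_filter.mp ha).2
    simp [Nat.odd_iff, Nat.even_iff] at this ⊢; omega
  rw [r1, r2, r3]; omega

lemma countEven (s : Multiset ℕ) :
    s.countP (fun i => Even i) = (mE s).card :=
  countP_eq_card_filter _ _

lemma sum_map_add_one (t : Multiset ℕ) : (t.map (· + 1)).sum = t.sum + t.card := by
  induction t using Multiset.induction with
  | empty => simp
  | cons a t ih => simp [ih]; omega

lemma sum_map_sub_one (t : Multiset ℕ) (h : ∀ x ∈ t, 1 ≤ x) :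
    (t.map (· - 1)).sum + t.card = t.sum := by
  induction t using Multiset.induction with
  | empty => simp
  | cons a t ih =>
    have ha : 1 ≤ a := h a (mem_cons_self a t)
    have ih' := ih (fun x hx => h x (mem_cons_of_mem hx))
    simp only [map_cons, sum_cons, card_cons]
    omega

lemma mE_pos {s : Multiset ℕ} (hpos : ∀ x ∈ s, 0 < x) :
    ∀ x ∈ mE s, 2 ≤ x := by
  intro x hx
  have h1 := hpos x (mem_of_mem_filter hx)
  have h2 : Even x := (mem_filter.mp hx).2
  obtain ⟨k, rfl⟩ := h2; omega

lemma phi_sum {s : Multiset ℕ} (hpos : ∀ x ∈ s, 0 < x)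
    (hbias : s.countP (fun i => Even i) > s.countP (fun i => Odd i)) :
    (phi s).sum = s.sum := by
  have hco := countOdd s
  have hce := countEven s
  have h1 : s.sum = s.count 1 + (mO3 s).sum + (mE s).sum := by
    conv_lhs => rw [decomp s]
    simp [sum_replicate]
  have h2 := sum_map_add_one (mO3 s)
  have h3 := sum_map_sub_one (mE s) (fun x hx => mE_pos hpos x hx |>.trans' (by norm_num))
  unfold phi
  rw [sum_add, sum_add, sum_replicate, smul_eq_mul, mul_one, h2, h1]
  omega

lemma phi_pos {s : Multiset ℕ} (hpos : ∀ x ∈ s, 0 < x) :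
    ∀ x ∈ phi s, 0 < x := by
  intro x hx
  unfold phi at hx
  rcases mem_add.mp hx with hx | hx
  · rcases mem_add.mp hx with hx | hx
    · rw [eq_of_mem_replicate hx]; norm_num
    · obtain ⟨a, ha, rfl⟩ := mem_map.mp hx; omega
  · obtain ⟨a, ha, rfl⟩ := mem_map.mp hx
    have := mE_pos hpos a ha; omega

lemma phi_no_two {s : Multiset ℕ} : 2 ∉ phi s := by
  intro hx
  unfold phi at hx
  rcases mem_add.mp hx with hx | hx
  · rcases mem_add.mp hx with hx | hx
    · have := eq_of_mem_replicate hx; omega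
    · obtain ⟨a, ha, h⟩ := mem_map.mp hx
      have h2 := (mem_filter.mp ha).2
      omega
  · obtain ⟨a, ha, h⟩ := mem_map.mp hx
    have h2 : Even a := (mem_filter.mp ha).2
    obtain ⟨k, rfl⟩ := h2; omega

lemma phi_countOdd {s : Multiset ℕ} (hpos : ∀ x ∈ s, 0 < x) :
    (phi s).countP (fun i => Odd i)
      = (s.count 1 + (mE s).card - (mO3 s).card) + (mE s).card := by
  unfold phi
  rw [countP_add, countP_add]
  have r1 : (Multiset.replicate (s.count 1 + (mE s).card - (mO3 s).card) 1).countP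
      (fun i => Odd i) = s.count 1 + (mE s).card - (mO3 s).card := by
    rw [countP_eq_card.mpr, card_replicate]
    intro a ha; rw [eq_of_mem_replicate ha]; decide
  have r2 : ((mO3 s).map (· + 1)).countP (fun i => Odd i) = 0 := by
    rw [countP_eq_zero]
    intro a ha
    obtain ⟨b, hb, rfl⟩ := mem_map.mp ha
    have hodd : Odd b := ((mem_filter.mp hb).2).1
    rw [Nat.odd_iff] at hodd ⊢; omega
  have r3 : ((mE s).map (· - 1)).countP (fun i => Odd i)
      = (mE s).card := by
    rw [countP_eq_card.mpr, card_map]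
    intro a ha
    obtain ⟨b, hb, rfl⟩ := mem_map.mp ha
    have heven : Even b := (mem_filter.mp hb).2
    have h2 := mE_pos hpos b hb
    obtain ⟨k, rfl⟩ := heven
    rw [Nat.odd_iff]; omega
  rw [r1, r2, r3]; omega

lemma phi_countEven {s : Multiset ℕ} (hpos : ∀ x ∈ s, 0 < x) :
    (phi s).countP (fun i => Even i) = (mO3 s).card := by
  unfold phi
  rw [countP_add, countP_add]
  have r1 : (Multiset.replicate (s.count 1 + (mE s).card - (mO3 s).card) 1).countP
      (fun i => Even i) = 0 := by
    rw [countP_eq_zero]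
    intro a ha; rw [eq_of_mem_replicate ha]; decide
  have r2 : ((mO3 s).map (· + 1)).countP (fun i => Even i) = (mO3 s).card := by
    rw [countP_eq_card.mpr, card_map]
    intro a ha
    obtain ⟨b, hb, rfl⟩ := mem_map.mp ha
    have hodd : Odd b := ((mem_filter.mp hb).2).1
    rw [Nat.odd_iff] at hodd; rw [Nat.even_iff]; omega
  have r3 : ((mE s).map (· - 1)).countP (fun i => Even i) = 0 := by
    rw [countP_eq_zero]
    intro a ha
    obtain ⟨b, hb, rfl⟩ := mem_map.mp ha
    have heven : Even b := (mem_filter.mp hb).2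
    have h2 := mE_pos hpos b hb
    obtain ⟨k, rfl⟩ := heven
    rw [Nat.even_iff]; omega
  rw [r1, r2, r3]; omega

lemma filter_even_phi {s : Multiset ℕ} (hpos : ∀ x ∈ s, 0 < x) :
    (phi s).filter (fun x => Even x) = (mO3 s).map (· + 1) := by
  unfold phi
  rw [filter_add, filter_add]
  have r1 : (Multiset.replicate (s.count 1 + (mE s).card - (mO3 s).card) 1).filter
      (fun x => Even x) = 0 := by
    rw [filter_eq_nil]
    intro a ha; rw [eq_of_mem_replicate ha]; decide
  have r2 : ((mO3 s).map (· + 1)).filter (fun x => Even x) = (mO3 s).map (· + 1) := by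
    rw [filter_eq_self]
    intro a ha
    obtain ⟨b, hb, rfl⟩ := mem_map.mp ha
    have hodd : Odd b := ((mem_filter.mp hb).2).1
    rw [Nat.odd_iff] at hodd; rw [Nat.even_iff]; omega
  have r3 : ((mE s).map (· - 1)).filter (fun x => Even x) = 0 := by
    rw [filter_eq_nil]
    intro a ha
    obtain ⟨b, hb, rfl⟩ := mem_map.mp ha
    have heven : Even b := (mem_filter.mp hb).2
    have h2 := mE_pos hpos b hb
    rw [Nat.even_iff] at heven ⊢; omega
  rw [r1, r2, r3]; simp

lemma filter_odd_ne_one_phi {s : Multiset ℕ} (hpos : ∀ x ∈ s, 0 < x)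
    (h2 : 2 ∉ s) :
    (phi s).filter (fun x => Odd x ∧ x ≠ 1) = (mE s).map (· - 1) := by
  unfold phi
  rw [filter_add, filter_add]
  have r1 : (Multiset.replicate (s.count 1 + (mE s).card - (mO3 s).card) 1).filter
      (fun x => Odd x ∧ x ≠ 1) = 0 := by
    rw [filter_eq_nil]
    intro a ha; rw [eq_of_mem_replicate ha]; decide
  have r2 : ((mO3 s).map (· + 1)).filter (fun x => Odd x ∧ x ≠ 1) = 0 := by
    rw [filter_eq_nil]
    intro a ha
    obtain ⟨b, hb, rfl⟩ := mem_map.mp ha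
    have hodd : Odd b := ((mem_filter.mp hb).2).1
    rw [Nat.odd_iff] at hodd
    rintro ⟨h, -⟩
    rw [Nat.odd_iff] at h; omega
  have r3 : ((mE s).map (· - 1)).filter (fun x => Odd x ∧ x ≠ 1)
      = (mE s).map (· - 1) := by
    rw [filter_eq_self]
    intro a ha
    obtain ⟨b, hb, rfl⟩ := mem_map.mp ha
    have heven : Even b := (mem_filter.mp hb).2
    have hp := mE_pos hpos b hb
    have hb2 : b ≠ 2 := fun h => h2 (h ▸ mem_of_mem_filter hb)
    rw [Nat.even_iff] at heven
    constructor
    · rw [Nat.odd_iff]; omega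
    · omega
  rw [r1, r2, r3]; simp

lemma count_one_phi {s : Multiset ℕ} (h2 : 2 ∉ s) :
    (phi s).count 1 = s.count 1 + (mE s).card - (mO3 s).card := by
  unfold phi
  rw [count_add, count_add, count_replicate]
  have r2 : ((mO3 s).map (· + 1)).count 1 = 0 := by
    rw [count_eq_zero]
    intro ha
    obtain ⟨b, hb, hb1⟩ := mem_map.mp ha
    have hodd : Odd b := ((mem_filter.mp hb).2).1
    rw [Nat.odd_iff] at hodd; omega
  have r3 : ((mE s).map (· - 1)).count 1 = 0 := by
    rw [count_eq_zero]
    intro ha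
    obtain ⟨b, hb, hb1⟩ := mem_map.mp ha
    have heven : Even b := (mem_filter.mp hb).2
    have hb2 : b ≠ 2 := fun h => h2 (h ▸ mem_of_mem_filter hb)
    rw [Nat.even_iff] at heven; omega
  rw [r2, r3]; simp

lemma map_add_one_inj : Function.Injective (fun x : ℕ => x + 1) := by
  intro a b h; simpa using h

lemma map_sub_add (t : Multiset ℕ) (h : ∀ x ∈ t, 1 ≤ x) :
    (t.map (· - 1)).map (· + 1) = t := by
  rw [map_map]
  have : t.map ((· + 1) ∘ (· - 1)) = t.map (fun x => x) := by
    apply map_congr rfl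
    intro x hx
    have := h x hx
    simp only [Function.comp_apply]; omega
  rw [this, map_id']

lemma phi_inj {s t : Multiset ℕ}
    (hposs : ∀ x ∈ s, 0 < x) (h2s : 2 ∉ s)
    (hbs : s.countP (fun i => Even i) > s.countP (fun i => Odd i))
    (hpost : ∀ x ∈ t, 0 < x) (h2t : 2 ∉ t)
    (hbt : t.countP (fun i => Even i) > t.countP (fun i => Odd i))
    (heq : phi s = phi t) : s = t := by
  have hO3 : mO3 s = mO3 t := by
    have h := congrArg (fun u => u.filter (fun x => Even x)) heq
    simp only [filter_even_phi hposs, filter_even_phi hpost] at h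
    exact Multiset.map_injective map_add_one_inj h
  have hE : mE s = mE t := by
    have h := congrArg (fun u => u.filter (fun x => Odd x ∧ x ≠ 1)) heq
    simp only [filter_odd_ne_one_phi hposs h2s, filter_odd_ne_one_phi hpost h2t] at h
    have h' := congrArg (fun u => u.map (· + 1)) h
    rw [map_sub_add _ (fun x hx => (mE_pos hposs x hx).trans' (by norm_num)),
        map_sub_add _ (fun x hx => (mE_pos hpost x hx).trans' (by norm_num))] at h'
    exact h'
  have hc : s.count 1 = t.count 1 := by
    have h := congrArg (fun u => u.count 1) heq
    simp only [count_one_phi h2s, count_one_phi h2t] at h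
    have hes := countEven s; have hos := countOdd s
    have het := countEven t; have hot := countOdd t
    have hcE : (mE s).card = (mE t).card := by rw [hE]
    have hcO : (mO3 s).card = (mO3 t).card := by rw [hO3]
    omega
  conv_lhs => rw [decomp s]
  conv_rhs => rw [decomp t]
  rw [hO3, hE, hc]

end Pbias


theorem stmt_13 : ∀ n : ℕ, 1 ≤ n → po2 n > pe2 n := by
  intro n hn
  classical
  unfold po2 pe2
  set B : Set n.Partition := {p : n.Partition | 2 ∉ p.parts ∧
    p.parts.countP (fun i => Odd i) > p.parts.countP (fun i => Even i)} with hBdef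
  set A : Set n.Partition := {p : n.Partition | 2 ∉ p.parts ∧
    p.parts.countP (fun i => Even i) > p.parts.countP (fun i => Odd i)} with hAdef
  have ones_pos : ∀ {i : ℕ}, i ∈ Multiset.replicate n 1 → 0 < i := by
    intro i hi; rw [Multiset.eq_of_mem_replicate hi]; norm_num
  set ones : n.Partition := ⟨Multiset.replicate n 1, ones_pos, by simp⟩ with honesdef
  have hones : ones ∈ B := by
    constructor
    · intro h
      have := Multiset.eq_of_mem_replicate h
      omega
    · have h1 : (Multiset.replicate n 1).countP (fun i => Odd i) = n := by
        rw [Multiset.countP_eq_card.mpr, Multiset.card_replicate]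
        intro a ha; rw [Multiset.eq_of_mem_replicate ha]; decide
      have h2 : (Multiset.replicate n 1).countP (fun i => Even i) = 0 := by
        rw [Multiset.countP_eq_zero]
        intro a ha; rw [Multiset.eq_of_mem_replicate ha]; decide
      show (Multiset.replicate n 1).countP (fun i => Odd i)
          > (Multiset.replicate n 1).countP (fun i => Even i)
      omega
  set F : n.Partition → n.Partition := fun p =>
    if h : 2 ∉ p.parts ∧
        p.parts.countP (fun i => Even i) > p.parts.countP (fun i => Odd i) then
      ⟨Pbias.phi p.parts,
        fun hi => Pbias.phi_pos (fun x hx => p.parts_pos hx) _ hi,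
        by rw [Pbias.phi_sum (fun x hx => p.parts_pos hx) h.2, p.parts_sum]⟩
    else p with hFdef
  have hFparts : ∀ p : n.Partition, p ∈ A → (F p).parts = Pbias.phi p.parts := by
    intro p hp
    have hp' : 2 ∉ p.parts ∧
        p.parts.countP (fun i => Even i) > p.parts.countP (fun i => Odd i) := hp
    simp only [hFdef]
    rw [dif_pos hp']
  have hmaps : ∀ p ∈ A, F p ∈ B \ {ones} := by
    intro p hp
    obtain ⟨hp2, hpb⟩ := hp
    have hpos : ∀ x ∈ p.parts, 0 < x := fun x hx => p.parts_pos hx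
    have hparts := hFparts p ⟨hp2, hpb⟩
    have hes := Pbias.countEven p.parts
    have hos := Pbias.countOdd p.parts
    constructor
    · constructor
      · rw [hparts]; exact Pbias.phi_no_two
      · show (F p).parts.countP (fun i => Odd i) > (F p).parts.countP (fun i => Even i)
        rw [hparts, Pbias.phi_countOdd hpos, Pbias.phi_countEven hpos]
        omega
    · intro hcon
      have hcon' : (F p).parts = Multiset.replicate n 1 := by
        rw [Set.mem_singleton_iff] at hcon
        rw [hcon]
      rw [hparts] at hcon'
      have h := congrArg (Multiset.filter (fun x => Odd x ∧ x ≠ 1)) hcon'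
      rw [Pbias.filter_odd_ne_one_phi hpos hp2] at h
      have hnil : (Multiset.replicate n 1).filter (fun x => Odd x ∧ x ≠ 1) = 0 := by
        rw [Multiset.filter_eq_nil]
        intro a ha; rw [Multiset.eq_of_mem_replicate ha]; decide
      rw [hnil] at h
      have hcard := congrArg Multiset.card h
      rw [Multiset.card_map] at hcard
      simp only [Multiset.card_zero] at hcard
      omega
  have hinj : Set.InjOn F A := by
    intro p hp q hq h
    have h' : Pbias.phi p.parts = Pbias.phi q.parts := by
      rw [← hFparts p hp, ← hFparts q hq, h]
    ext1
    exact Pbias.phi_inj (fun x hx => p.parts_pos hx) hp.1 hp.2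
      (fun x hx => q.parts_pos hx) hq.1 hq.2 h'
  have h1 : A.ncard ≤ (B \ {ones}).ncard :=
    Set.ncard_le_ncard_of_injOn F hmaps hinj (Set.toFinite _)
  have h2 : (B \ {ones}).ncard < B.ncard :=
    Set.ncard_diff_singleton_lt_of_mem hones (Set.toFinite _)
  omega
end

section
/- For every positive integer n with n ≠ 2, the number of partitions of n with more odd parts than even parts strictly exceeds the number of partitions of n with more even parts than odd parts; that is, p_o(n) > p_e(n) for all positive n ≠ 2. -/
/-- The number of partitions of `n` with more odd parts than even parts. -/
noncomputable def po (n : ℕ) : ℕ :=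
  Set.ncard {p : n.Partition |
    p.parts.countP (fun i => Odd i) > p.parts.countP (fun i => Even i)}

/-- The number of partitions of `n` with more even parts than odd parts. -/
noncomputable def pe (n : ℕ) : ℕ :=
  Set.ncard {p : n.Partition |
    p.parts.countP (fun i => Even i) > p.parts.countP (fun i => Odd i)}

namespace ParityBiasAux

open Multiset

lemma sum_map_pred (s : Multiset ℕ) (h : ∀ x ∈ s, 1 ≤ x) :
    (s.map (fun x => x - 1)).sum + Multiset.card s = s.sum := by
  induction s using Multiset.induction with
  | empty => simp
  | cons a s ih =>
    simp only [Multiset.map_cons, Multiset.sum_cons, Multiset.card_cons]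
    have ha : 1 ≤ a := h a (Multiset.mem_cons_self a s)
    have := ih (fun x hx => h x (Multiset.mem_cons_of_mem hx))
    omega

lemma sum_map_succ (s : Multiset ℕ) :
    (s.map (fun x => x + 1)).sum = s.sum + Multiset.card s := by
  induction s using Multiset.induction with
  | empty => simp
  | cons a s ih =>
    simp only [Multiset.map_cons, Multiset.sum_cons, Multiset.card_cons, ih]
    omega

variable {n : ℕ}

/-- even parts -/
def Ev (p : n.Partition) : Multiset ℕ := p.parts.filter (fun i => Even i)
/-- odd parts -/
def Od (p : n.Partition) : Multiset ℕ := p.parts.filter (fun i => Odd i)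

lemma parts_eq (p : n.Partition) : Ev p + Od p = p.parts := by
  have h : Od p = p.parts.filter (fun i => ¬ Even i) :=
    Multiset.filter_congr (fun x _ => Nat.not_even_iff_odd.symm)
  rw [Ev, h, Multiset.filter_add_not]

lemma card_Ev_add_card_Od (p : n.Partition) :
    Multiset.card (Ev p) + Multiset.card (Od p) = Multiset.card p.parts := by
  rw [← parts_eq p, Multiset.card_add]

lemma sum_Ev_add_sum_Od (p : n.Partition) : (Ev p).sum + (Od p).sum = n := by
  rw [← Multiset.sum_add, parts_eq p, p.parts_sum]

lemma countP_even (p : n.Partition) :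
    p.parts.countP (fun i => Even i) = Multiset.card (Ev p) :=
  Multiset.countP_eq_card_filter _ _

lemma countP_odd (p : n.Partition) :
    p.parts.countP (fun i => Odd i) = Multiset.card (Od p) :=
  Multiset.countP_eq_card_filter _ _

lemma mem_Ev_two_le (p : n.Partition) {x : ℕ} (hx : x ∈ Ev p) : 2 ≤ x := by
  rw [Ev, Multiset.mem_filter] at hx
  have h1 := p.parts_pos hx.1
  have h2 := Nat.even_iff.mp hx.2
  omega

lemma mem_Od_odd (p : n.Partition) {x : ℕ} (hx : x ∈ Od p) : x % 2 = 1 := by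
  rw [Od, Multiset.mem_filter] at hx
  exact Nat.odd_iff.mp hx.2

/-- the parts of the image partition -/
def phiParts (p : n.Partition) : Multiset ℕ :=
  (Ev p).map (fun x => x - 1) + (Od p).map (fun x => x + 1)
    + Multiset.replicate (Multiset.card (Ev p) - Multiset.card (Od p)) 1

lemma phiParts_pos (p : n.Partition) : ∀ {i : ℕ}, i ∈ phiParts p → 0 < i := by
  intro i hi
  rw [phiParts, Multiset.mem_add, Multiset.mem_add] at hi
  rcases hi with (hi | hi) | hi
  · obtain ⟨x, hx, rfl⟩ := Multiset.mem_map.mp hi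
    have := mem_Ev_two_le p hx
    omega
  · obtain ⟨x, hx, rfl⟩ := Multiset.mem_map.mp hi
    omega
  · rw [Multiset.eq_of_mem_replicate hi]
    omega

lemma phiParts_sum (p : n.Partition)
    (h : Multiset.card (Od p) < Multiset.card (Ev p)) : (phiParts p).sum = n := by
  have h1 := sum_map_pred (Ev p) (fun x hx => by have := mem_Ev_two_le p hx; omega)
  have h2 := sum_map_succ (Od p)
  have h3 := sum_Ev_add_sum_Od p
  rw [phiParts, Multiset.sum_add, Multiset.sum_add, Multiset.sum_replicate, smul_eq_mul,
    mul_one, h2]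
  omega

lemma filter_even_phiParts (p : n.Partition) :
    (phiParts p).filter (fun i => Even i) = (Od p).map (fun x => x + 1) := by
  rw [phiParts, Multiset.filter_add, Multiset.filter_add]
  have h1 : ((Ev p).map (fun x => x - 1)).filter (fun i => Even i) = 0 := by
    rw [Multiset.filter_eq_nil]
    intro a ha
    obtain ⟨x, hx, rfl⟩ := Multiset.mem_map.mp ha
    have := mem_Ev_two_le p hx
    have hev : x % 2 = 0 := Nat.even_iff.mp ((Multiset.mem_filter.mp hx).2)
    rw [Nat.even_iff]
    omega
  have h2 : ((Od p).map (fun x => x + 1)).filter (fun i => Even i)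
      = (Od p).map (fun x => x + 1) := by
    rw [Multiset.filter_eq_self]
    intro a ha
    obtain ⟨x, hx, rfl⟩ := Multiset.mem_map.mp ha
    have := mem_Od_odd p hx
    rw [Nat.even_iff]
    omega
  have h3 : (Multiset.replicate (Multiset.card (Ev p) - Multiset.card (Od p)) 1).filter
      (fun i => Even i) = 0 := by
    rw [Multiset.filter_eq_nil]
    intro a ha
    rw [Multiset.eq_of_mem_replicate ha, Nat.even_iff]
    omega
  rw [h1, h2, h3, zero_add, add_zero]

lemma filter_odd_phiParts (p : n.Partition) :
    (phiParts p).filter (fun i => Odd i) = (Ev p).map (fun x => x - 1)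
      + Multiset.replicate (Multiset.card (Ev p) - Multiset.card (Od p)) 1 := by
  rw [phiParts, Multiset.filter_add, Multiset.filter_add]
  have h1 : ((Ev p).map (fun x => x - 1)).filter (fun i => Odd i)
      = (Ev p).map (fun x => x - 1) := by
    rw [Multiset.filter_eq_self]
    intro a ha
    obtain ⟨x, hx, rfl⟩ := Multiset.mem_map.mp ha
    have := mem_Ev_two_le p hx
    have hev : x % 2 = 0 := Nat.even_iff.mp ((Multiset.mem_filter.mp hx).2)
    rw [Nat.odd_iff]
    omega
  have h2 : ((Od p).map (fun x => x + 1)).filter (fun i => Odd i) = 0 := by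
    rw [Multiset.filter_eq_nil]
    intro a ha
    obtain ⟨x, hx, rfl⟩ := Multiset.mem_map.mp ha
    have := mem_Od_odd p hx
    rw [Nat.odd_iff]
    omega
  have h3 : (Multiset.replicate (Multiset.card (Ev p) - Multiset.card (Od p)) 1).filter
      (fun i => Odd i)
      = Multiset.replicate (Multiset.card (Ev p) - Multiset.card (Od p)) 1 := by
    rw [Multiset.filter_eq_self]
    intro a ha
    rw [Multiset.eq_of_mem_replicate ha]
    exact odd_one
  rw [h1, h2, h3, add_zero]

/-- the injection -/
noncomputable def phi (p : n.Partition) : n.Partition :=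
  if h : p.parts.countP (fun i => Even i) > p.parts.countP (fun i => Odd i) then
    { parts := phiParts p
      parts_pos := phiParts_pos p
      parts_sum := phiParts_sum p (by rwa [countP_even, countP_odd] at h) }
  else p

lemma phi_parts (p : n.Partition)
    (h : p.parts.countP (fun i => Even i) > p.parts.countP (fun i => Odd i)) :
    (phi p).parts = phiParts p := by
  rw [phi, dif_pos h]

lemma phi_countP_even (p : n.Partition)
    (h : p.parts.countP (fun i => Even i) > p.parts.countP (fun i => Odd i)) :
    (phi p).parts.countP (fun i => Even i) = Multiset.card (Od p) := by
  rw [Multiset.countP_eq_card_filter, phi_parts p h, filter_even_phiParts, Multiset.card_map]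

lemma phi_countP_odd (p : n.Partition)
    (h : p.parts.countP (fun i => Even i) > p.parts.countP (fun i => Odd i)) :
    (phi p).parts.countP (fun i => Odd i)
      = Multiset.card (Ev p) + (Multiset.card (Ev p) - Multiset.card (Od p)) := by
  rw [Multiset.countP_eq_card_filter, phi_parts p h, filter_odd_phiParts,
    Multiset.card_add, Multiset.card_map, Multiset.card_replicate]

end ParityBiasAux

open ParityBiasAux Multiset in
theorem stmt_15 : ∀ n : ℕ, 0 < n → n ≠ 2 → po n > pe n := by
  intro n hn hn2
  classical
  set Es : Set n.Partition := {p : n.Partition |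
    p.parts.countP (fun i => Even i) > p.parts.countP (fun i => Odd i)} with hEs
  set Os : Set n.Partition := {p : n.Partition |
    p.parts.countP (fun i => Odd i) > p.parts.countP (fun i => Even i)} with hOs
  -- the witness partition
  obtain ⟨w, hwO, hwW⟩ : ∃ w : n.Partition, w ∈ Os ∧
      w.parts.countP (fun i => Odd i) = w.parts.countP (fun i => Even i) + 1 := by
    rcases Nat.even_or_odd n with he | ho
    · -- n even, n ≥ 4 : witness {n-2, 1, 1}
      have h4 : 4 ≤ n := by
        have := Nat.even_iff.mp he; omega
      refine ⟨⟨(n - 2) ::ₘ 1 ::ₘ {1}, ?_, ?_⟩, ?_, ?_⟩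
      · intro i hi
        simp only [Multiset.mem_cons, Multiset.mem_singleton] at hi
        rcases hi with rfl | rfl | rfl <;> omega
      · simp only [Multiset.sum_cons, Multiset.sum_singleton]
        omega
      · show Multiset.countP _ ((n-2) ::ₘ 1 ::ₘ 1 ::ₘ 0) > Multiset.countP _ ((n-2) ::ₘ 1 ::ₘ 1 ::ₘ 0)
        simp only [Multiset.countP_cons, Multiset.countP_zero]
        have h2 : Even (n - 2) := by
          rw [Nat.even_iff] at he ⊢; omega
        have h2' : ¬ Odd (n - 2) := by rw [Nat.odd_iff, Nat.even_iff] at *; omega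
        simp only [Nat.odd_iff, Nat.even_iff] at h2 h2' ⊢
        simp [h2]
      · show Multiset.countP _ ((n-2) ::ₘ 1 ::ₘ 1 ::ₘ 0) = Multiset.countP _ ((n-2) ::ₘ 1 ::ₘ 1 ::ₘ 0) + 1
        simp only [Multiset.countP_cons, Multiset.countP_zero]
        have h2 : Even (n - 2) := by rw [Nat.even_iff] at he ⊢; omega
        have h2' : ¬ Odd (n - 2) := by rw [Nat.odd_iff, Nat.even_iff] at *; omega
        simp only [Nat.odd_iff, Nat.even_iff] at h2 h2' ⊢
        simp [h2]
    · -- n odd : witness {n}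
      refine ⟨⟨{n}, ?_, ?_⟩, ?_, ?_⟩
      · intro i hi
        rw [Multiset.mem_singleton] at hi
        omega
      · simp
      · have h' : ¬ Even n := Nat.not_even_iff_odd.mpr ho
        show Multiset.countP _ {n} > Multiset.countP _ {n}
        rw [show ({n} : Multiset ℕ) = n ::ₘ 0 from rfl, Multiset.countP_cons,
          Multiset.countP_cons]
        simp [ho, h']
      · have h' : ¬ Even n := Nat.not_even_iff_odd.mpr ho
        show Multiset.countP _ {n} = Multiset.countP _ {n} + 1
        rw [show ({n} : Multiset ℕ) = n ::ₘ 0 from rfl, Multiset.countP_cons,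
          Multiset.countP_cons]
        simp [ho, h']
  have hmaps : ∀ p ∈ Es, phi p ∈ Os \ {w} := by
    intro p hp
    have hp' : p.parts.countP (fun i => Even i) > p.parts.countP (fun i => Odd i) := hp
    have hco := phi_countP_odd p hp'
    have hce := phi_countP_even p hp'
    have hcard : Multiset.card (Od p) < Multiset.card (Ev p) := by
      rwa [countP_even, countP_odd] at hp'
    constructor
    · show (phi p).parts.countP (fun i => Odd i) > (phi p).parts.countP (fun i => Even i)
      omega
    · intro hew
      rw [Set.mem_singleton_iff] at hew
      rw [hew] at hco hce
      omega
  have hinj : Set.InjOn phi Es := by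
    intro p hp q hq hpq
    have hp' : p.parts.countP (fun i => Even i) > p.parts.countP (fun i => Odd i) := hp
    have hq' : q.parts.countP (fun i => Even i) > q.parts.countP (fun i => Odd i) := hq
    have hcp : Multiset.card (Od p) < Multiset.card (Ev p) := by
      rwa [countP_even, countP_odd] at hp'
    have hcq : Multiset.card (Od q) < Multiset.card (Ev q) := by
      rwa [countP_even, countP_odd] at hq'
    have hparts : phiParts p = phiParts q := by
      rw [← phi_parts p hp', ← phi_parts q hq', hpq]
    -- recover odd parts
    have hOd : Od p = Od q := by
      have h1 : (Od p).map (fun x => x + 1) = (Od q).map (fun x => x + 1) := by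
        rw [← filter_even_phiParts, ← filter_even_phiParts, hparts]
      exact Multiset.map_injective (fun a b hab => by omega) h1
    have hcOd : Multiset.card (Od p) = Multiset.card (Od q) := by rw [hOd]
    -- recover card of even parts
    have hcEv : Multiset.card (Ev p) = Multiset.card (Ev q) := by
      have h1 : Multiset.card (phiParts p) = Multiset.card (phiParts q) := by rw [hparts]
      rw [phiParts, phiParts] at h1
      simp only [Multiset.card_add, Multiset.card_map, Multiset.card_replicate] at h1
      omega
    -- recover even parts
    have hEv : Ev p = Ev q := by
      have h1 : (Ev p).map (fun x => x - 1) = (Ev q).map (fun x => x - 1) := by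
        have h2 : (Ev p).map (fun x => x - 1)
              + Multiset.replicate (Multiset.card (Ev p) - Multiset.card (Od p)) 1
            = (Ev q).map (fun x => x - 1)
              + Multiset.replicate (Multiset.card (Ev q) - Multiset.card (Od q)) 1 := by
          rw [← filter_odd_phiParts, ← filter_odd_phiParts, hparts]
        rw [hcEv, hcOd] at h2
        exact add_right_cancel h2
      have h3 : ((Ev p).map (fun x => x - 1)).map (fun x => x + 1)
          = ((Ev q).map (fun x => x - 1)).map (fun x => x + 1) := by rw [h1]
      rw [Multiset.map_map, Multiset.map_map] at h3
      have hid : ∀ (r : n.Partition), ((Ev r).map ((fun x => x + 1) ∘ (fun x => x - 1))) = Ev r := by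
        intro r
        have := Multiset.map_congr (f := (fun x => x + 1) ∘ (fun x => x - 1))
          (g := fun x => x) (rfl : Ev r = Ev r)
          (fun x hx => by have := mem_Ev_two_le r hx; simp only [Function.comp]; omega)
        rw [this, Multiset.map_id']
      rwa [hid p, hid q] at h3
    apply Nat.Partition.ext
    rw [← parts_eq p, ← parts_eq q, hOd, hEv]
  -- counting
  have himg : phi '' Es ⊆ Os \ {w} := by
    rintro _ ⟨p, hp, rfl⟩
    exact hmaps p hp
  calc pe n = Es.ncard := rfl
    _ = (phi '' Es).ncard := (Set.ncard_image_of_injOn hinj).symm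
    _ ≤ (Os \ {w}).ncard := Set.ncard_le_ncard himg (Set.toFinite _)
    _ < Os.ncard := Set.ncard_diff_singleton_lt_of_mem hwO (Set.toFinite _)
    _ = po n := rfl
end
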